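/- arXiv:1508.02940 — 6 statements merged into one kernel-verified Lean document; each statement's English description precedes it below -/
import Mathlib

section
/- Let A ∈ ℤ^{m×n} admit an affine TU decomposition A = Ã + UW, where W ∈ {0,±1}^{k×n}, U ∈ ℤ^{m×k}, and the stacked (m+k)×n matrix [Ã; W] is totally unimodular. Then for every b ∈ ℤ^m, every ℓ ∈ ℤ^n and u ∈ ℤ^n with ℓ ≤ u, the set conv({x ∈ ℝ^n : ℓ ≤ x ≤ u, Ax ≤ b, Wx ∈ ℤ^k}) is an integral polytope, i.e., it equals the convex hull of its integer points. In particular P = {x ∈ ℝ^n : ℓ ≤ x ≤ u, Ax ≤ b} satisfies conv(P ∩ ℤ^n) = conv({x ∈ P : Wx ∈ ℤ^k}). -/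
open Matrix Set


lemma castVec_mulVec {ι : Type*} [Fintype ι] {n : ℕ} (M : Matrix ι (Fin n) ℤ) (z : Fin n → ℤ) :
    (M.map (Int.cast : ℤ → ℝ)).mulVec (fun j => (z j : ℝ)) = fun i => ((M.mulVec z i : ℤ) : ℝ) := by
  funext i
  simp only [Matrix.mulVec, dotProduct, Matrix.map_apply]
  push_cast
  rfl

lemma tu_of_signed_rows {ι κ n : Type*} {A : Matrix ι n ℤ}
    (hA : A.IsTotallyUnimodular) {B : Matrix κ n ℤ}
    (h : ∀ i, ∃ i', B i = A i' ∨ B i = -(A i')) : B.IsTotallyUnimodular := by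
  classical
  rw [Matrix.isTotallyUnimodular_iff] at hA ⊢
  intro k f g
  choose i' hi' using h
  set ε : Fin k → ℤ := fun j => if B (f j) = A (i' (f j)) then 1 else -1 with hε
  have hBsub : B.submatrix f g = Matrix.of fun a b => ε a * (A.submatrix (fun j => i' (f j)) g) a b := by
    ext a b
    simp only [Matrix.submatrix_apply, Matrix.of_apply, hε]
    rcases hi' (f a) with hc | hc
    · simp [if_pos hc, hc]
    · by_cases hc2 : B (f a) = A (i' (f a))
      · simp [if_pos hc2, hc2]
      · simp only [if_neg hc2]
        rw [hc]
        simp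
  rw [hBsub, Matrix.det_mul_column]
  obtain ⟨s, hs⟩ := hA k (fun j => i' (f j)) g
  have hunit : IsUnit (∏ a, ε a) := by
    refine IsUnit.of_mul_eq_one (∏ a, ε a) ?_
    rw [← Finset.prod_mul_distrib]
    apply Finset.prod_eq_one
    intro a _
    rcases ite_eq_or_eq (B (f a) = A (i' (f a))) (1 : ℤ) (-1) with hh | hh <;>
      rw [show ε a = _ from hh] <;> norm_num
  rcases Int.isUnit_iff.mp hunit with hp | hp
  · exact ⟨s, by rw [hp, one_mul, hs]⟩
  · exact ⟨-s, by rw [hp, SignType.coe_neg, hs, neg_one_mul]⟩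

lemma extreme_integral {ι : Type} [Fintype ι] {n : ℕ} {M : Matrix ι (Fin n) ℤ}
    (hM : M.IsTotallyUnimodular) (c : ι → ℤ) {x : Fin n → ℝ}
    (hx : x ∈ Set.extremePoints ℝ
      {y : Fin n → ℝ | ∀ i, (M.map (Int.cast : ℤ → ℝ)).mulVec y i ≤ (c i : ℝ)}) :
    ∀ j, ∃ z : ℤ, x j = (z : ℝ) := by
  classical
  set Mr := M.map (Int.cast : ℤ → ℝ) with hMrdef
  obtain ⟨hxQ, hxe⟩ := hx
  set T : Set ι := {i | Mr.mulVec x i = (c i : ℝ)} with hTdef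
  -- Step A: tight rows span everything
  have hspan : Submodule.span ℝ ((fun i => Mr i) '' T) = ⊤ := by
    by_contra hne
    obtain ⟨f, hf0, hfmap⟩ := Submodule.exists_dual_map_eq_bot_of_lt_top
      (lt_top_iff_ne_top.mpr hne) inferInstance
    set d : Fin n → ℝ := fun j => f (Pi.single j 1) with hddef
    have hfd : ∀ v : Fin n → ℝ, f v = ∑ j, v j * d j := by
      intro v
      have hv : v = ∑ j, v j • (Pi.single j 1 : Fin n → ℝ) := by
        funext l
        simp [Pi.single_apply, Finset.sum_apply]
      nth_rewrite 1 [hv]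
      rw [map_sum]
      exact Finset.sum_congr rfl fun j _ => by rw [_root_.map_smul, smul_eq_mul]
    have hd0 : d ≠ 0 := by
      intro h
      apply hf0
      refine LinearMap.ext fun v => ?_
      rw [hfd v, LinearMap.zero_apply]
      have : ∀ j, d j = 0 := fun j => congrFun h j
      simp [this]
    have hrow : ∀ i ∈ T, Mr.mulVec d i = 0 := by
      intro i hiT
      have hmem : Mr i ∈ Submodule.span ℝ ((fun i => Mr i) '' T) :=
        Submodule.subset_span ⟨i, hiT, rfl⟩
      have hfr : f (Mr i) = 0 := by
        have h2 : f (Mr i) ∈ Submodule.map f (Submodule.span ℝ ((fun i => Mr i) '' T)) :=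
          Submodule.mem_map_of_mem hmem
        rw [hfmap] at h2
        simpa using h2
      have : Mr.mulVec d i = f (Mr i) := by
        rw [hfd]
        rfl
      rw [this, hfr]
    -- perturbation
    have hev : ∀ᶠ t : ℝ in nhds 0, ∀ i, Mr.mulVec (x + t • d) i ≤ (c i : ℝ) := by
      rw [Filter.eventually_all]
      intro i
      have hlin : ∀ t : ℝ, Mr.mulVec (x + t • d) i = Mr.mulVec x i + t * Mr.mulVec d i := by
        intro t
        rw [Matrix.mulVec_add, Matrix.mulVec_smul]
        simp
      by_cases hiT : i ∈ T
      · filter_upwards with t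
        rw [hlin, hrow i hiT, mul_zero, add_zero]
        exact hxQ i
      · have hlt : Mr.mulVec x i < (c i : ℝ) := lt_of_le_of_ne (hxQ i) hiT
        have hcont : Continuous fun t : ℝ => Mr.mulVec x i + t * Mr.mulVec d i :=
          continuous_const.add (continuous_id.mul continuous_const)
        have htend : Filter.Tendsto (fun t : ℝ => Mr.mulVec x i + t * Mr.mulVec d i)
            (nhds 0) (nhds (Mr.mulVec x i)) := by
          have := hcont.tendsto 0
          simpa using this
        filter_upwards [htend.eventually_le_const hlt] with t ht
        rw [hlin]
        exact ht
    obtain ⟨ε, hε0, hε⟩ := Metric.eventually_nhds_iff.mp hev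
    have h1 : ∀ i, Mr.mulVec (x + (ε/2) • d) i ≤ (c i : ℝ) := by
      apply hε
      rw [Real.dist_eq]
      rw [sub_zero, abs_of_pos (by linarith)]
      linarith
    have h2 : ∀ i, Mr.mulVec (x + (-(ε/2)) • d) i ≤ (c i : ℝ) := by
      apply hε
      rw [Real.dist_eq]
      rw [sub_zero, abs_of_neg (by linarith)]
      linarith
    have hseg : x ∈ openSegment ℝ (x + (ε/2) • d) (x + (-(ε/2)) • d) := by
      refine ⟨1/2, 1/2, by norm_num, by norm_num, by norm_num, ?_⟩
      module
    have := hxe h1 h2 hseg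
    have hzero : (ε/2) • d = 0 := by
      have h' : x + (ε/2) • d = x + 0 := by rw [add_zero]; exact this
      exact add_left_cancel h'
    rcases smul_eq_zero.mp hzero with h | h
    · exact absurd h (by positivity)
    · exact hd0 h
  -- Step C: extract a basis and invert
  obtain ⟨bset, hbsub, hbspan, hbli⟩ := exists_linearIndependent ℝ ((fun i => Mr i) '' T)
  rw [hspan] at hbspan
  have hbfin : bset.Finite := hbli.setFinite
  have : Fintype bset := hbfin.fintype
  let bas : Module.Basis bset ℝ (Fin n → ℝ) := Module.Basis.mk hbli (by rw [Subtype.range_val, hbspan])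
  have hcard : n = Fintype.card bset := by
    have h := Module.finrank_eq_card_basis bas
    rwa [Module.finrank_fin_fun] at h
  obtain ⟨e⟩ : Nonempty (Fin n ≃ bset) := ⟨(Fintype.equivFinOfCardEq hcard.symm).symm⟩
  have hsel : ∀ v : bset, ∃ i : ι, i ∈ T ∧ Mr i = (v : Fin n → ℝ) := fun v => by
    obtain ⟨i, hiT, hiv⟩ := hbsub v.2
    exact ⟨i, hiT, hiv⟩
  choose σ hσT hσv using hsel
  set g : Fin n → ι := fun j => σ (e j) with hgdef
  set Bi : Matrix (Fin n) (Fin n) ℤ := M.submatrix g id with hBidef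
  have hBmap : Bi.map (Int.cast : ℤ → ℝ) = Mr.submatrix g id := rfl
  have hrows : (fun j => (Bi.map (Int.cast : ℤ → ℝ)) j) = fun j => ((e j : Fin n → ℝ)) := by
    funext j
    rw [hBmap]
    show Mr (g j) = _
    rw [hσv (e j)]
  have hBrli : LinearIndependent ℝ (fun j => (Bi.map (Int.cast : ℤ → ℝ)) j) := by
    rw [hrows]
    exact hbli.comp e e.injective
  have hBrunit : IsUnit (Bi.map (Int.cast : ℤ → ℝ)) :=
    Matrix.linearIndependent_rows_iff_isUnit.mp hBrli
  have hdetRunit : IsUnit (Bi.map (Int.cast : ℤ → ℝ)).det :=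
    (Matrix.isUnit_iff_isUnit_det _).mp hBrunit
  have hdetcast : ((Bi.det : ℤ) : ℝ) = (Bi.map (Int.cast : ℤ → ℝ)).det :=
    RingHom.map_det (Int.castRingHom ℝ) Bi
  have hdetB : IsUnit Bi.det := by
    obtain ⟨s, hs⟩ := (Matrix.isTotallyUnimodular_iff M).mp hM n g id
    have hs' : ((s : ℤ) : ℤ) = Bi.det := hs
    cases s with
    | zero =>
        exfalso
        apply hdetRunit.ne_zero
        rw [← hdetcast, ← hs']
        simp
    | pos => rw [← hs']; simp
    | neg => rw [← hs']; simp
  set z : Fin n → ℤ := Bi⁻¹.mulVec (fun j => c (g j)) with hzdef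
  have hBz : Bi.mulVec z = fun j => c (g j) := by
    rw [hzdef, Matrix.mulVec_mulVec, Matrix.mul_nonsing_inv Bi hdetB, Matrix.one_mulVec]
  have hreal : (Bi.map (Int.cast : ℤ → ℝ)).mulVec x
      = (Bi.map (Int.cast : ℤ → ℝ)).mulVec (fun j => (z j : ℝ)) := by
    funext j
    have hL : (Bi.map (Int.cast : ℤ → ℝ)).mulVec x j = Mr.mulVec x (g j) := rfl
    have hR : (Bi.map (Int.cast : ℤ → ℝ)).mulVec (fun j => (z j : ℝ)) j
        = ((Bi.mulVec z j : ℤ) : ℝ) := by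
      rw [castVec_mulVec]
    rw [hL, hR, hBz, hσT (e j)]
  have hxz : x = fun j => (z j : ℝ) :=
    Matrix.mulVec_injective_iff_isUnit.mpr hBrunit hreal
  intro j
  exact ⟨z j, congrFun hxz j⟩

lemma key_subset_conv {m n k : ℕ} (A : Matrix (Fin m) (Fin n) ℤ) (U : Matrix (Fin m) (Fin k) ℤ)
    (W : Matrix (Fin k) (Fin n) ℤ)
    (hTU : (Matrix.fromRows (A - U * W) W).IsTotallyUnimodular)
    (b : Fin m → ℤ) (ℓ u : Fin n → ℤ) :
    {x : Fin n → ℝ |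
        (∀ i, (ℓ i : ℝ) ≤ x i ∧ x i ≤ (u i : ℝ)) ∧
        (∀ i, (A.map (Int.cast : ℤ → ℝ)).mulVec x i ≤ (b i : ℝ)) ∧
        (∀ j, ∃ z : ℤ, (W.map (Int.cast : ℤ → ℝ)).mulVec x j = (z : ℝ))} ⊆
      convexHull ℝ {x : Fin n → ℝ |
        (∀ i, (ℓ i : ℝ) ≤ x i ∧ x i ≤ (u i : ℝ)) ∧
        (∀ i, (A.map (Int.cast : ℤ → ℝ)).mulVec x i ≤ (b i : ℝ)) ∧
        (∀ i, ∃ z : ℤ, x i = (z : ℝ))} := by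
  classical
  intro x hx
  obtain ⟨hbnd, hAx, hWx⟩ := hx
  choose w hw using hWx
  have hWxeq : (W.map (Int.cast : ℤ → ℝ)).mulVec x = fun j => (w j : ℝ) := funext hw
  -- the big system
  set Mbig : Matrix ((Fin m ⊕ Fin k) ⊕ (Fin k ⊕ (Fin n ⊕ Fin n))) (Fin n) ℤ :=
    fromRows (fromRows (A - U * W) W)
      (fromRows (-W) (fromRows (1 : Matrix (Fin n) (Fin n) ℤ) (-1))) with hMbig
  set cbig : ((Fin m ⊕ Fin k) ⊕ (Fin k ⊕ (Fin n ⊕ Fin n))) → ℤ :=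
    Sum.elim (Sum.elim (b - U.mulVec w) w) (Sum.elim (-w) (Sum.elim u (-ℓ))) with hcbig
  -- TU of the big system
  have hN : (fromRows (fromRows (A - U * W) W) (1 : Matrix (Fin n) (Fin n) ℤ)).IsTotallyUnimodular :=
    (Matrix.fromRows_one_isTotallyUnimodular_iff _).mpr hTU
  have hMTU : Mbig.IsTotallyUnimodular := by
    apply tu_of_signed_rows hN
    rintro (p | (j | (i | i)))
    · exact ⟨Sum.inl p, Or.inl rfl⟩
    · refine ⟨Sum.inl (Sum.inr j), Or.inr ?_⟩
      funext l
      simp [hMbig]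
    · exact ⟨Sum.inr i, Or.inl (by funext l; simp [hMbig])⟩
    · refine ⟨Sum.inr i, Or.inr ?_⟩
      funext l
      simp [hMbig]
  -- row computations
  have hsubA : ∀ y : Fin n → ℝ, ((A - U * W).map (Int.cast : ℤ → ℝ)).mulVec y
      = (A.map (Int.cast : ℤ → ℝ)).mulVec y - ((U * W).map (Int.cast : ℤ → ℝ)).mulVec y := by
    intro y
    have hmap : (A - U * W).map (Int.cast : ℤ → ℝ)
        = A.map (Int.cast : ℤ → ℝ) - (U * W).map (Int.cast : ℤ → ℝ) := by
      ext i l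
      simp [Matrix.map_apply]
    rw [hmap, Matrix.sub_mulVec]
  have hUW : ∀ y : Fin n → ℝ, (W.map (Int.cast : ℤ → ℝ)).mulVec y = (fun j => (w j : ℝ)) →
      ((U * W).map (Int.cast : ℤ → ℝ)).mulVec y = fun i => ((U.mulVec w i : ℤ) : ℝ) := by
    intro y hy
    have hmap : (U * W).map (Int.cast : ℤ → ℝ)
        = U.map (Int.cast : ℤ → ℝ) * W.map (Int.cast : ℤ → ℝ) := by
      ext i l
      simp only [Matrix.map_apply, Matrix.mul_apply]
      push_cast
      rfl
    rw [hmap, ← Matrix.mulVec_mulVec, hy, castVec_mulVec]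
  -- row identifications (definitional)
  have hr1 : ∀ (y : Fin n → ℝ) (i : Fin m), (Mbig.map (Int.cast : ℤ → ℝ)).mulVec y
      (Sum.inl (Sum.inl i)) = ((A - U * W).map (Int.cast : ℤ → ℝ)).mulVec y i := fun _ _ => rfl
  have hr2 : ∀ (y : Fin n → ℝ) (j : Fin k), (Mbig.map (Int.cast : ℤ → ℝ)).mulVec y
      (Sum.inl (Sum.inr j)) = (W.map (Int.cast : ℤ → ℝ)).mulVec y j := fun _ _ => rfl
  have hr3 : ∀ (y : Fin n → ℝ) (j : Fin k), (Mbig.map (Int.cast : ℤ → ℝ)).mulVec y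
      (Sum.inr (Sum.inl j)) = -(W.map (Int.cast : ℤ → ℝ)).mulVec y j := by
    intro y j
    show dotProduct (fun l => (((-W) j l : ℤ) : ℝ)) y = _
    simp [dotProduct, Matrix.mulVec, Finset.sum_neg_distrib, neg_mul]
  have hr4 : ∀ (y : Fin n → ℝ) (i : Fin n), (Mbig.map (Int.cast : ℤ → ℝ)).mulVec y
      (Sum.inr (Sum.inr (Sum.inl i))) = y i := by
    intro y i
    show dotProduct (fun l => (((1 : Matrix (Fin n) (Fin n) ℤ) i l : ℤ) : ℝ)) y = _
    simp [dotProduct, Matrix.one_apply, apply_ite, ite_mul]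
  have hr5 : ∀ (y : Fin n → ℝ) (i : Fin n), (Mbig.map (Int.cast : ℤ → ℝ)).mulVec y
      (Sum.inr (Sum.inr (Sum.inr i))) = -y i := by
    intro y i
    show dotProduct (fun l => (((-1 : Matrix (Fin n) (Fin n) ℤ) i l : ℤ) : ℝ)) y = _
    simp [dotProduct, Matrix.one_apply, Matrix.neg_apply, apply_ite, ite_mul]
  set Q : Set (Fin n → ℝ) :=
    {y : Fin n → ℝ | ∀ i, (Mbig.map (Int.cast : ℤ → ℝ)).mulVec y i ≤ ((cbig i : ℤ) : ℝ)} with hQ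
  have hc1 : ∀ i : Fin m, ((cbig (Sum.inl (Sum.inl i)) : ℤ) : ℝ) = (b i : ℝ) - (U.mulVec w i : ℝ) := by
    intro i; simp [hcbig]
  have hc2 : ∀ j : Fin k, ((cbig (Sum.inl (Sum.inr j)) : ℤ) : ℝ) = (w j : ℝ) := fun j => rfl
  have hc3 : ∀ j : Fin k, ((cbig (Sum.inr (Sum.inl j)) : ℤ) : ℝ) = -(w j : ℝ) := by
    intro j; simp [hcbig]
  have hc4 : ∀ i : Fin n, ((cbig (Sum.inr (Sum.inr (Sum.inl i))) : ℤ) : ℝ) = (u i : ℝ) := fun i => rfl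
  have hc5 : ∀ i : Fin n, ((cbig (Sum.inr (Sum.inr (Sum.inr i))) : ℤ) : ℝ) = -(ℓ i : ℝ) := by
    intro i; simp [hcbig]
  -- x belongs to Q
  have hxQ : x ∈ Q := by
    rintro ((i | j) | (j | (i | i)))
    · rw [hr1, hc1, hsubA, hUW x hWxeq]
      have h := hAx i
      simp only [Pi.sub_apply]
      linarith
    · rw [hr2, hc2]
      exact le_of_eq (hw j)
    · rw [hr3, hc3, hw j]
    · rw [hr4, hc4]
      exact (hbnd i).2
    · rw [hr5, hc5]
      exact neg_le_neg (hbnd i).1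
  -- Q is convex
  have hconv : Convex ℝ Q := by
    intro p hp q hq a a' ha ha' haa
    intro i
    have hcalc : (Mbig.map (Int.cast : ℤ → ℝ)).mulVec (a • p + a' • q) i
        = a * (Mbig.map (Int.cast : ℤ → ℝ)).mulVec p i
          + a' * (Mbig.map (Int.cast : ℤ → ℝ)).mulVec q i := by
      rw [Matrix.mulVec_add, Matrix.mulVec_smul, Matrix.mulVec_smul]
      simp
    rw [hcalc]
    calc a * (Mbig.map (Int.cast : ℤ → ℝ)).mulVec p i
          + a' * (Mbig.map (Int.cast : ℤ → ℝ)).mulVec q i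
        ≤ a * ((cbig i : ℤ) : ℝ) + a' * ((cbig i : ℤ) : ℝ) := by
          gcongr
          exacts [hp i, hq i]
      _ = ((cbig i : ℤ) : ℝ) := by rw [← add_mul, haa, one_mul]
  -- Q is compact
  have hclosed : IsClosed Q := by
    have : Q = ⋂ i, {y : Fin n → ℝ | (Mbig.map (Int.cast : ℤ → ℝ)).mulVec y i ≤ ((cbig i : ℤ) : ℝ)} := by
      ext y
      simp [hQ, Set.mem_iInter]
    rw [this]
    refine isClosed_iInter fun i => isClosed_le ?_ continuous_const
    have : Continuous fun y : Fin n → ℝ => ∑ l, (Mbig.map (Int.cast : ℤ → ℝ)) i l * y l :=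
      continuous_finset_sum _ fun l _ => continuous_const.mul (continuous_apply l)
    exact this
  have hsubbox : Q ⊆ Set.Icc (fun i => (ℓ i : ℝ)) (fun i => (u i : ℝ)) := by
    intro y hy
    constructor
    · intro i
      have h := hy (Sum.inr (Sum.inr (Sum.inr i)))
      rw [hr5, hc5] at h
      simpa using neg_le_neg h
    · intro i
      have h := hy (Sum.inr (Sum.inr (Sum.inl i)))
      rwa [hr4, hc4] at h
  have hcomp : IsCompact Q := IsCompact.of_isClosed_subset isCompact_Icc hclosed hsubbox
  -- extreme points of Q are in the target set
  set Tgt : Set (Fin n → ℝ) := {x : Fin n → ℝ |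
        (∀ i, (ℓ i : ℝ) ≤ x i ∧ x i ≤ (u i : ℝ)) ∧
        (∀ i, (A.map (Int.cast : ℤ → ℝ)).mulVec x i ≤ (b i : ℝ)) ∧
        (∀ i, ∃ z : ℤ, x i = (z : ℝ))} with hTgt
  have hext : Set.extremePoints ℝ Q ⊆ Tgt := by
    intro y hy
    have hyint : ∀ j, ∃ z : ℤ, y j = (z : ℝ) := extreme_integral hMTU cbig hy
    have hyQ : y ∈ Q := hy.1
    have hWy : (W.map (Int.cast : ℤ → ℝ)).mulVec y = fun j => (w j : ℝ) := by
      funext j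
      have hle := hyQ (Sum.inl (Sum.inr j))
      rw [hr2, hc2] at hle
      have hge := hyQ (Sum.inr (Sum.inl j))
      rw [hr3, hc3] at hge
      have := neg_le_neg hge
      simp only [neg_neg] at this
      exact le_antisymm hle this
    refine ⟨?_, ?_, hyint⟩
    · intro i
      exact ⟨(hsubbox hyQ).1 i, (hsubbox hyQ).2 i⟩
    · intro i
      have h := hyQ (Sum.inl (Sum.inl i))
      rw [hr1, hc1, hsubA, hUW y hWy] at h
      simp only [Pi.sub_apply] at h
      linarith
  -- the target set is finite
  have hTfin : Tgt.Finite := by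
    have hbox : Set.Finite {z : Fin n → ℤ | ∀ j, z j ∈ Set.Icc (ℓ j) (u j)} := by
      have := Set.Finite.pi (fun j : Fin n => Set.finite_Icc (ℓ j) (u j))
      apply this.subset
      intro z hz
      simp only [Set.mem_pi, Set.mem_univ, forall_true_left]
      intro j
      exact hz j
    apply ((hbox.image (fun z : Fin n → ℤ => fun j => ((z j : ℤ) : ℝ)))).subset
    rintro y ⟨hybnd, -, hyint⟩
    choose z hz using hyint
    refine ⟨z, ?_, ?_⟩
    · intro j
      constructor
      · have := (hybnd j).1
        rw [hz j] at this
        exact_mod_cast this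
      · have := (hybnd j).2
        rw [hz j] at this
        exact_mod_cast this
    · funext j
      exact (hz j).symm
  -- conclude via Krein-Milman
  have hKM : closure (convexHull ℝ (Set.extremePoints ℝ Q)) = Q :=
    closure_convexHull_extremePoints hcomp hconv
  have hxcl : x ∈ closure (convexHull ℝ (Set.extremePoints ℝ Q)) := by
    rw [hKM]
    exact hxQ
  have hsub2 : closure (convexHull ℝ (Set.extremePoints ℝ Q)) ⊆ convexHull ℝ Tgt := by
    have h1 : convexHull ℝ (Set.extremePoints ℝ Q) ⊆ convexHull ℝ Tgt := convexHull_mono hext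
    have h2 : IsClosed (convexHull ℝ Tgt) := hTfin.isClosed_convexHull ℝ
    exact h2.closure_subset_iff.mpr h1
  exact hsub2 hxcl

/-- A point of `ℝⁿ` is integral if all its coordinates are integers. -/
def IsIntegerPoint {n : ℕ} (x : Fin n → ℝ) : Prop := ∀ i, ∃ z : ℤ, x i = (z : ℝ)

/-- **Affine TU decompositions yield mixed integer descriptions of integer hulls.**
If `A = Ã + U W` is an affine TU decomposition (i.e. `Ã = A - U W` stacked on top of `W`
is totally unimodular, `W` has entries in `{0, ±1}`), then for all integral `b, ℓ, u` with
`ℓ ≤ u`, the set `conv {x | ℓ ≤ x ≤ u, A x ≤ b, W x ∈ ℤᵏ}` is an integral polytope,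
and in particular `P = {x | ℓ ≤ x ≤ u, A x ≤ b}` satisfies
`conv (P ∩ ℤⁿ) = conv {x ∈ P | W x ∈ ℤᵏ}`. -/
theorem affine_TU_decomposition_integral_hull
    {m n k : ℕ} (A : Matrix (Fin m) (Fin n) ℤ) (U : Matrix (Fin m) (Fin k) ℤ)
    (W : Matrix (Fin k) (Fin n) ℤ)
    (hW : ∀ i j, W i j ∈ ({-1, 0, 1} : Set ℤ))
    (hTU : (Matrix.fromRows (A - U * W) W).IsTotallyUnimodular)
    (b : Fin m → ℤ) (ℓ u : Fin n → ℤ) (hℓu : ∀ i, ℓ i ≤ u i) :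
    (convexHull ℝ {x : Fin n → ℝ |
        (∀ i, (ℓ i : ℝ) ≤ x i ∧ x i ≤ (u i : ℝ)) ∧
        (∀ i, (A.map (Int.cast : ℤ → ℝ)).mulVec x i ≤ (b i : ℝ)) ∧
        (∀ j, ∃ z : ℤ, (W.map (Int.cast : ℤ → ℝ)).mulVec x j = (z : ℝ))}
      = convexHull ℝ ((convexHull ℝ {x : Fin n → ℝ |
        (∀ i, (ℓ i : ℝ) ≤ x i ∧ x i ≤ (u i : ℝ)) ∧
        (∀ i, (A.map (Int.cast : ℤ → ℝ)).mulVec x i ≤ (b i : ℝ)) ∧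
        (∀ j, ∃ z : ℤ, (W.map (Int.cast : ℤ → ℝ)).mulVec x j = (z : ℝ))})
          ∩ {x | IsIntegerPoint x}))
    ∧
    (convexHull ℝ {x : Fin n → ℝ |
        (∀ i, (ℓ i : ℝ) ≤ x i ∧ x i ≤ (u i : ℝ)) ∧
        (∀ i, (A.map (Int.cast : ℤ → ℝ)).mulVec x i ≤ (b i : ℝ)) ∧
        IsIntegerPoint x}
      = convexHull ℝ {x : Fin n → ℝ |
        (∀ i, (ℓ i : ℝ) ≤ x i ∧ x i ≤ (u i : ℝ)) ∧
        (∀ i, (A.map (Int.cast : ℤ → ℝ)).mulVec x i ≤ (b i : ℝ)) ∧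
        (∀ j, ∃ z : ℤ, (W.map (Int.cast : ℤ → ℝ)).mulVec x j = (z : ℝ))}) := by
  classical
  set S : Set (Fin n → ℝ) := {x : Fin n → ℝ |
        (∀ i, (ℓ i : ℝ) ≤ x i ∧ x i ≤ (u i : ℝ)) ∧
        (∀ i, (A.map (Int.cast : ℤ → ℝ)).mulVec x i ≤ (b i : ℝ)) ∧
        (∀ j, ∃ z : ℤ, (W.map (Int.cast : ℤ → ℝ)).mulVec x j = (z : ℝ))} with hS
  set T : Set (Fin n → ℝ) := {x : Fin n → ℝ |
        (∀ i, (ℓ i : ℝ) ≤ x i ∧ x i ≤ (u i : ℝ)) ∧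
        (∀ i, (A.map (Int.cast : ℤ → ℝ)).mulVec x i ≤ (b i : ℝ)) ∧
        IsIntegerPoint x} with hT
  have hkey : S ⊆ convexHull ℝ T := key_subset_conv A U W hTU b ℓ u
  have hTS : T ⊆ S := by
    rintro x ⟨h1, h2, h3⟩
    refine ⟨h1, h2, ?_⟩
    choose z hz using h3
    have hxz : x = fun j => (z j : ℝ) := funext hz
    intro j
    refine ⟨W.mulVec z j, ?_⟩
    rw [hxz, castVec_mulVec]
  have hconj2 : convexHull ℝ T = convexHull ℝ S :=
    Set.Subset.antisymm (convexHull_mono hTS)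
      (convexHull_min hkey (convex_convexHull ℝ T))
  constructor
  · apply Set.Subset.antisymm
    · calc convexHull ℝ S = convexHull ℝ T := hconj2.symm
        _ ⊆ convexHull ℝ (convexHull ℝ S ∩ {x | IsIntegerPoint x}) := by
            apply convexHull_mono
            intro x hx
            exact ⟨subset_convexHull ℝ S (hTS hx), hx.2.2⟩
    · exact convexHull_min Set.inter_subset_left (convex_convexHull ℝ S)
  · exact hconj2
end

section
/- Let A ∈ ℤ^{m×n}, U ∈ ℤ^{m×k}, and W ∈ {0,±1}^{k×n} be such that A = Ã + UW with [Ã; W] totally unimodular, and suppose W has rank k' < k. Then A admits a k'-row affine TU decomposition: there exists a subset I ⊆ {1,…,k} with |I| = k' such that the rows of W indexed by I have rank k', and an integer matrix R ∈ ℤ^{(k−k')×k'} with W_{I^c} = R·W_I, so that A = Ã + (U_I + U_{I^c}·R)·W_I is an affine TU decomposition with k' rows (where U_I, U_{I^c} denote the columns of U indexed by I and its complement). -/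
open Matrix Set

private lemma map_mul_intCast {a b c : Type*} [Fintype b] (X : Matrix a b ℤ) (Y : Matrix b c ℤ) :
    (X * Y).map (Int.cast : ℤ → ℚ) = X.map (Int.cast : ℤ → ℚ) * Y.map (Int.cast : ℤ → ℚ) := by
  have h : (Int.cast : ℤ → ℚ) = ⇑(Int.castRingHom ℚ) := rfl
  rw [h, Matrix.map_mul]

/-- **W can be assumed to have full row rank in an affine TU decomposition.**
If `A = Ã + U W` is an affine TU decomposition where `W ∈ {0,±1}^{k×n}` has rank `k' < k`,
then there is a subset `I` of the rows of `W` of size `k'` whose rows have rank `k'` and an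
integral matrix `R` with `W_{Iᶜ} = R W_I`, such that
`A = Ã + (U_I + U_{Iᶜ} R) W_I` is a `k'`-row affine TU decomposition of `A`. -/
theorem affine_TU_decomposition_reduce_to_full_rank
    {m n k : ℕ} (A : Matrix (Fin m) (Fin n) ℤ) (U : Matrix (Fin m) (Fin k) ℤ)
    (W : Matrix (Fin k) (Fin n) ℤ) (k' : ℕ)
    (hW : ∀ i j, W i j ∈ ({-1, 0, 1} : Set ℤ))
    (hTU : (Matrix.fromRows (A - U * W) W).IsTotallyUnimodular)
    (hrank : (W.map (Int.cast : ℤ → ℚ)).rank = k') (hk' : k' < k) :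
    ∃ (I : Finset (Fin k)) (R : Matrix {i // i ∉ I} {i // i ∈ I} ℤ),
      I.card = k' ∧
      ((W.submatrix (fun i : {i // i ∈ I} => (i : Fin k)) id).map
        (Int.cast : ℤ → ℚ)).rank = k' ∧
      W.submatrix (fun i : {i // i ∉ I} => (i : Fin k)) id
        = R * W.submatrix (fun i : {i // i ∈ I} => (i : Fin k)) id ∧
      A = (A - U * W)
          + (U.submatrix id (fun i : {i // i ∈ I} => (i : Fin k))
              + U.submatrix id (fun i : {i // i ∉ I} => (i : Fin k)) * R)
            * W.submatrix (fun i : {i // i ∈ I} => (i : Fin k)) id ∧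
      (Matrix.fromRows (A - U * W)
        (W.submatrix (fun i : {i // i ∈ I} => (i : Fin k)) id)).IsTotallyUnimodular := by
  classical
  set Wq : Matrix (Fin k) (Fin n) ℚ := W.map (Int.cast : ℤ → ℚ) with hWqdef
  -- choose a maximal independent set of rows
  obtain ⟨t, hts, hspan, hli⟩ := exists_linearIndependent ℚ (Set.range Wq)
  have ht : t.Finite := (Set.finite_range Wq).subset hts
  haveI : Fintype t := ht.fintype
  have hchoose : ∀ v : t, ∃ i : Fin k, Wq i = (v : Fin n → ℚ) := fun v => hts v.2
  let f : t → Fin k := fun v => (hchoose v).choose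
  have hf : ∀ v : t, Wq (f v) = (v : Fin n → ℚ) := fun v => (hchoose v).choose_spec
  have hfinj : Function.Injective f := by
    intro v v' h
    have : (v : Fin n → ℚ) = (v' : Fin n → ℚ) := by rw [← hf v, ← hf v', h]
    exact Subtype.ext this
  let I : Finset (Fin k) := Finset.image f Finset.univ
  have hmemI : ∀ i ∈ I, ∃ v : t, f v = i := by
    intro i hi
    obtain ⟨v, -, hv⟩ := Finset.mem_image.mp hi
    exact ⟨v, hv⟩
  have hrowmem : ∀ i : {i // i ∈ I}, Wq (i : Fin k) ∈ t := by
    intro ⟨i, hi⟩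
    obtain ⟨v, hv⟩ := hmemI i hi
    simpa [← hv, hf v] using v.2
  -- the equivalence between I and t
  let e : {i // i ∈ I} → t := fun i => ⟨Wq (i : Fin k), hrowmem i⟩
  have hebij : Function.Bijective e := by
    constructor
    · rintro ⟨i, hi⟩ ⟨i', hi'⟩ h
      obtain ⟨v, hv⟩ := hmemI i hi
      obtain ⟨v', hv'⟩ := hmemI i' hi'
      have h1 : Wq i = Wq i' := congrArg Subtype.val h
      subst hv hv'
      rw [hf v, hf v'] at h1
      exact Subtype.ext (congrArg f (Subtype.ext h1))
    · intro v
      refine ⟨⟨f v, Finset.mem_image.mpr ⟨v, Finset.mem_univ v, rfl⟩⟩, ?_⟩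
      exact Subtype.ext (hf v)
  let eE : {i // i ∈ I} ≃ t := Equiv.ofBijective e hebij
  let rowsI : {i // i ∈ I} → (Fin n → ℚ) := fun i => Wq (i : Fin k)
  have hrowsI : rowsI = (Subtype.val : t → (Fin n → ℚ)) ∘ eE := rfl
  have hliI : LinearIndependent ℚ rowsI := by
    rw [hrowsI]; exact hli.comp eE eE.injective
  have hrangeI : Set.range rowsI = t := by
    rw [hrowsI, Set.range_comp, Equiv.range_eq_univ, Set.image_univ, Subtype.range_coe]
  -- cardinality of I
  have hcardt : t.toFinset.card = k' := by
    have h3 : Module.finrank ℚ (Submodule.span ℚ t) = t.toFinset.card :=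
      finrank_span_set_eq_card hli
    rw [hspan, ← show Set.range Wq.row = Set.range Wq from rfl, ← Wq.rank_eq_finrank_span_row, hrank] at h3
    exact h3.symm
  have hcardI : I.card = k' := by
    rw [Finset.card_image_of_injective _ hfinj, Finset.card_univ, ← Set.toFinset_card, hcardt]
  -- the matrix over ℚ of rows indexed by I
  set M : Matrix {i // i ∈ I} (Fin n) ℚ := Wq.submatrix (fun i : {i // i ∈ I} => (i : Fin k)) id
    with hMdef
  have hMrows : ∀ i, M i = rowsI i := fun i => rfl
  have hMrank : M.rank = k' := by
    rw [M.rank_eq_finrank_span_row, show Set.range M.row = Set.range rowsI from rfl, hrangeI,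
      finrank_span_set_eq_card hli, hcardt]
  -- every row of W lies in the span of the rows indexed by I
  have hrowspan : ∀ i : Fin k, Wq i ∈ Submodule.span ℚ (Set.range rowsI) := by
    intro i
    rw [hrangeI, hspan]
    exact Submodule.subset_span ⟨i, rfl⟩
  -- the rational coefficient matrix Q
  let Bas : Module.Basis {i // i ∈ I} ℚ (Submodule.span ℚ (Set.range rowsI)) := Module.Basis.span hliI
  let Q : Matrix {i // i ∉ I} {i // i ∈ I} ℚ :=
    fun i' i => Bas.equivFun ⟨Wq (i' : Fin k), hrowspan i'⟩ i
  have hQrow : ∀ i' : {i // i ∉ I}, Wq (i' : Fin k) = ∑ i, Q i' i • rowsI i := by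
    intro i'
    have h1 := Bas.sum_equivFun ⟨Wq (i' : Fin k), hrowspan i'⟩
    have h2 := congrArg (Subtype.val : Submodule.span ℚ (Set.range rowsI) → (Fin n → ℚ)) h1
    simp only [AddSubmonoidClass.coe_finset_sum, SetLike.val_smul] at h2
    rw [← h2]
    exact Finset.sum_congr rfl fun i _ => by
      rw [show ((Bas i : Submodule.span ℚ (Set.range rowsI)) : Fin n → ℚ) = rowsI i from
        congrArg Subtype.val (Module.Basis.span_apply hliI i)]
  have hQmat : Wq.submatrix (fun i : {i // i ∉ I} => (i : Fin k)) id = Q * M := by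
    ext i' j
    have := congrFun (hQrow i') j
    simpa [Matrix.mul_apply, Finset.sum_apply, hMrows] using this
  -- W is totally unimodular
  have hWTU : W.IsTotallyUnimodular := by
    have h := hTU.submatrix Sum.inr id
    have : (Matrix.fromRows (A - U * W) W).submatrix Sum.inr id = W := by
      ext i j; rfl
    rwa [this] at h
  -- the columns of M span everything
  have hMcolspan : Submodule.span ℚ (Set.range Mᵀ) = ⊤ := by
    apply Submodule.eq_top_of_finrank_eq
    rw [show Set.range Mᵀ = Set.range M.col from rfl, ← M.rank_eq_finrank_span_cols, hMrank, Module.finrank_fintype_fun_eq_card,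
      Fintype.card_coe, hcardI]
  obtain ⟨t', hts', hspan', hli'⟩ := exists_linearIndependent ℚ (Set.range Mᵀ)
  have ht' : t'.Finite := (Set.finite_range Mᵀ).subset hts'
  haveI : Fintype t' := ht'.fintype
  have hcardt' : Fintype.card {i // i ∈ I} = Fintype.card t' := by
    have h3 : Module.finrank ℚ (Submodule.span ℚ t') = t'.toFinset.card :=
      finrank_span_set_eq_card hli'
    rw [hspan', hMcolspan, finrank_top, Module.finrank_fintype_fun_eq_card] at h3
    rw [← Set.toFinset_card, ← h3]
  let e2 : {i // i ∈ I} ≃ t' := Fintype.equivOfCardEq hcardt'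
  have hchoose' : ∀ i : {i // i ∈ I}, ∃ j : Fin n, Mᵀ j = (e2 i : {i // i ∈ I} → ℚ) :=
    fun i => hts' (e2 i).2
  let g : {i // i ∈ I} → Fin n := fun i => (hchoose' i).choose
  have hg : ∀ i, Mᵀ (g i) = ((e2 i : t') : {i // i ∈ I} → ℚ) := fun i => (hchoose' i).choose_spec
  -- the square submatrix S over ℚ is invertible
  set S : Matrix {i // i ∈ I} {i // i ∈ I} ℚ := M.submatrix id g with hSdef
  have hScols : LinearIndependent ℚ (fun i => Sᵀ i) := by
    have : (fun i => Sᵀ i) = (Subtype.val : t' → ({i // i ∈ I} → ℚ)) ∘ e2 := by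
      funext i
      have : Sᵀ i = Mᵀ (g i) := rfl
      rw [this, hg i]; rfl
    rw [this]
    exact hli'.comp e2 e2.injective
  have hSunit : IsUnit S := Matrix.linearIndependent_cols_iff_isUnit.mp hScols
  have hSdetU : IsUnit S.det := (Matrix.isUnit_iff_isUnit_det S).mp hSunit
  -- the integral square submatrix B0
  set B0 : Matrix {i // i ∈ I} {i // i ∈ I} ℤ :=
    W.submatrix (fun i : {i // i ∈ I} => (i : Fin k)) g with hB0def
  have hB0map : B0.map (Int.cast : ℤ → ℚ) = S := rfl
  have hB0detcast : (Int.cast (B0.det) : ℚ) = S.det := by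
    rw [← hB0map]
    exact (RingHom.map_det (Int.castRingHom ℚ) B0)
  have hB0ne : B0.det ≠ 0 := by
    intro h
    rw [h] at hB0detcast
    exact hSdetU.ne_zero (by exact_mod_cast hB0detcast.symm)
  have hUnit : IsUnit B0.det := by
    obtain ⟨s, hs⟩ := (W.isTotallyUnimodular_iff_fintype.mp hWTU) {i // i ∈ I}
      (fun i : {i // i ∈ I} => (i : Fin k)) g
    rw [Int.isUnit_iff]
    cases s with
    | zero => exact absurd hs.symm hB0ne
    | pos => left; exact hs.symm
    | neg => right; exact hs.symm
  -- the integral matrix R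
  set R : Matrix {i // i ∉ I} {i // i ∈ I} ℤ :=
    W.submatrix (fun i : {i // i ∉ I} => (i : Fin k)) g * B0⁻¹ with hRdef
  have hRB0 : R * B0 = W.submatrix (fun i : {i // i ∉ I} => (i : Fin k)) g := by
    rw [hRdef, Matrix.mul_assoc, Matrix.nonsing_inv_mul B0 hUnit, Matrix.mul_one]
  have hQS : Q * S = (W.submatrix (fun i : {i // i ∉ I} => (i : Fin k)) g).map
      (Int.cast : ℤ → ℚ) := by
    ext i' i
    show (Q * M) i' (g i) = _
    rw [← hQmat]
    rfl
  have hRQ : R.map (Int.cast : ℤ → ℚ) = Q := by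
    have h6 : R.map (Int.cast : ℤ → ℚ) * S = Q * S := by
      calc R.map (Int.cast : ℤ → ℚ) * S
          = R.map (Int.cast : ℤ → ℚ) * B0.map (Int.cast : ℤ → ℚ) := by rw [hB0map]
        _ = (R * B0).map (Int.cast : ℤ → ℚ) := (map_mul_intCast R B0).symm
        _ = (W.submatrix (fun i : {i // i ∉ I} => (i : Fin k)) g).map (Int.cast : ℤ → ℚ) := by
            rw [hRB0]
        _ = Q * S := hQS.symm
    have h7 := congrArg (fun X => X * S⁻¹) h6
    simpa [Matrix.mul_assoc, Matrix.mul_nonsing_inv S hSdetU] using h7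
  have hRW : W.submatrix (fun i : {i // i ∉ I} => (i : Fin k)) id
      = R * W.submatrix (fun i : {i // i ∈ I} => (i : Fin k)) id := by
    have h7 : ((R * W.submatrix (fun i : {i // i ∈ I} => (i : Fin k)) id).map
        (Int.cast : ℤ → ℚ)) = Wq.submatrix (fun i : {i // i ∉ I} => (i : Fin k)) id := by
      rw [_root_.map_mul_intCast, hRQ]
      exact hQmat.symm
    ext i j
    have h8 := congrFun (congrFun h7 i) j
    have h9 : ((R * W.submatrix (fun i : {i // i ∈ I} => (i : Fin k)) id) i j : ℚ)
        = ((W.submatrix (fun i : {i // i ∉ I} => (i : Fin k)) id i j : ℤ) : ℚ) := h8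
    exact_mod_cast h9.symm
  -- splitting U * W according to I
  have hsplit : U * W
      = U.submatrix id (fun i : {i // i ∈ I} => (i : Fin k))
          * W.submatrix (fun i : {i // i ∈ I} => (i : Fin k)) id
        + U.submatrix id (fun i : {i // i ∉ I} => (i : Fin k))
          * W.submatrix (fun i : {i // i ∉ I} => (i : Fin k)) id := by
    ext a j
    simp only [Matrix.mul_apply, Matrix.add_apply, Matrix.submatrix_apply, id_eq]
    rw [← Finset.sum_add_sum_compl I (fun l => U a l * W l j)]
    congr 1
    · exact Finset.sum_subtype I (fun x => Iff.rfl) (fun l => U a l * W l j)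
    · exact Finset.sum_subtype Iᶜ (fun x => Finset.mem_compl) (fun l => U a l * W l j)
  -- the decomposition equation
  have hfinal : A = (A - U * W)
      + (U.submatrix id (fun i : {i // i ∈ I} => (i : Fin k))
          + U.submatrix id (fun i : {i // i ∉ I} => (i : Fin k)) * R)
        * W.submatrix (fun i : {i // i ∈ I} => (i : Fin k)) id := by
    rw [Matrix.add_mul, Matrix.mul_assoc, ← hRW, ← hsplit, sub_add_cancel]
  -- total unimodularity of the reduced decomposition
  have hTUfinal : (Matrix.fromRows (A - U * W)
      (W.submatrix (fun i : {i // i ∈ I} => (i : Fin k)) id)).IsTotallyUnimodular := by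
    have h := hTU.submatrix (Sum.map id (fun i : {i // i ∈ I} => (i : Fin k))) id
    have heq : (Matrix.fromRows (A - U * W) W).submatrix
        (Sum.map id (fun i : {i // i ∈ I} => (i : Fin k))) id
        = Matrix.fromRows (A - U * W)
            (W.submatrix (fun i : {i // i ∈ I} => (i : Fin k)) id) := by
      ext i j
      cases i <;> rfl
    rwa [heq] at h
  exact ⟨I, R, hcardI, hMrank, hRW, hfinal, hTUfinal⟩
end

section
/- Let A ∈ ℤ^{m×n} and W ∈ ℤ^{k×n}, and suppose the (m+k)×(n+m) block matrix M = [[A, I_m],[W, 0_{k×m}]] has rank m+k. Then M is unimodular (i.e., every nonsingular (m+k)×(m+k) submatrix of M has determinant ±1) if and only if for every b ∈ ℤ^m and every d ∈ ℤ^k, the polyhedron {x ∈ ℝ^n : Ax ≤ b, Wx = d, x ≥ 0} is integral. -/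
open Matrix Set

/-- An integral matrix of full row rank is unimodular if each of its nonsingular maximal
square submatrices has determinant `±1`. -/
def IsUnimodularRect {r s : Type*} [Fintype r] [DecidableEq r]
    (M : Matrix r s ℤ) : Prop :=
  ∀ g : r → s, Function.Injective g →
    (M.submatrix id g).det ≠ 0 → (M.submatrix id g).det = 1 ∨ (M.submatrix id g).det = -1

namespace HK

variable {R C : Type*} [Fintype R] [Fintype C] [DecidableEq R] [DecidableEq C]

def IsIntVec {α : Type*} (x : α → ℝ) : Prop := ∀ i, ∃ z : ℤ, x i = (z : ℝ)

lemma mulVec_cast {α β : Type*} [Fintype β] {K : Type*} [CommRing K]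
    (M : Matrix α β ℤ) (v : β → ℤ) :
    (M.map (Int.cast : ℤ → K)).mulVec (fun i => ((v i : K))) = fun r => ((M.mulVec v r : ℤ) : K) := by
  funext r
  simp only [Matrix.mulVec, dotProduct, Matrix.map_apply]
  push_cast
  rfl

/-- The standard-form polyhedron's set of integral points. -/
lemma det_map_int {n : Type*} [Fintype n] [DecidableEq n] {K : Type*} [CommRing K]
    (B : Matrix n n ℤ) : (B.map (Int.cast : ℤ → K)).det = ((B.det : ℤ) : K) := by
  have h1 := RingHom.map_det (Int.castRingHom K) B
  simpa [RingHom.mapMatrix_apply] using h1.symm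

def stdSet (M : Matrix R C ℤ) (β : R → ℤ) : Set (C → ℝ) :=
  {z | (∀ c, 0 ≤ z c) ∧ ((M.map (Int.cast : ℤ → ℝ)).mulVec z = fun r => (β r : ℝ)) ∧ IsIntVec z}

lemma stdSet_add_int {M : Matrix R C ℤ} {β : R → ℤ} {w : C → ℝ} (hw : w ∈ stdSet M β)
    {c : C → ℤ} (hc0 : ∀ i, 0 ≤ c i) (hMc : M.mulVec c = 0) (a : ℤ) (ha : 0 ≤ a) :
    (w + (a : ℝ) • fun i => ((c i : ℝ))) ∈ stdSet M β := by
  obtain ⟨hw0, hwM, hwI⟩ := hw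
  have hcast : (M.map (Int.cast : ℤ → ℝ)).mulVec (fun i => ((c i : ℝ))) = 0 := by
    rw [mulVec_cast M c]
    funext r; simp [hMc]
  refine ⟨fun i => ?_, ?_, fun i => ?_⟩
  · have h1 : (0:ℝ) ≤ (a : ℝ) * (c i : ℝ) :=
      mul_nonneg (by exact_mod_cast ha) (by exact_mod_cast hc0 i)
    simpa using add_nonneg (hw0 i) h1
  · rw [Matrix.mulVec_add, hwM, Matrix.mulVec_smul, hcast]
    funext r; simp
  · obtain ⟨zi, hzi⟩ := hwI i
    refine ⟨zi + a * c i, ?_⟩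
    simp only [Pi.add_apply, Pi.smul_apply, smul_eq_mul, hzi]
    push_cast; ring

lemma recession {M : Matrix R C ℤ} {β : R → ℤ}
    {c : C → ℤ} (hc0 : ∀ i, 0 ≤ c i) (hMc : M.mulVec c = 0) {t : ℝ} (ht : 0 ≤ t)
    {y : C → ℝ} (hy : y ∈ convexHull ℝ (stdSet M β)) :
    (y + t • fun i => ((c i : ℝ))) ∈ convexHull ℝ (stdSet M β) := by
  set cR : C → ℝ := fun i => ((c i : ℝ)) with hcR
  have himg : (fun w => w + t • cR) '' convexHull ℝ (stdSet M β)
      = convexHull ℝ ((fun w => w + t • cR) '' stdSet M β) :=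
    (AffineMap.mk (fun w => w + t • cR) LinearMap.id (fun p v => by
      funext i; simp only [vadd_eq_add, Pi.add_apply, Pi.smul_apply, smul_eq_mul, LinearMap.id_coe, id_eq]; ring)).image_convexHull (stdSet M β)
  have hsub : (fun w => w + t • cR) '' stdSet M β ⊆ convexHull ℝ (stdSet M β) := by
    rintro _ ⟨w, hw, rfl⟩
    have h1 : (w + ((⌊t⌋ : ℤ) : ℝ) • cR) ∈ stdSet M β :=
      stdSet_add_int hw hc0 hMc ⌊t⌋ (Int.floor_nonneg.2 ht)
    have h2 : (w + (((⌊t⌋ : ℤ) + 1 : ℤ) : ℝ) • cR) ∈ stdSet M β :=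
      stdSet_add_int hw hc0 hMc (⌊t⌋ + 1) (by linarith [Int.floor_nonneg.2 ht])
    have hθ0 : 0 ≤ Int.fract t := Int.fract_nonneg t
    have hθ1 : Int.fract t < 1 := Int.fract_lt_one t
    have hcomb := (convex_convexHull ℝ (stdSet M β))
      (subset_convexHull ℝ _ h1) (subset_convexHull ℝ _ h2)
      (by linarith : (0:ℝ) ≤ 1 - Int.fract t) hθ0 (by ring)
    have heq : (1 - Int.fract t) • (w + ((⌊t⌋ : ℤ) : ℝ) • cR)
        + Int.fract t • (w + (((⌊t⌋ : ℤ) + 1 : ℤ) : ℝ) • cR) = w + t • cR := by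
      have hfl : ((⌊t⌋ : ℝ)) + Int.fract t = t := Int.floor_add_fract t
      funext i
      simp only [Pi.add_apply, Pi.smul_apply, smul_eq_mul, Int.cast_add, Int.cast_one]
      linear_combination (cR i) * hfl
    rw [heq] at hcomb
    exact hcomb
  have hmem : y + t • cR ∈ (fun w => w + t • cR) '' convexHull ℝ (stdSet M β) := ⟨y, hy, rfl⟩
  rw [himg] at hmem
  exact convexHull_min hsub (convex_convexHull ℝ _) hmem


lemma cast_kernel {M : Matrix R C ℤ} {c : C → ℤ} (hMc : M.mulVec c = 0) :
    (M.map (Int.cast : ℤ → ℝ)).mulVec (fun i => ((c i : ℝ))) = 0 := by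
  funext r
  have h2 : (M.map (Int.cast : ℤ → ℝ)).mulVec (fun i => ((c i : ℝ))) r
      = ((M.mulVec c r : ℤ) : ℝ) := by
    simp only [Matrix.mulVec, dotProduct, Matrix.map_apply]
    push_cast
    rfl
  rw [h2, hMc]
  simp


lemma indep_case (M : Matrix R C ℤ)
    (hspan : Submodule.span ℚ (Set.range fun c => fun r => ((M r c : ℚ))) = ⊤)
    (hU : IsUnimodularRect M) (β : R → ℤ)
    (z : C → ℝ) (hz0 : ∀ c, 0 ≤ z c)
    (hzM : (M.map (Int.cast : ℤ → ℝ)).mulVec z = fun r => (β r : ℝ))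
    (hind : LinearIndependent ℚ (fun i : {c : C // z c ≠ 0} => (fun r => ((M r i.1 : ℚ))))) :
    z ∈ stdSet M β := by
  classical
  set colq : C → (R → ℚ) := fun c => fun r => ((M r c : ℚ)) with hcolq
  set supp : Set C := {c | z c ≠ 0} with hsupp
  have hindinj : Function.Injective (fun i : supp => colq i.1) := hind.injective
  have hs : LinearIndependent ℚ ((↑) : (colq '' supp) → (R → ℚ)) := LinearIndepOn.id_image (v := colq) (s := supp) hind
  obtain ⟨bset, hbt, hsb, htb, hbind⟩ :=
    exists_linearIndepOn_id_extension hs (Set.image_subset_range colq supp)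
  have hspanb : Submodule.span ℚ bset = ⊤ :=
    top_unique (hspan ▸ Submodule.span_le.mpr htb)
  have hbfin : bset.Finite := (Set.finite_range colq).subset hbt
  haveI := hbfin.fintype
  let bas : Module.Basis bset ℚ (R → ℚ) := Module.Basis.mk hbind (by show ⊤ ≤ Submodule.span ℚ (Set.range ((↑) : bset → (R → ℚ))); rw [Subtype.range_coe]; exact hspanb.ge)
  have hcard : Fintype.card R = Fintype.card bset := by
    have h1 := Module.finrank_eq_card_basis bas
    rw [Module.finrank_pi] at h1
    exact h1
  let e : R ≃ bset := Fintype.equivOfCardEq hcard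
  -- choose preimages
  have hex : ∀ v : bset, ∃ c : C, colq c = (v : R → ℚ) ∧ ((v : R → ℚ) ∈ colq '' supp → z c ≠ 0) := by
    intro v
    by_cases hv : (v : R → ℚ) ∈ colq '' supp
    · obtain ⟨c, hc, hcv⟩ := hv
      exact ⟨c, hcv, fun _ => hc⟩
    · obtain ⟨c, hcv⟩ := hbt v.2
      exact ⟨c, hcv, fun h => absurd h hv⟩
  set g : R → C := fun r => (hex (e r)).choose with hg
  have hgcol : ∀ r, colq (g r) = (e r : R → ℚ) := fun r => (hex (e r)).choose_spec.1
  have hginj : Function.Injective g := by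
    intro r r' h
    have : (e r : R → ℚ) = (e r' : R → ℚ) := by rw [← hgcol, ← hgcol, h]
    exact e.injective (Subtype.ext this)
  have hrange : ∀ c, z c ≠ 0 → ∃ r, g r = c := by
    intro c hc
    have hcs : colq c ∈ colq '' supp := ⟨c, hc, rfl⟩
    have hcb : colq c ∈ bset := hsb hcs
    refine ⟨e.symm ⟨colq c, hcb⟩, ?_⟩
    have h1 : colq (g (e.symm ⟨colq c, hcb⟩)) = colq c := by
      rw [hgcol]; simp
    have h2 : z (g (e.symm ⟨colq c, hcb⟩)) ≠ 0 := by
      apply (hex (e (e.symm ⟨colq c, hcb⟩))).choose_spec.2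
      simp only [Equiv.apply_symm_apply]
      exact hcs
    exact congrArg Subtype.val (hindinj (a₁ := ⟨_, h2⟩) (a₂ := ⟨c, hc⟩) h1)
  -- independence of the columns of the submatrix
  have hcols : LinearIndependent ℚ (fun r : R => colq (g r)) := by
    have : (fun r : R => colq (g r)) = (fun v : bset => (v : R → ℚ)) ∘ e := by
      funext r; rw [hgcol]; rfl
    rw [this]
    exact hbind.comp e e.injective
  -- determinant nonzero over ℚ
  set Bz : Matrix R R ℤ := M.submatrix id g with hBz
  have hBqdet : ((M.map (Int.cast : ℤ → ℚ)).submatrix id g).det ≠ 0 := by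
    intro h0
    obtain ⟨v, hv0, hv⟩ := Matrix.exists_mulVec_eq_zero_iff.mpr h0
    apply hv0
    have := Fintype.linearIndependent_iff.mp hcols v ?_
    · funext r; exact this r
    · funext r'
      have h4 := congrFun hv r'
      simp only [Matrix.mulVec, dotProduct, Matrix.submatrix_apply, id_eq,
        Pi.zero_apply] at h4
      simp only [Finset.sum_apply, Pi.smul_apply, smul_eq_mul, Pi.zero_apply]
      rw [← h4]
      apply Finset.sum_congr rfl
      intro c _
      simp [hcolq, Matrix.map_apply, mul_comm]
  have hBq_eq : (M.map (Int.cast : ℤ → ℚ)).submatrix id g = Bz.map (Int.cast : ℤ → ℚ) := by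
    ext i j
    simp [Matrix.map_apply, Matrix.submatrix_apply, hBz]
  have hBzdet : Bz.det ≠ 0 := by
    intro h0
    apply hBqdet
    rw [hBq_eq]
    have := (Int.castRingHom ℚ).map_det Bz
    rw [RingHom.mapMatrix_apply, Int.coe_castRingHom] at this
    rw [← this, h0]
    simp
  have hdet1 : Bz.det = 1 ∨ Bz.det = -1 := hU g hginj hBzdet
  -- the real submatrix
  set Bℝ : Matrix R R ℝ := (M.map (Int.cast : ℤ → ℝ)).submatrix id g with hBR
  have hBReq : Bℝ = Bz.map (Int.cast : ℤ → ℝ) := by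
    ext i j
    simp [Matrix.map_apply, Matrix.submatrix_apply, hBz, hBR]
  set w : R → ℝ := z ∘ g with hw
  have hzero : ∀ c, (¬ ∃ r, g r = c) → z c = 0 := by
    intro c hc
    by_contra h
    exact hc (hrange c h)
  have hBw : Bℝ.mulVec w = fun r => (β r : ℝ) := by
    funext r
    have h1 := congrFun hzM r
    simp only [Matrix.mulVec, dotProduct] at h1 ⊢
    calc ∑ p, Bℝ r p * w p
        = ∑ c ∈ Finset.univ.image g, (M.map (Int.cast : ℤ → ℝ)) r c * z c := by
          rw [Finset.sum_image (fun x _ y _ h => hginj h)]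
          rfl
      _ = ∑ c, (M.map (Int.cast : ℤ → ℝ)) r c * z c := by
          apply Finset.sum_subset (Finset.subset_univ _)
          intro c _ hc
          have hz : z c = 0 := by
            apply hzero
            rintro ⟨r', hr'⟩
            exact hc (Finset.mem_image.mpr ⟨r', Finset.mem_univ _, hr'⟩)
          simp [hz]
      _ = (β r : ℝ) := h1
  -- integrality via adjugate
  have hdetR : Bℝ.det = ((Bz.det : ℤ) : ℝ) := by
    rw [hBReq]
    have := (Int.castRingHom ℝ).map_det Bz
    rw [RingHom.mapMatrix_apply, Int.coe_castRingHom] at this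
    exact this.symm
  have hadj : (Bℝ.adjugate).mulVec (fun r => (β r : ℝ)) = Bℝ.det • w := by
    rw [← hBw, Matrix.mulVec_mulVec, Matrix.adjugate_mul, Matrix.smul_mulVec,
      Matrix.one_mulVec]
  have hadjint : (Bℝ.adjugate).mulVec (fun r => (β r : ℝ))
      = fun r => ((Bz.adjugate.mulVec β r : ℤ) : ℝ) := by
    have h1 : Bℝ.adjugate = (Bz.adjugate).map (Int.cast : ℤ → ℝ) := by
      rw [hBReq]
      have := (Int.castRingHom ℝ).map_adjugate Bz
      rw [RingHom.mapMatrix_apply, RingHom.mapMatrix_apply] at this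
      simp only [Int.coe_castRingHom] at this
      exact this.symm
    rw [h1]
    exact mulVec_cast _ _
  have hwint : ∀ r, ∃ zz : ℤ, w r = (zz : ℝ) := by
    intro r
    rcases hdet1 with h | h
    · refine ⟨Bz.adjugate.mulVec β r, ?_⟩
      have h3 := congrFun hadj r
      rw [hadjint] at h3
      simp only [Pi.smul_apply, smul_eq_mul, hdetR, h, Int.cast_one, one_mul] at h3
      exact h3.symm
    · refine ⟨-(Bz.adjugate.mulVec β r), ?_⟩
      have h3 := congrFun hadj r
      rw [hadjint] at h3
      simp only [Pi.smul_apply, smul_eq_mul, hdetR, h, Int.cast_neg, Int.cast_one,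
        neg_one_mul] at h3
      push_cast
      linarith
  refine ⟨hz0, hzM, fun c => ?_⟩
  by_cases hc : z c = 0
  · exact ⟨0, by simp [hc]⟩
  · obtain ⟨r, rfl⟩ := hrange c hc
    exact hwint r

lemma dep_int_vector (M : Matrix R C ℤ) (z : C → ℝ)
    (hdep : ¬ LinearIndependent ℚ (fun i : {c : C // z c ≠ 0} => (fun r => ((M r i.1 : ℚ))))) :
    ∃ c : C → ℤ, c ≠ 0 ∧ (∀ i, z i = 0 → c i = 0) ∧ M.mulVec c = 0 := by
  classical
  obtain ⟨q0, hq0sum, i0, hi0⟩ := Fintype.not_linearIndependent_iff.mp hdep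
  set q : C → ℚ := fun c => if h : z c ≠ 0 then q0 ⟨c, h⟩ else 0 with hq
  have hqM : (M.map (Int.cast : ℤ → ℚ)).mulVec q = 0 := by
    funext r
    have h1 := congrFun hq0sum r
    simp only [Finset.sum_apply, Pi.smul_apply, smul_eq_mul, Pi.zero_apply] at h1
    simp only [Matrix.mulVec, dotProduct, Matrix.map_apply, Pi.zero_apply]
    rw [← h1]
    rw [← Finset.sum_filter_of_ne (p := fun c => z c ≠ 0)
      (f := fun c => (M r c : ℚ) * q c) (s := Finset.univ)]
    · rw [Finset.sum_subtype (p := fun c => z c ≠ 0) (Finset.univ.filter fun c => z c ≠ 0)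
        (fun c => by simp) (fun c => (M r c : ℚ) * q c)]
      apply Finset.sum_congr rfl
      intro i _
      simp only [hq, dif_pos i.2]
      ring
    · intro x _ hx hzx
      exact hx (by simp [hq, hzx])
  obtain ⟨b, hb⟩ := IsLocalization.exist_integer_multiples (nonZeroDivisors ℤ)
    Finset.univ q
  choose cc hcc using fun i : C => hb i (Finset.mem_univ i)
  have hcc' : ∀ i, ((cc i : ℤ) : ℚ) = ((b : ℤ) : ℚ) * q i := by
    intro i
    have h := hcc i
    simpa [zsmul_eq_mul, algebraMap_int_eq, Int.coe_castRingHom] using h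
  refine ⟨cc, ?_, ?_, ?_⟩
  · intro h0
    apply hi0
    have h1 := hcc' i0.1
    rw [h0] at h1
    simp only [Pi.zero_apply, Int.cast_zero] at h1
    have hbq : (b : ℤ) ≠ 0 := nonZeroDivisors.coe_ne_zero b
    have : ((b : ℤ) : ℚ) * q i0.1 = 0 := h1.symm
    rcases mul_eq_zero.mp this with h | h
    · exact absurd (by exact_mod_cast h) hbq
    · simp only [hq, dif_pos i0.2] at h
      simpa using h
  · intro i hi
    have hq0 : q i = 0 := by simp [hq, hi]
    have : ((cc i : ℤ) : ℚ) = 0 := by rw [hcc' i, hq0, mul_zero]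
    exact_mod_cast this
  · have hcast : (M.map (Int.cast : ℤ → ℚ)).mulVec (fun i => ((cc i : ℚ))) = 0 := by
      have hceq : (fun i => ((cc i : ℚ))) = fun i => ((b : ℤ) : ℚ) * q i := by
        funext i
        exact hcc' i
      rw [hceq]
      have : (fun i => ((b : ℤ) : ℚ) * q i) = ((b : ℤ) : ℚ) • q := by
        funext i; simp
      rw [this, Matrix.mulVec_smul, hqM]
      simp
    funext r
    have h2 : ((M.mulVec cc r : ℤ) : ℚ) = 0 := by
      have h3 := congrFun hcast r
      simp only [Pi.zero_apply] at h3
      rw [← h3]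
      simp only [Matrix.mulVec, dotProduct, Matrix.map_apply]
      push_cast
      rfl
    simpa using h2


lemma move (M : Matrix R C ℤ) (β : R → ℤ) (z : C → ℝ) (hz0 : ∀ i, 0 ≤ z i)
    (hzM : (M.map (Int.cast : ℤ → ℝ)).mulVec z = fun r => (β r : ℝ))
    (c : C → ℤ) (hcsupp : ∀ i, z i = 0 → c i = 0) (hMc : M.mulVec c = 0)
    (hne : (Finset.univ.filter fun i => c i < 0).Nonempty) :
    ∃ t : ℝ, 0 < t ∧
      (∀ i, 0 ≤ (z + t • fun i => ((c i : ℝ))) i) ∧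
      ((M.map (Int.cast : ℤ → ℝ)).mulVec (z + t • fun i => ((c i : ℝ)))
        = fun r => (β r : ℝ)) ∧
      ((Finset.univ.filter fun i => (z + t • fun j => ((c j : ℝ))) i ≠ 0)
        ⊂ Finset.univ.filter fun i => z i ≠ 0) := by
  classical
  set cR : C → ℝ := fun i => ((c i : ℝ)) with hcR
  set B := Finset.univ.filter fun i => c i < 0 with hB
  have hzpos : ∀ i ∈ B, 0 < z i := by
    intro i hi
    have hci : c i < 0 := (Finset.mem_filter.mp hi).2
    have : z i ≠ 0 := fun h => by simp [hcsupp i h] at hci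
    exact lt_of_le_of_ne (hz0 i) (Ne.symm this)
  have hcneg : ∀ i ∈ B, (0:ℝ) < -(c i : ℝ) := by
    intro i hi
    have hci : c i < 0 := (Finset.mem_filter.mp hi).2
    have : ((c i : ℤ) : ℝ) < 0 := by exact_mod_cast hci
    linarith
  set t := B.inf' hne (fun i => z i / (-(c i : ℝ))) with ht
  have htpos : 0 < t := by
    rw [ht, Finset.lt_inf'_iff]
    intro i hi
    exact div_pos (hzpos i hi) (hcneg i hi)
  obtain ⟨i₀, hi₀mem, hi₀⟩ := Finset.exists_mem_eq_inf' hne (fun i => z i / (-(c i : ℝ)))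
  have hle : ∀ i ∈ B, t ≤ z i / (-(c i : ℝ)) := fun i hi => Finset.inf'_le _ hi
  have hnn : ∀ i, 0 ≤ (z + t • cR) i := by
    intro i
    simp only [Pi.add_apply, Pi.smul_apply, smul_eq_mul, hcR]
    rcases lt_trichotomy (c i) 0 with h | h | h
    · have hiB : i ∈ B := Finset.mem_filter.mpr ⟨Finset.mem_univ _, h⟩
      have h1 := hle i hiB
      have h2 : (0:ℝ) < -(c i : ℝ) := hcneg i hiB
      have h3 : t * (-(c i : ℝ)) ≤ (z i / (-(c i : ℝ))) * (-(c i : ℝ)) :=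
        mul_le_mul_of_nonneg_right h1 h2.le
      rw [div_mul_cancel₀ _ (ne_of_gt h2)] at h3
      linarith
    · rw [h]
      simpa using hz0 i
    · have : (0:ℝ) ≤ (c i : ℝ) := by exact_mod_cast h.le
      have := mul_nonneg htpos.le this
      linarith [hz0 i]
  have hnewzero : (z + t • cR) i₀ = 0 := by
    simp only [Pi.add_apply, Pi.smul_apply, smul_eq_mul, hcR]
    have h2 : (0:ℝ) < -(c i₀ : ℝ) := hcneg i₀ hi₀mem
    have h4 : -(c i₀ : ℝ) ≠ 0 := ne_of_gt h2
    have h5 : t * (c i₀ : ℝ) = -(z i₀) := by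
      rw [ht, hi₀]
      have h6 : (c i₀ : ℝ) ≠ 0 := fun h => h4 (by rw [h, neg_zero])
      field_simp
    linarith [h5]
  refine ⟨t, htpos, hnn, ?_, ?_⟩
  · rw [Matrix.mulVec_add, hzM, Matrix.mulVec_smul, cast_kernel hMc]
    funext r; simp
  · rw [Finset.ssubset_iff_of_subset]
    · refine ⟨i₀, ?_, ?_⟩
      · exact Finset.mem_filter.mpr ⟨Finset.mem_univ _, (hzpos i₀ hi₀mem).ne'⟩
      · simp only [Finset.mem_filter, Finset.mem_univ, true_and, not_not]
        exact hnewzero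
    · intro i hi
      simp only [Finset.mem_filter, Finset.mem_univ, true_and] at hi ⊢
      intro hz
      apply hi
      simp only [Pi.add_apply, Pi.smul_apply, smul_eq_mul, hcR, hz, hcsupp i hz]
      simp


theorem key (M : Matrix R C ℤ)
    (hspan : Submodule.span ℚ (Set.range fun c => fun r => ((M r c : ℚ))) = ⊤)
    (hU : IsUnimodularRect M) (β : R → ℤ) :
    ∀ (N : ℕ) (z : C → ℝ), (Finset.univ.filter fun c => z c ≠ 0).card ≤ N →
      (∀ c, 0 ≤ z c) → ((M.map (Int.cast : ℤ → ℝ)).mulVec z = fun r => (β r : ℝ)) →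
      z ∈ convexHull ℝ (stdSet M β) := by
  classical
  intro N
  induction N with
  | zero =>
    intro z hcard hz0 hzM
    haveI : IsEmpty {c : C // z c ≠ 0} := by
      constructor
      intro i
      have hmem : i.1 ∈ Finset.univ.filter (fun c => z c ≠ 0) :=
        Finset.mem_filter.mpr ⟨Finset.mem_univ _, i.2⟩
      have h0 : (Finset.univ.filter fun c => z c ≠ 0) = ∅ :=
        Finset.card_eq_zero.mp (Nat.le_zero.mp hcard)
      rw [h0] at hmem
      exact absurd hmem (Finset.notMem_empty _)
    exact subset_convexHull ℝ _ (indep_case M hspan hU β z hz0 hzM linearIndependent_empty_type)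
  | succ N ih =>
    intro z hcard hz0 hzM
    by_cases hind : LinearIndependent ℚ
        (fun i : {c : C // z c ≠ 0} => (fun r => ((M r i.1 : ℚ))))
    · exact subset_convexHull ℝ _ (indep_case M hspan hU β z hz0 hzM hind)
    obtain ⟨c, hc0, hcsupp, hMc⟩ := dep_int_vector M z hind
    have hnegc : M.mulVec (-c) = 0 := by
      have : M.mulVec (-c) = -(M.mulVec c) := by
        funext r
        simp [Matrix.mulVec, dotProduct, Finset.sum_neg_distrib]
      rw [this, hMc]
      simp
    have hcsupp' : ∀ i, z i = 0 → (-c) i = 0 := fun i h => by simp [hcsupp i h]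
    have hnegcast : (fun i => (((-c) i : ℤ) : ℝ)) = -(fun i => ((c i : ℤ) : ℝ)) := by
      funext i; simp
    by_cases hBneg : (Finset.univ.filter fun i => c i < 0).Nonempty
    · obtain ⟨t₁, ht₁0, hnn₁, hM₁, hss₁⟩ := move M β z hz0 hzM c hcsupp hMc hBneg
      have hz₁ : (z + t₁ • (fun i => ((c i : ℤ) : ℝ))) ∈ convexHull ℝ (stdSet M β) :=
        ih _ (by have := Finset.card_lt_card hss₁; omega) hnn₁ hM₁
      by_cases hBpos : (Finset.univ.filter fun i => (-c) i < 0).Nonempty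
      · obtain ⟨t₂, ht₂0, hnn₂, hM₂, hss₂⟩ := move M β z hz0 hzM (-c) hcsupp' hnegc hBpos
        have hz₂ : (z + t₂ • fun i => (((-c) i : ℤ) : ℝ)) ∈ convexHull ℝ (stdSet M β) :=
          ih _ (by have := Finset.card_lt_card hss₂; omega) hnn₂ hM₂
        have hsum : (0:ℝ) < t₁ + t₂ := by linarith
        have hcomb := (convex_convexHull ℝ (stdSet M β)) hz₁ hz₂
          (div_nonneg ht₂0.le hsum.le) (div_nonneg ht₁0.le hsum.le)
          (by field_simp; ring)
        have heq : (t₂ / (t₁ + t₂)) • (z + t₁ • (fun i => ((c i : ℤ) : ℝ)))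
            + (t₁ / (t₁ + t₂)) • (z + t₂ • fun i => (((-c) i : ℤ) : ℝ)) = z := by
          rw [hnegcast]
          funext i
          simp only [Pi.add_apply, Pi.smul_apply, smul_eq_mul, Pi.neg_apply]
          field_simp
          ring
        rw [heq] at hcomb
        exact hcomb
      · -- c has no positive entries: use recession along -c from z + t₁ • (fun i => ((c i : ℤ) : ℝ))
        have hc0' : ∀ i, 0 ≤ (-c) i := by
          intro i
          by_contra h
          push_neg at h
          exact hBpos ⟨i, Finset.mem_filter.mpr ⟨Finset.mem_univ _, h⟩⟩
        have := recession hc0' hnegc ht₁0.le hz₁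
        have heq : (z + t₁ • (fun i => ((c i : ℤ) : ℝ))) + t₁ • (fun i => (((-c) i : ℤ) : ℝ)) = z := by
          rw [hnegcast]
          funext i
          simp only [Pi.add_apply, Pi.smul_apply, smul_eq_mul, Pi.neg_apply]
          ring
        rw [heq] at this
        exact this
    · -- c has no negative entries
      have hc0' : ∀ i, 0 ≤ c i := by
        intro i
        by_contra h
        push_neg at h
        exact hBneg ⟨i, Finset.mem_filter.mpr ⟨Finset.mem_univ _, h⟩⟩
      have hBpos : (Finset.univ.filter fun i => (-c) i < 0).Nonempty := by
        obtain ⟨i, hi⟩ := Function.ne_iff.mp hc0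
        refine ⟨i, Finset.mem_filter.mpr ⟨Finset.mem_univ _, ?_⟩⟩
        have h2 : 0 < c i := lt_of_le_of_ne (hc0' i) (by simpa [eq_comm] using hi)
        simp only [Pi.neg_apply]
        omega
      obtain ⟨t₂, ht₂0, hnn₂, hM₂, hss₂⟩ := move M β z hz0 hzM (-c) hcsupp' hnegc hBpos
      have hz₂ : (z + t₂ • fun i => (((-c) i : ℤ) : ℝ)) ∈ convexHull ℝ (stdSet M β) :=
        ih _ (by have := Finset.card_lt_card hss₂; omega) hnn₂ hM₂
      have := recession hc0' hMc ht₂0.le hz₂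
      have heq : (z + t₂ • fun i => (((-c) i : ℤ) : ℝ)) + t₂ • (fun i => ((c i : ℤ) : ℝ)) = z := by
        rw [hnegcast]
        funext i
        simp only [Pi.add_apply, Pi.smul_apply, smul_eq_mul, Pi.neg_apply]
        ring
      rw [heq] at this
      exact this

lemma unimod_of_std (M : Matrix R C ℤ)
    (h : ∀ β : R → ℤ, ∀ z : C → ℝ, (∀ c, 0 ≤ z c) →
      ((M.map (Int.cast : ℤ → ℝ)).mulVec z = fun r => (β r : ℝ)) →
      z ∈ convexHull ℝ (stdSet M β)) :
    IsUnimodularRect M := by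
  classical
  intro g hg hdet
  set Bz : Matrix R R ℤ := M.submatrix id g with hBz
  set Bq : Matrix R R ℚ := Bz.map (Int.cast : ℤ → ℚ) with hBq
  have hBqdet : Bq.det ≠ 0 := by
    rw [hBq, det_map_int]
    intro h0
    exact hdet (by exact_mod_cast h0)
  have hBqunit : IsUnit Bq.det := isUnit_iff_ne_zero.mpr hBqdet
  have hcol : ∀ r₀ p : R, ∃ zz : ℤ, Bq⁻¹.mulVec (Pi.single r₀ 1) p = (zz : ℚ) := by
    intro r₀ p
    set u : R → ℚ := Bq⁻¹.mulVec (Pi.single r₀ 1) with hu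
    set tt : R → ℤ := fun q => ⌈-u q⌉ with htt
    set v : R → ℚ := fun q => u q + (tt q : ℚ) with hv
    have hv0 : ∀ q, 0 ≤ v q := by
      intro q
      have h1 := Int.le_ceil (-u q)
      simp only [hv]
      have h2 : (-u q : ℚ) ≤ ((⌈-u q⌉ : ℤ) : ℚ) := h1
      have h3 : ((tt q : ℤ) : ℚ) = ((⌈-u q⌉ : ℤ) : ℚ) := by rw [htt]
      linarith
    set βz : R → ℤ := fun r => Bz.mulVec tt r + Pi.single (M := fun _ : R => ℤ) r₀ 1 r with hβz
    have hBv : Bq.mulVec v = fun r => (βz r : ℚ) := by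
      have h1 : v = u + fun q => ((tt q : ℚ)) := by funext q; simp [hv]
      rw [h1, Matrix.mulVec_add]
      have h2 : Bq.mulVec u = Pi.single r₀ 1 := by
        rw [hu, Matrix.mulVec_mulVec, Matrix.mul_nonsing_inv _ hBqunit, Matrix.one_mulVec]
      have h3 : Bq.mulVec (fun q => ((tt q : ℚ))) = fun r => ((Bz.mulVec tt r : ℤ) : ℚ) := by
        rw [hBq]; exact mulVec_cast Bz tt
      rw [h2, h3]
      funext r
      simp only [Pi.add_apply, hβz, Pi.single_apply]
      split_ifs <;> push_cast <;> ring
    set zq : C → ℚ := fun cc => ∑ p : R, if g p = cc then v p else 0 with hzq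
    have hzg : ∀ p, zq (g p) = v p := by
      intro p
      simp only [hzq]
      rw [Finset.sum_eq_single p]
      · simp
      · intro q _ hq
        have hne : g q ≠ g p := fun hgq => hq (hg hgq)
        simp [hne]
      · intro hp
        exact absurd (Finset.mem_univ p) hp
    have hzq0 : ∀ cc, 0 ≤ zq cc := by
      intro cc
      apply Finset.sum_nonneg
      intro p _
      by_cases hgp : g p = cc
      · simp [hgp, hv0 p]
      · simp [hgp]
    have hzoff : ∀ cc, (¬∃ p, g p = cc) → zq cc = 0 := by
      intro cc hcc
      apply Finset.sum_eq_zero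
      intro p _
      have hne : g p ≠ cc := fun hh => hcc ⟨p, hh⟩
      simp [hne]
    have hMzq : (M.map (Int.cast : ℤ → ℚ)).mulVec zq = fun r => (βz r : ℚ) := by
      funext r
      rw [← congrFun hBv r]
      show ∑ cc, (M.map (Int.cast : ℤ → ℚ)) r cc * zq cc = Bq.mulVec v r
      calc ∑ cc, (M.map (Int.cast : ℤ → ℚ)) r cc * zq cc
          = ∑ cc, ∑ p, if g p = cc then ((M r cc : ℚ)) * v p else 0 := by
            apply Finset.sum_congr rfl
            intro cc _
            rw [hzq, Finset.mul_sum]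
            apply Finset.sum_congr rfl
            intro p _
            rw [mul_ite, mul_zero]
            rfl
        _ = ∑ p, ∑ cc, if g p = cc then ((M r cc : ℚ)) * v p else 0 := Finset.sum_comm
        _ = ∑ p, ((M r (g p) : ℚ)) * v p := by
            apply Finset.sum_congr rfl
            intro p _
            rw [Finset.sum_ite_eq Finset.univ (g p) (fun cc => ((M r cc : ℚ)) * v p)]
            simp
        _ = Bq.mulVec v r := by
            simp [hBq, hBz, Matrix.mulVec, dotProduct, Matrix.map_apply,
              Matrix.submatrix_apply]
    set zR : C → ℝ := fun cc => ((zq cc : ℚ) : ℝ) with hzR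
    have hzR0 : ∀ cc, 0 ≤ zR cc := fun cc => by
      simp only [hzR]
      exact_mod_cast hzq0 cc
    have hMzR : (M.map (Int.cast : ℤ → ℝ)).mulVec zR = fun r => ((βz r : ℤ) : ℝ) := by
      funext r
      have h1 := congrFun hMzq r
      have h2 : ((M.map (Int.cast : ℤ → ℝ)).mulVec zR) r
          = (((((M.map (Int.cast : ℤ → ℚ)).mulVec zq) r : ℚ)) : ℝ) := by
        simp only [Matrix.mulVec, dotProduct, Matrix.map_apply, hzR]
        push_cast
        rfl
      rw [h2, h1]
      push_cast
      rfl
    have hconv := h βz zR hzR0 hMzR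
    rw [convexHull_eq] at hconv
    obtain ⟨ι, tfin, wts, pts, hw0, hw1, hmem, hcm⟩ := hconv
    rw [Finset.centerMass_eq_of_sum_1 _ _ hw1] at hcm
    have hex : ∃ i ∈ tfin, wts i ≠ 0 := by
      by_contra hc
      push_neg at hc
      rw [Finset.sum_eq_zero hc] at hw1
      exact zero_ne_one hw1
    obtain ⟨istar, histar, hwne⟩ := hex
    have hwpos : 0 < wts istar := lt_of_le_of_ne (hw0 _ histar) (Ne.symm hwne)
    have hwS : pts istar ∈ stdSet M βz := hmem _ histar
    have hoff : ∀ cc, (¬∃ p, g p = cc) → pts istar cc = 0 := by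
      intro cc hcc
      have hz0cc : zR cc = 0 := by
        simp only [hzR]
        rw [hzoff cc hcc]
        simp
      have hsum : ∑ i ∈ tfin, wts i * pts i cc = 0 := by
        have h1 := congrFun hcm cc
        rw [Finset.sum_apply] at h1
        simp only [Pi.smul_apply, smul_eq_mul] at h1
        rw [h1]
        exact hz0cc
      have h2 := (Finset.sum_eq_zero_iff_of_nonneg
        (fun i hi => mul_nonneg (hw0 i hi) ((hmem i hi).1 cc))).mp hsum istar histar
      rcases mul_eq_zero.mp h2 with h3 | h3
      · exact absurd h3 hwne
      · exact h3
    obtain ⟨hw0', hwM, hwint⟩ := hwS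
    choose wz hwz using hwint
    have hwzeq : pts istar = fun cc => ((wz cc : ℝ)) := funext hwz
    have hMwz : M.mulVec wz = βz := by
      funext r
      have h1 := congrFun hwM r
      rw [hwzeq] at h1
      rw [congrFun (mulVec_cast M wz) r] at h1
      exact_mod_cast h1
    have hwzoff : ∀ cc, (¬∃ p, g p = cc) → wz cc = 0 := by
      intro cc hcc
      have h1 := hoff cc hcc
      rw [hwzeq] at h1
      have h2 : ((wz cc : ℤ) : ℝ) = 0 := by simpa using h1
      exact_mod_cast h2
    have hBwz : Bz.mulVec (fun p => wz (g p)) = βz := by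
      funext r
      rw [← congrFun hMwz r]
      show ∑ p, Bz r p * wz (g p) = ∑ cc, M r cc * wz cc
      calc ∑ p, Bz r p * wz (g p)
          = ∑ cc ∈ Finset.univ.image g, M r cc * wz cc := by
            rw [Finset.sum_image (fun x _ y _ hxy => hg hxy)]
            apply Finset.sum_congr rfl
            intro p _
            simp [hBz, Matrix.submatrix_apply]
        _ = ∑ cc, M r cc * wz cc := by
            apply Finset.sum_subset (Finset.subset_univ _)
            intro cc _ hcc
            have hz : wz cc = 0 := by
              apply hwzoff
              rintro ⟨p, hp⟩
              exact hcc (Finset.mem_image.mpr ⟨p, Finset.mem_univ _, hp⟩)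
            simp [hz]
    have hBqwz : Bq.mulVec (fun p => ((wz (g p) : ℚ))) = fun r => ((βz r : ℤ) : ℚ) := by
      rw [hBq, mulVec_cast Bz (fun p => wz (g p))]
      funext r
      rw [congrFun hBwz r]
    have hveq : v = fun p => ((wz (g p) : ℚ)) := by
      have h1 : Bq⁻¹.mulVec (Bq.mulVec v)
          = Bq⁻¹.mulVec (Bq.mulVec (fun p => ((wz (g p) : ℚ)))) := by
        rw [hBv, hBqwz]
      rwa [Matrix.mulVec_mulVec, Matrix.nonsing_inv_mul _ hBqunit, Matrix.one_mulVec,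
        Matrix.mulVec_mulVec, Matrix.nonsing_inv_mul _ hBqunit, Matrix.one_mulVec] at h1
    refine ⟨wz (g p) - tt p, ?_⟩
    have h1 : v p = u p + (tt p : ℚ) := by simp only [hv]
    have h2 : v p = ((wz (g p) : ℚ)) := by simp only [hveq]
    push_cast
    linarith
  -- assemble integral inverse and conclude
  choose Nf hNf using hcol
  have hNinv : Bq⁻¹ = (Matrix.of fun p q => Nf q p).map (Int.cast : ℤ → ℚ) := by
    ext p q
    have h1 := hNf q p
    rw [Matrix.mulVec_single] at h1
    simp only [Pi.smul_apply, Matrix.col_apply, op_smul_eq_mul, mul_one] at h1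
    simpa [Matrix.map_apply, Matrix.of_apply] using h1
  have hmul : Bq.det * Bq⁻¹.det = 1 := by
    rw [← Matrix.det_mul, Matrix.mul_nonsing_inv _ hBqunit, Matrix.det_one]
  have hdq : Bq.det = ((Bz.det : ℤ) : ℚ) := by
    rw [hBq, det_map_int]
  have hdinv : Bq⁻¹.det = (((Matrix.of fun p q => Nf q p).det : ℤ) : ℚ) := by
    rw [hNinv, det_map_int]
  have hZ : Bz.det * (Matrix.of fun p q => Nf q p).det = 1 := by
    have h1 : (((Bz.det * (Matrix.of fun p q => Nf q p).det : ℤ)) : ℚ) = 1 := by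
      rw [Int.cast_mul]
      rw [← hdq, ← hdinv]
      exact hmul
    exact_mod_cast h1
  have := Int.isUnit_iff.mp (IsUnit.of_mul_eq_one _ hZ)
  rw [hBz] at this
  exact this

lemma span_columns_of_rank (M : Matrix R C ℤ)
    (h : (M.map (Int.cast : ℤ → ℚ)).rank = Fintype.card R) :
    Submodule.span ℚ (Set.range fun c => fun r => ((M r c : ℚ))) = ⊤ := by
  have h1 : LinearMap.range (M.map (Int.cast : ℤ → ℚ)).mulVecLin = ⊤ := by
    apply Submodule.eq_top_of_finrank_eq
    rw [show Module.finrank ℚ (R → ℚ) = Fintype.card R from Module.finrank_pi ℚ]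
    exact h
  have h2 := (M.map (Int.cast : ℤ → ℚ)).range_mulVecLin
  rw [h2] at h1
  exact h1

end HK

section Block

variable {m n k : ℕ} (A : Matrix (Fin m) (Fin n) ℤ) (W : Matrix (Fin k) (Fin n) ℤ)

lemma block_map_cast :
    ((Matrix.fromBlocks A (1 : Matrix (Fin m) (Fin m) ℤ) W
      (0 : Matrix (Fin k) (Fin m) ℤ)).map (Int.cast : ℤ → ℝ))
    = Matrix.fromBlocks (A.map (Int.cast : ℤ → ℝ)) 1 (W.map (Int.cast : ℤ → ℝ)) 0 := by
  rw [Matrix.fromBlocks_map, Matrix.map_one _ Int.cast_zero Int.cast_one,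
    Matrix.map_zero _ Int.cast_zero]

lemma block_mulVec_decomp (z : Fin n ⊕ Fin m → ℝ) :
    ((Matrix.fromBlocks A (1 : Matrix (Fin m) (Fin m) ℤ) W
      (0 : Matrix (Fin k) (Fin m) ℤ)).map (Int.cast : ℤ → ℝ)).mulVec z
    = Sum.elim ((A.map (Int.cast : ℤ → ℝ)).mulVec (z ∘ Sum.inl) + (z ∘ Sum.inr))
        ((W.map (Int.cast : ℤ → ℝ)).mulVec (z ∘ Sum.inl)) := by
  conv_lhs => rw [← Sum.elim_comp_inl_inr z]
  rw [block_map_cast, Matrix.fromBlocks_mulVec]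
  simp [Matrix.one_mulVec, Matrix.zero_mulVec]

end Block


/-- **Unimodularity of `[[A, I],[W, 0]]` characterizes integrality of the polyhedra
`{x : A x ≤ b, W x = d, x ≥ 0}` for all integral `b, d`.** -/
theorem block_unimodular_iff_integral_polyhedra
    {m n k : ℕ} (A : Matrix (Fin m) (Fin n) ℤ) (W : Matrix (Fin k) (Fin n) ℤ)
    (hrank : ((Matrix.fromBlocks A (1 : Matrix (Fin m) (Fin m) ℤ) W
        (0 : Matrix (Fin k) (Fin m) ℤ)).map (Int.cast : ℤ → ℚ)).rank = m + k) :
    IsUnimodularRect (Matrix.fromBlocks A (1 : Matrix (Fin m) (Fin m) ℤ) W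
        (0 : Matrix (Fin k) (Fin m) ℤ))
    ↔ ∀ (b : Fin m → ℤ) (d : Fin k → ℤ),
        {x : Fin n → ℝ |
            (∀ i, (A.map (Int.cast : ℤ → ℝ)).mulVec x i ≤ (b i : ℝ)) ∧
            (∀ j, (W.map (Int.cast : ℤ → ℝ)).mulVec x j = (d j : ℝ)) ∧
            (∀ i, 0 ≤ x i)}
          = convexHull ℝ {x : Fin n → ℝ |
            ((∀ i, (A.map (Int.cast : ℤ → ℝ)).mulVec x i ≤ (b i : ℝ)) ∧
            (∀ j, (W.map (Int.cast : ℤ → ℝ)).mulVec x j = (d j : ℝ)) ∧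
            (∀ i, 0 ≤ x i)) ∧ IsIntegerPoint x} := by
  classical
  have hspan : Submodule.span ℚ (Set.range fun c => fun r =>
      (((Matrix.fromBlocks A (1 : Matrix (Fin m) (Fin m) ℤ) W
        (0 : Matrix (Fin k) (Fin m) ℤ)) r c : ℚ))) = ⊤ := by
    apply HK.span_columns_of_rank
    simpa using hrank
  constructor
  · intro hU b d
    apply Set.Subset.antisymm
    · -- the polyhedron is contained in the hull of its integer points
      intro x hx
      obtain ⟨hxb, hxd, hx0⟩ := hx
      set z : (Fin n ⊕ Fin m) → ℝ :=
        Sum.elim x (fun i => (b i : ℝ) - (A.map (Int.cast : ℤ → ℝ)).mulVec x i) with hzdef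
      have hz0 : ∀ c, 0 ≤ z c := by
        rintro (i | i)
        · exact hx0 i
        · simp only [hzdef, Sum.elim_inr]
          linarith [hxb i]
      have hzM : ((Matrix.fromBlocks A (1 : Matrix (Fin m) (Fin m) ℤ) W
          (0 : Matrix (Fin k) (Fin m) ℤ)).map (Int.cast : ℤ → ℝ)).mulVec z
          = fun r => ((Sum.elim b d r : ℤ) : ℝ) := by
        rw [block_mulVec_decomp]
        funext r
        rcases r with i | j
        · simp only [Sum.elim_inl, Pi.add_apply, hzdef, Sum.elim_comp_inl,
            Function.comp_apply, Sum.elim_inr]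
          ring
        · simp only [Sum.elim_inr, hzdef, Sum.elim_comp_inl]
          exact hxd j
      have hkey := HK.key (Matrix.fromBlocks A 1 W 0) hspan hU (Sum.elim b d)
        (Finset.univ.filter fun c => z c ≠ 0).card z le_rfl hz0 hzM
      have hmemx : x ∈ (LinearMap.funLeft ℝ ℝ (Sum.inl : Fin n → Fin n ⊕ Fin m)) ''
          convexHull ℝ (HK.stdSet (Matrix.fromBlocks A 1 W 0) (Sum.elim b d)) :=
        ⟨z, hkey, rfl⟩
      rw [(LinearMap.funLeft ℝ ℝ (Sum.inl : Fin n → Fin n ⊕ Fin m)).image_convexHull]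
        at hmemx
      refine convexHull_mono ?_ hmemx
      rintro _ ⟨z', hz', rfl⟩
      obtain ⟨h0', hM', hint'⟩ := hz'
      rw [block_mulVec_decomp] at hM'
      refine ⟨⟨?_, ?_, ?_⟩, ?_⟩
      · intro i
        have h1 := congrFun hM' (Sum.inl i)
        simp only [Sum.elim_inl, Pi.add_apply, Function.comp_apply] at h1
        have h2 := h0' (Sum.inr i)
        have h3 : (LinearMap.funLeft ℝ ℝ (Sum.inl : Fin n → Fin n ⊕ Fin m)) z'
            = z' ∘ Sum.inl := rfl
        rw [h3]
        linarith [h1, h2]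
      · intro j
        have h1 := congrFun hM' (Sum.inr j)
        exact (by simpa using h1 : (W.map (Int.cast : ℤ → ℝ)).mulVec (z' ∘ Sum.inl) j = (d j : ℝ))
      · intro i
        exact h0' (Sum.inl i)
      · intro i
        exact hint' (Sum.inl i)
    · -- the hull of the integer points is contained in the polyhedron
      apply convexHull_min
      · intro x hx
        exact hx.1
      · intro x hx y hy a a' ha ha' haa
        obtain ⟨hx1, hx2, hx3⟩ := hx
        obtain ⟨hy1, hy2, hy3⟩ := hy
        have hAsum : ∀ (B : Matrix (Fin k ⊕ Fin m) (Fin n) ℤ), True := fun _ => trivial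
        refine ⟨?_, ?_, ?_⟩
        · intro i
          have h1 : (A.map (Int.cast : ℤ → ℝ)).mulVec (a • x + a' • y) i
              = a * (A.map (Int.cast : ℤ → ℝ)).mulVec x i
                + a' * (A.map (Int.cast : ℤ → ℝ)).mulVec y i := by
            rw [Matrix.mulVec_add, Matrix.mulVec_smul, Matrix.mulVec_smul]
            simp
          rw [h1]
          have hsum : a * ((b i : ℤ) : ℝ) + a' * ((b i : ℤ) : ℝ) = ((b i : ℤ) : ℝ) := by
            linear_combination (((b i : ℤ) : ℝ)) * haa
          linarith [mul_le_mul_of_nonneg_left (hx1 i) ha,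
            mul_le_mul_of_nonneg_left (hy1 i) ha']
        · intro j
          have h1 : (W.map (Int.cast : ℤ → ℝ)).mulVec (a • x + a' • y) j
              = a * (W.map (Int.cast : ℤ → ℝ)).mulVec x j
                + a' * (W.map (Int.cast : ℤ → ℝ)).mulVec y j := by
            rw [Matrix.mulVec_add, Matrix.mulVec_smul, Matrix.mulVec_smul]
            simp
          rw [h1, hx2 j, hy2 j]
          linear_combination ((d j : ℝ)) * haa
        · intro i
          have := add_nonneg (mul_nonneg ha (hx3 i)) (mul_nonneg ha' (hy3 i))
          simpa using this
  · intro hP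
    apply HK.unimod_of_std
    intro β z hz0 hzM
    set b : Fin m → ℤ := fun i => β (Sum.inl i) with hb
    set d : Fin k → ℤ := fun j => β (Sum.inr j) with hd
    have hβ : β = Sum.elim b d := by
      funext r
      rcases r with i | j <;> rfl
    have hM' := hzM
    rw [block_mulVec_decomp] at hM'
    have hxb : ∀ i, (A.map (Int.cast : ℤ → ℝ)).mulVec (z ∘ Sum.inl) i ≤ (b i : ℝ) := by
      intro i
      have h1 := congrFun hM' (Sum.inl i)
      simp only [Sum.elim_inl, Pi.add_apply, Function.comp_apply] at h1
      have h2 := hz0 (Sum.inr i)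
      have h3 : ((β (Sum.inl i) : ℤ) : ℝ) = (b i : ℝ) := by rw [hb]
      rw [h3] at h1
      linarith [h1, h2]
    have hxd : ∀ j, (W.map (Int.cast : ℤ → ℝ)).mulVec (z ∘ Sum.inl) j = (d j : ℝ) := by
      intro j
      have h1 := congrFun hM' (Sum.inr j)
      simp only [Sum.elim_inr] at h1
      rw [h1, hd]
    have hxP : (z ∘ Sum.inl) ∈ {x : Fin n → ℝ |
        (∀ i, (A.map (Int.cast : ℤ → ℝ)).mulVec x i ≤ (b i : ℝ)) ∧
        (∀ j, (W.map (Int.cast : ℤ → ℝ)).mulVec x j = (d j : ℝ)) ∧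
        (∀ i, 0 ≤ x i)} := ⟨hxb, hxd, fun i => hz0 (Sum.inl i)⟩
    rw [hP b d] at hxP
    -- affine lifting map
    set Llin : (Fin n → ℝ) →ₗ[ℝ] (Fin n ⊕ Fin m → ℝ) :=
      { toFun := fun x' => Sum.elim x'
          (fun i => -((A.map (Int.cast : ℤ → ℝ)).mulVec x' i)),
        map_add' := by
          intro p q
          funext r
          rcases r with i | i <;> simp [Matrix.mulVec_add] <;> ring,
        map_smul' := by
          intro a p
          funext r
          rcases r with i | i <;> simp [Matrix.mulVec_smul] <;> ring } with hLlin
    set L : (Fin n → ℝ) →ᵃ[ℝ] (Fin n ⊕ Fin m → ℝ) :=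
      { toFun := fun x' => Sum.elim x'
          (fun i => (b i : ℝ) - (A.map (Int.cast : ℤ → ℝ)).mulVec x' i),
        linear := Llin,
        map_vadd' := by
          intro p v
          funext r
          rcases r with i | i <;>
            simp [hLlin, Matrix.mulVec_add, vadd_eq_add] <;> ring } with hL
    have hzL : z = L (z ∘ Sum.inl) := by
      funext r
      rcases r with i | i
      · rfl
      · show z (Sum.inr i) = (b i : ℝ) - (A.map (Int.cast : ℤ → ℝ)).mulVec (z ∘ Sum.inl) i
        have h1 := congrFun hM' (Sum.inl i)
        simp only [Sum.elim_inl, Pi.add_apply, Function.comp_apply] at h1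
        have h3 : ((β (Sum.inl i) : ℤ) : ℝ) = (b i : ℝ) := by rw [hb]
        rw [h3] at h1
        linarith [h1]
    have hmem : z ∈ L '' (convexHull ℝ {x : Fin n → ℝ |
        ((∀ i, (A.map (Int.cast : ℤ → ℝ)).mulVec x i ≤ (b i : ℝ)) ∧
        (∀ j, (W.map (Int.cast : ℤ → ℝ)).mulVec x j = (d j : ℝ)) ∧
        (∀ i, 0 ≤ x i)) ∧ IsIntegerPoint x}) := ⟨z ∘ Sum.inl, hxP, hzL.symm⟩
    rw [L.image_convexHull] at hmem
    refine convexHull_mono ?_ hmem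
    rintro _ ⟨w, hw, rfl⟩
    obtain ⟨⟨hw1, hw2, hw3⟩, hwint⟩ := hw
    have hLw : L w = Sum.elim w
        (fun i => (b i : ℝ) - (A.map (Int.cast : ℤ → ℝ)).mulVec w i) := rfl
    refine ⟨?_, ?_, ?_⟩
    · rintro (i | i)
      · rw [hLw]
        exact hw3 i
      · rw [hLw]
        simp only [Sum.elim_inr]
        linarith [hw1 i]
    · rw [hLw, block_mulVec_decomp]
      funext r
      rcases r with i | j
      · simp only [Sum.elim_inl, Pi.add_apply, Sum.elim_comp_inl, Function.comp_apply,
          Sum.elim_inr]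
        rw [hβ]
        simp only [Sum.elim_inl]
        ring
      · simp only [Sum.elim_inr, Sum.elim_comp_inl]
        rw [hβ]
        simp only [Sum.elim_inr]
        exact hw2 j
    · -- integrality of the lifted point
      choose wz hwz using hwint
      rintro (i | i)
      · exact ⟨wz i, hwz i⟩
      · refine ⟨b i - A.mulVec wz i, ?_⟩
        rw [hLw]
        simp only [Sum.elim_inr]
        have h1 : (A.map (Int.cast : ℤ → ℝ)).mulVec w i = ((A.mulVec wz i : ℤ) : ℝ) := by
          have h2 : w = fun j => ((wz j : ℝ)) := funext hwz
          rw [h2]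
          exact congrFun (HK.mulVec_cast A wz) i
        rw [h1]
        push_cast
        ring
end

section
/- Let A ∈ ℤ^{m×n} and W ∈ ℤ^{k×n}, and suppose the (m+k)×(n+m) block matrix M = [[A, I_m],[W, 0_{k×m}]] has rank m+k and is unimodular. Then for every b ∈ ℤ^m, the set conv({x ∈ ℝ^n : Ax ≤ b, Wx ∈ ℤ^k, x ≥ 0}) is an integral polyhedron. -/
open Matrix Set

namespace BlockUnimodAux

/-- Linear independence of rows is equivalent to nonvanishing of the Gram determinant. -/
lemma gram_det_ne_zero_iff {F : Type*} [Field F] [LinearOrder F] [IsStrictOrderedRing F] {k n : ℕ}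
    (M : Matrix (Fin k) (Fin n) F) :
    (M * Mᵀ).det ≠ 0 ↔ LinearIndependent F (fun i => M i) := by
  have key : ∀ v : Fin k → F, Matrix.vecMul v (M * Mᵀ) = 0 → Matrix.vecMul v M = 0 := by
    intro v hv
    set w := Matrix.vecMul v M with hw
    have h0 : Matrix.vecMul w Mᵀ = 0 := by rw [hw, Matrix.vecMul_vecMul, hv]
    have h1 : w ⬝ᵥ w = 0 := by
      calc w ⬝ᵥ w = w ⬝ᵥ (Mᵀ *ᵥ v) := by rw [Matrix.mulVec_transpose]
        _ = (Matrix.vecMul w Mᵀ) ⬝ᵥ v := (dotProduct_mulVec _ _ _)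
        _ = 0 := by rw [h0, zero_dotProduct]
    funext c
    have hnn : ∀ c' ∈ Finset.univ, (0:F) ≤ w c' * w c' := fun c' _ => mul_self_nonneg _
    exact mul_self_eq_zero.mp ((Finset.sum_eq_zero_iff_of_nonneg hnn).mp h1 c (Finset.mem_univ c))
  have vecMul_eq : ∀ v : Fin k → F, Matrix.vecMul v M = 0 ↔ (∑ i, v i • M i) = 0 := by
    intro v
    constructor <;> intro h <;> funext c <;> have := congrFun h c <;>
      simpa [Matrix.vecMul, dotProduct, Finset.sum_apply, Pi.smul_apply,
        smul_eq_mul] using this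
  constructor
  · intro hdet
    rw [Fintype.linearIndependent_iff]
    intro g hg i
    have hvm : Matrix.vecMul g M = 0 := (vecMul_eq g).mpr hg
    have h2 : Matrix.vecMul g (M * Mᵀ) = 0 := by
      rw [← Matrix.vecMul_vecMul, hvm, Matrix.zero_vecMul]
    by_contra hgi
    exact hdet (Matrix.exists_vecMul_eq_zero_iff.mp ⟨g, fun h0 => hgi (congrFun h0 i ▸ rfl), h2⟩)
  · intro hli hdet
    obtain ⟨v, hv0, hv⟩ := Matrix.exists_vecMul_eq_zero_iff.mpr hdet
    rw [Fintype.linearIndependent_iff] at hli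
    have := hli v ((vecMul_eq v).mp (key v hv))
    exact hv0 (funext fun i => this i)

/-- A square matrix over a field with linearly independent rows has nonzero determinant. -/
lemma det_ne_zero_of_rows {F : Type*} [Field F] {n : ℕ} {B : Matrix (Fin n) (Fin n) F}
    (h : LinearIndependent F (fun i => B i)) : B.det ≠ 0 := by
  intro hdet
  obtain ⟨v, hv0, hv⟩ := Matrix.exists_vecMul_eq_zero_iff.mpr hdet
  rw [Fintype.linearIndependent_iff] at h
  refine hv0 (funext fun i => h v ?_ i)
  funext c
  have := congrFun hv c
  simpa [Matrix.vecMul, dotProduct, Finset.sum_apply, Pi.smul_apply,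
    smul_eq_mul] using this

/-- If a finite family does not span the whole of `ℝⁿ`, there is a nonzero vector orthogonal
to all of them. -/
lemma exists_perp_of_span_ne_top {n : ℕ} {ι : Type*} [Fintype ι] (v : ι → (Fin n → ℝ))
    (h : Submodule.span ℝ (Set.range v) ≠ ⊤) :
    ∃ d : Fin n → ℝ, d ≠ 0 ∧ ∀ i, v i ⬝ᵥ d = 0 := by
  classical
  set M : Matrix ι (Fin n) ℝ := Matrix.of v with hM
  have hrank : M.rank < n := by
    have h1 : M.rank = Module.finrank ℝ (Submodule.span ℝ (Set.range v)) := by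
      rw [Matrix.rank_eq_finrank_span_row]; rfl
    have h2 : Submodule.span ℝ (Set.range v) < ⊤ := lt_top_iff_ne_top.mpr h
    have := Submodule.finrank_lt (K := ℝ) (V := Fin n → ℝ) h2.ne
    simpa [h1, Module.finrank_fintype_fun_eq_card] using this
  have hker : LinearMap.ker M.mulVecLin ≠ ⊥ := by
    intro hbot
    have := LinearMap.finrank_range_add_finrank_ker M.mulVecLin
    rw [hbot, finrank_bot, add_zero] at this
    rw [show Module.finrank ℝ (Fin n → ℝ) = n from by
      simp [Module.finrank_fintype_fun_eq_card]] at this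
    exact absurd this (by rw [show Module.finrank ℝ ↥(LinearMap.range M.mulVecLin) = M.rank from rfl]; omega)
  obtain ⟨d, hd, hd0⟩ := Submodule.exists_mem_ne_zero_of_ne_bot hker
  refine ⟨d, hd0, fun i => ?_⟩
  have : M.mulVec d = 0 := hd
  exact congrFun this i

lemma natAbs_det_submatrix {ι κ : Type*} [Fintype ι] [DecidableEq ι] [Fintype κ] [DecidableEq κ]
    (X : Matrix κ κ ℤ) (e f : ι ≃ κ) :
    ((X.submatrix e f).det).natAbs = X.det.natAbs := by
  have := Matrix.abs_det_submatrix_equiv_equiv e f X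
  rwa [Int.abs_eq_natAbs, Int.abs_eq_natAbs, Nat.cast_inj] at this

/-- If `B` is an integer matrix with `det = ±1` and `B z = c` over `ℝ` with `c` integral,
then `z` is integral. -/
lemma integral_solution {n : ℕ} (B : Matrix (Fin n) (Fin n) ℤ)
    (hdet : B.det = 1 ∨ B.det = -1) (z : Fin n → ℝ) (c : Fin n → ℤ)
    (h : (B.map (Int.cast : ℤ → ℝ)).mulVec z = fun i => (c i : ℝ)) :
    ∀ t, ∃ zt : ℤ, z t = (zt : ℝ) := by
  set BR := B.map (Int.cast : ℤ → ℝ) with hBR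
  have hadj : BR.adjugate = (B.adjugate).map (Int.cast : ℤ → ℝ) :=
    ((Int.castRingHom ℝ).map_adjugate B).symm
  have hmain : BR.det • z = BR.adjugate *ᵥ (fun i => (c i : ℝ)) := by
    rw [← h, Matrix.mulVec_mulVec, Matrix.adjugate_mul, Matrix.smul_mulVec,
      Matrix.one_mulVec]
  have hdetR : BR.det = ((B.det : ℤ) : ℝ) := ((Int.castRingHom ℝ).map_det B).symm
  have hint : BR.adjugate *ᵥ (fun i => (c i : ℝ)) = fun t => ((B.adjugate *ᵥ c) t : ℝ) := by
    funext t
    rw [hadj]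
    simp [Matrix.mulVec, dotProduct, Matrix.map_apply]
  intro t
  have := congrFun hmain t
  rw [hint] at this
  simp only [Pi.smul_apply, smul_eq_mul, hdetR] at this
  rcases hdet with hd | hd
  · exact ⟨(B.adjugate *ᵥ c) t, by rw [hd] at this; simpa using this⟩
  · refine ⟨-((B.adjugate *ᵥ c) t), ?_⟩
    rw [hd] at this
    push_cast at this ⊢
    linarith

variable {m n k : ℕ}

def Rowℤ (A : Matrix (Fin m) (Fin n) ℤ) (W : Matrix (Fin k) (Fin n) ℤ) :
    (Fin m ⊕ (Fin k ⊕ Fin n)) → Fin n → ℤ :=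
  Sum.elim (fun i => A i) (Sum.elim (fun j => W j) (fun t => Pi.single t 1))

theorem det_pm_one (A : Matrix (Fin m) (Fin n) ℤ) (W : Matrix (Fin k) (Fin n) ℤ)
    (hunimod : IsUnimodularRect (Matrix.fromBlocks A (1 : Matrix (Fin m) (Fin m) ℤ) W
        (0 : Matrix (Fin k) (Fin m) ℤ)))
    (f : Fin n → Fin m ⊕ (Fin k ⊕ Fin n)) (hinj : Function.Injective f)
    (hcov : ∀ j : Fin k, ∃ i, f i = Sum.inr (Sum.inl j))
    (hdet : (Matrix.of fun i => Rowℤ A W (f i)).det ≠ 0) :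
    (Matrix.of fun i => Rowℤ A W (f i)).det = 1 ∨
      (Matrix.of fun i => Rowℤ A W (f i)).det = -1 := by
  classical
  set M := Matrix.fromBlocks A (1 : Matrix (Fin m) (Fin m) ℤ) W
      (0 : Matrix (Fin k) (Fin m) ℤ) with hM
  set Bm := (Matrix.of fun i => Rowℤ A W (f i)) with hBm
  set pJ : Fin n → Prop := fun i => ∃ t, f i = Sum.inr (Sum.inr t) with hpJ
  set qC : Fin n → Prop := fun t => ∃ i, f i = Sum.inr (Sum.inr t) with hqC
  set pI : Fin m → Prop := fun a => ∃ i, f i = Sum.inl a with hpI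
  -- the bijection between unit rows used and the corresponding coordinates
  have τdef : ∀ i : {i // pJ i}, qC i.2.choose := fun i => ⟨i.1, i.2.choose_spec⟩
  set τ : {i // pJ i} → {t // qC t} := fun i => ⟨i.2.choose, τdef i⟩ with hτ
  have τspec : ∀ i : {i // pJ i}, f i.1 = Sum.inr (Sum.inr (τ i).1) := fun i => i.2.choose_spec
  have τbij : Function.Bijective τ := by
    constructor
    · intro i i' h
      apply Subtype.ext; apply hinj
      rw [τspec i, τspec i', h]
    · rintro ⟨t, i0, hi0⟩
      refine ⟨⟨i0, ⟨t, hi0⟩⟩, Subtype.ext ?_⟩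
      have h2 := (τspec ⟨i0, ⟨t, hi0⟩⟩).symm.trans hi0
      exact Sum.inr_injective (Sum.inr_injective h2)
  set τe : {i // pJ i} ≃ {t // qC t} := Equiv.ofBijective τ τbij with hτe
  have hcard : Fintype.card {i // ¬ pJ i} = Fintype.card {t // ¬ qC t} := by
    have h1 := Fintype.card_eq.mpr ⟨τe⟩
    rw [Fintype.card_subtype_compl, Fintype.card_subtype_compl, h1]
  set χ : {i // ¬ pJ i} ≃ {t // ¬ qC t} := Fintype.equivOfCardEq hcard with hχ
  set eP : ({i // pJ i} ⊕ {i // ¬ pJ i}) ≃ Fin n := Equiv.sumCompl pJ with heP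
  set eQ : ({i // pJ i} ⊕ {i // ¬ pJ i}) ≃ Fin n :=
    (Equiv.sumCongr τe χ).trans (Equiv.sumCompl qC) with heQ
  set B' := Bm.submatrix eP eQ with hB'
  have hnat1 : B'.det.natAbs = Bm.det.natAbs := natAbs_det_submatrix Bm eP eQ
  set C := B'.toBlocks₂₂ with hC
  have hCval : ∀ (i : {i // ¬ pJ i}) (j : {i // ¬ pJ i}), C i j = Rowℤ A W (f i.1) (χ j).1 := by
    intro i j; rfl
  have hB'det : B'.det = C.det := by
    rw [← Matrix.fromBlocks_toBlocks B']
    have h11 : B'.toBlocks₁₁ = (1 : Matrix {i // pJ i} {i // pJ i} ℤ) := by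
      ext i i'
      show Bm (eP (Sum.inl i)) (eQ (Sum.inl i')) = _
      have h0 : Bm (eP (Sum.inl i)) (eQ (Sum.inl i')) = Rowℤ A W (f i.1) (τ i').1 := rfl
      rw [h0, τspec i]
      simp only [Rowℤ, Sum.elim_inr, Pi.single_apply, Matrix.one_apply]
      by_cases h : i = i'
      · simp [h]
      · have h2 : (τ i').1 ≠ (τ i).1 := by
          intro he
          exact h (τbij.1 (Subtype.ext he)).symm
        simp [h, h2]
    have h12 : B'.toBlocks₁₂ = 0 := by
      ext i j
      show Bm (eP (Sum.inl i)) (eQ (Sum.inr j)) = _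
      have h0 : Bm (eP (Sum.inl i)) (eQ (Sum.inr j)) = Rowℤ A W (f i.1) (χ j).1 := rfl
      rw [h0, τspec i]
      simp only [Rowℤ, Sum.elim_inr, Pi.single_apply]
      have h2 : (χ j).1 ≠ (τ i).1 := by
        intro he
        exact (χ j).2 (he ▸ (τ i).2)
      simp [h2]
    rw [h11, h12, Matrix.det_fromBlocks_zero₁₂, Matrix.det_one, one_mul]
  have hnatBC : Bm.det.natAbs = C.det.natAbs := by rw [← hnat1, hB'det]
  -- now relate C to a maximal square submatrix of M
  have hcase : ∀ i : {i // ¬ pJ i},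
      (∃ a, f i.1 = Sum.inl a) ∨ (∃ j, f i.1 = Sum.inr (Sum.inl j)) := by
    intro i
    rcases hfi : f i.1 with a | jt
    · exact Or.inl ⟨a, rfl⟩
    · rcases jt with j | t
      · exact Or.inr ⟨j, rfl⟩
      · exact absurd ⟨t, hfi⟩ i.2
  set ρ : {i // ¬ pJ i} → Fin m ⊕ Fin k := fun i =>
    if h : ∃ a, f i.1 = Sum.inl a then Sum.inl h.choose
    else Sum.inr ((hcase i).resolve_left h).choose with hρdef
  have hρ : ∀ i, f i.1 = Sum.map id Sum.inl (ρ i) := by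
    intro i
    by_cases h : ∃ a, f i.1 = Sum.inl a
    · rw [hρdef]; simp only [h, dif_pos]
      simpa [Sum.map] using h.choose_spec
    · rw [hρdef]; simp only [h, dif_neg, not_false_iff]
      simpa [Sum.map] using ((hcase i).resolve_left h).choose_spec
  have hsummap_inj : Function.Injective (Sum.map (id : Fin m → Fin m) (Sum.inl : Fin k → Fin k ⊕ Fin n)) :=
    Sum.map_injective.mpr ⟨Function.injective_id, Sum.inl_injective⟩
  have ρinj : Function.Injective ρ := by
    intro i i' h
    apply Subtype.ext; apply hinj
    rw [hρ i, hρ i', h]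
  set ℛ : ({a // ¬ pI a} ⊕ {i // ¬ pJ i}) → Fin m ⊕ Fin k :=
    Sum.elim (fun a => Sum.inl a.1) ρ with hℛ
  have ℛbij : Function.Bijective ℛ := by
    constructor
    · rintro (a | i) (a' | i') h
      · simp only [hℛ, Sum.elim_inl] at h
        exact congrArg Sum.inl (Subtype.ext (Sum.inl_injective h))
      · exfalso
        simp only [hℛ, Sum.elim_inl, Sum.elim_inr] at h
        have := hρ i'
        rw [← h] at this
        exact a.2 ⟨i'.1, this⟩
      · exfalso
        simp only [hℛ, Sum.elim_inl, Sum.elim_inr] at h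
        have := hρ i
        rw [h] at this
        exact a'.2 ⟨i.1, this⟩
      · simp only [hℛ, Sum.elim_inr] at h
        exact congrArg Sum.inr (ρinj h)
    · rintro (a | j)
      · by_cases h : pI a
        · obtain ⟨i0, hi0⟩ := h
          have hnpJ : ¬ pJ i0 := by rintro ⟨t, ht⟩; rw [hi0] at ht; exact Sum.inl_ne_inr ht
          refine ⟨Sum.inr ⟨i0, hnpJ⟩, ?_⟩
          simp only [hℛ, Sum.elim_inr]
          have := hρ ⟨i0, hnpJ⟩
          rw [hi0] at this
          exact hsummap_inj (by rw [← this]; rfl)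
        · exact ⟨Sum.inl ⟨a, h⟩, rfl⟩
      · obtain ⟨i0, hi0⟩ := hcov j
        have hnpJ : ¬ pJ i0 := by rintro ⟨t, ht⟩; rw [hi0] at ht; exact Sum.inl_ne_inr (Sum.inr_injective ht)
        refine ⟨Sum.inr ⟨i0, hnpJ⟩, ?_⟩
        simp only [hℛ, Sum.elim_inr]
        have := hρ ⟨i0, hnpJ⟩
        rw [hi0] at this
        exact hsummap_inj (by rw [← this]; rfl)
  set ℛe : ({a // ¬ pI a} ⊕ {i // ¬ pJ i}) ≃ (Fin m ⊕ Fin k) := Equiv.ofBijective ℛ ℛbij with hℛe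
  set γ : ({a // ¬ pI a} ⊕ {i // ¬ pJ i}) → (Fin n ⊕ Fin m) :=
    Sum.elim (fun a => Sum.inr a.1) (fun i => Sum.inl (χ i).1) with hγ
  have γinj : Function.Injective γ := by
    rintro (a | i) (a' | i') h
    · simp only [hγ, Sum.elim_inl] at h
      exact congrArg Sum.inl (Subtype.ext (Sum.inr_injective h))
    · exact absurd h (by simp [hγ])
    · exact absurd h (by simp [hγ])
    · simp only [hγ, Sum.elim_inr] at h
      exact congrArg Sum.inr (χ.injective (Subtype.ext (Sum.inl_injective h)))
  set g : (Fin m ⊕ Fin k) → (Fin n ⊕ Fin m) := γ ∘ ℛe.symm with hg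
  have ginj : Function.Injective g := γinj.comp ℛe.symm.injective
  set X := M.submatrix id g with hX
  have hNX : X.submatrix ℛe ℛe = M.submatrix ℛ γ := by
    ext x y
    simp only [hX, Matrix.submatrix_apply, id_eq, hg, Function.comp_apply, Equiv.symm_apply_apply]
    rfl
  set N := M.submatrix ℛ γ with hN
  have hXdet : X.det = N.det := by rw [← hNX, Matrix.det_submatrix_equiv_self]
  have hNdet : N.det = C.det := by
    rw [← Matrix.fromBlocks_toBlocks N]
    have h11 : N.toBlocks₁₁ = (1 : Matrix {a // ¬ pI a} {a // ¬ pI a} ℤ) := by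
      ext a a'
      show M (ℛ (Sum.inl a)) (γ (Sum.inl a')) = _
      simp only [hℛ, hγ, Sum.elim_inl, hM]
      rw [Matrix.fromBlocks_apply₁₂, Matrix.one_apply, Matrix.one_apply]
      by_cases h : a = a'
      · simp [h]
      · have h2 : a.1 ≠ a'.1 := fun hh => h (Subtype.ext hh)
        simp [h, h2]
    have h21 : N.toBlocks₂₁ = 0 := by
      ext i a'
      show M (ℛ (Sum.inr i)) (γ (Sum.inl a')) = _
      simp only [hℛ, hγ, Sum.elim_inl, Sum.elim_inr, hM]
      rcases hρi : ρ i with a₁ | j₁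
      · rw [Matrix.fromBlocks_apply₁₂, Matrix.one_apply]
        have ha₁ : pI a₁ := ⟨i.1, by rw [hρ i, hρi]; rfl⟩
        have : a₁ ≠ a'.1 := fun he => a'.2 (he ▸ ha₁)
        simp [this]
      · rw [Matrix.fromBlocks_apply₂₂]; rfl
    have h22 : N.toBlocks₂₂ = C := by
      ext i j
      show M (ℛ (Sum.inr i)) (γ (Sum.inr j)) = C i j
      simp only [hℛ, hγ, Sum.elim_inr, hM]
      rw [hCval i j]
      rcases hρi : ρ i with a₁ | j₁
      · rw [Matrix.fromBlocks_apply₁₁]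
        have : f i.1 = Sum.inl a₁ := by rw [hρ i, hρi]; rfl
        rw [this]; rfl
      · rw [Matrix.fromBlocks_apply₂₁]
        have : f i.1 = Sum.inr (Sum.inl j₁) := by rw [hρ i, hρi]; rfl
        rw [this]; rfl
    rw [h11, h21, h22, Matrix.det_fromBlocks_zero₂₁, Matrix.det_one, one_mul]
  have hXC : X.det = C.det := hXdet.trans hNdet
  have hXne : X.det ≠ 0 := by
    rw [hXC]
    intro h0
    rw [h0] at hnatBC
    simp only [Int.natAbs_zero] at hnatBC
    exact hdet (Int.natAbs_eq_zero.mp hnatBC)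
  have := hunimod g ginj hXne
  have habs : Bm.det.natAbs = 1 := by
    rw [hnatBC, ← hXC]
    rcases this with h | h <;> rw [h] <;> rfl
  rcases Int.natAbs_eq_iff.mp habs with h | h
  · exact Or.inl (by exact_mod_cast h)
  · exact Or.inr (by exact_mod_cast h)

theorem extremePoint_integral
    (A : Matrix (Fin m) (Fin n) ℤ) (W : Matrix (Fin k) (Fin n) ℤ)
    (hunimod : IsUnimodularRect (Matrix.fromBlocks A (1 : Matrix (Fin m) (Fin m) ℤ) W
        (0 : Matrix (Fin k) (Fin m) ℤ)))
    (hWli : LinearIndependent ℝ (fun j : Fin k => fun c : Fin n => ((W j c : ℤ) : ℝ)))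
    (b : Fin m → ℤ) (y : Fin k → ℤ) (l u : Fin n → ℤ) (z : Fin n → ℝ)
    (hz : z ∈ Set.extremePoints ℝ {w : Fin n → ℝ |
      (∀ i, ((A.map (Int.cast : ℤ → ℝ)).mulVec w) i ≤ (b i : ℝ)) ∧
      (∀ j, ((W.map (Int.cast : ℤ → ℝ)).mulVec w) j = (y j : ℝ)) ∧
      (∀ t, (l t : ℝ) ≤ w t ∧ w t ≤ (u t : ℝ))}) :
    IsIntegerPoint z := by
  classical
  set Q : Set (Fin n → ℝ) := {w : Fin n → ℝ |
      (∀ i, ((A.map (Int.cast : ℤ → ℝ)).mulVec w) i ≤ (b i : ℝ)) ∧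
      (∀ j, ((W.map (Int.cast : ℤ → ℝ)).mulVec w) j = (y j : ℝ)) ∧
      (∀ t, (l t : ℝ) ≤ w t ∧ w t ≤ (u t : ℝ))} with hQ
  obtain ⟨hzQ, hzext⟩ := hz
  set RowR : (Fin m ⊕ (Fin k ⊕ Fin n)) → Fin n → ℝ :=
    fun i c => ((Rowℤ A W i c : ℤ) : ℝ) with hRowR
  have hdotA : ∀ (w : Fin n → ℝ) (i : Fin m),
      RowR (Sum.inl i) ⬝ᵥ w = ((A.map (Int.cast : ℤ → ℝ)).mulVec w) i := fun w i => rfl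
  have hdotW : ∀ (w : Fin n → ℝ) (j : Fin k),
      RowR (Sum.inr (Sum.inl j)) ⬝ᵥ w = ((W.map (Int.cast : ℤ → ℝ)).mulVec w) j := fun w j => rfl
  have hdotU : ∀ (w : Fin n → ℝ) (t : Fin n), RowR (Sum.inr (Sum.inr t)) ⬝ᵥ w = w t := by
    intro w t
    simp [hRowR, Rowℤ, dotProduct, Pi.single_apply]
  set rhs : (Fin m ⊕ (Fin k ⊕ Fin n)) → ℤ :=
    Sum.elim b (Sum.elim y (fun t => if z t = (l t : ℝ) then l t else u t)) with hrhs
  set Tight : Set (Fin m ⊕ (Fin k ⊕ Fin n)) := {i | RowR i ⬝ᵥ z = (rhs i : ℝ)} with hTight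
  have hWtight : ∀ j, Sum.inr (Sum.inl j) ∈ Tight := by
    intro j
    show RowR (Sum.inr (Sum.inl j)) ⬝ᵥ z = _
    rw [hdotW]
    exact hzQ.2.1 j
  -- Step 1 : the tight rows span everything
  have hspan : Submodule.span ℝ (RowR '' Tight) = ⊤ := by
    by_contra hne
    have hrange : Set.range (fun i : ↥Tight => RowR i.1) = RowR '' Tight := by
      rw [← Set.image_eq_range]
    obtain ⟨d, hd0, hdperp⟩ := exists_perp_of_span_ne_top (fun i : ↥Tight => RowR i.1)
      (by rwa [hrange])
    have hperp : ∀ i ∈ Tight, RowR i ⬝ᵥ d = 0 := fun i hi => hdperp ⟨i, hi⟩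
    -- all constraints eventually hold along z + ε • d
    have hkey : ∀ᶠ ε : ℝ in nhds 0, (z + ε • d) ∈ Q := by
      have hA : ∀ᶠ ε : ℝ in nhds 0, ∀ i : Fin m,
          ((A.map (Int.cast : ℤ → ℝ)).mulVec (z + ε • d)) i ≤ (b i : ℝ) := by
        rw [Filter.eventually_all]
        intro i
        have hexp : ∀ ε : ℝ, ((A.map (Int.cast : ℤ → ℝ)).mulVec (z + ε • d)) i
            = RowR (Sum.inl i) ⬝ᵥ z + ε * (RowR (Sum.inl i) ⬝ᵥ d) := by
          intro ε
          rw [← hdotA, dotProduct_add, dotProduct_smul, smul_eq_mul]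
        by_cases hT : Sum.inl i ∈ Tight
        · refine Filter.Eventually.of_forall (fun ε => ?_)
          rw [hexp, hperp _ hT, mul_zero, add_zero, hdotA]
          exact hzQ.1 i
        · have hlt : RowR (Sum.inl i) ⬝ᵥ z < (b i : ℝ) :=
            lt_of_le_of_ne (by rw [hdotA]; exact hzQ.1 i) hT
          have hcont : Filter.Tendsto (fun ε : ℝ => RowR (Sum.inl i) ⬝ᵥ z
              + ε * (RowR (Sum.inl i) ⬝ᵥ d)) (nhds 0) (nhds (RowR (Sum.inl i) ⬝ᵥ z)) := by
            have : Filter.Tendsto (fun ε : ℝ => ε * (RowR (Sum.inl i) ⬝ᵥ d)) (nhds 0)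
                (nhds 0) := by
              exact (continuous_mul_right _).tendsto' (0:ℝ) 0 (by simp)
            simpa using (tendsto_const_nhds.add this)
          filter_upwards [hcont.eventually_lt_const hlt] with ε hε
          rw [hexp]
          exact hε.le
      have hW : ∀ᶠ ε : ℝ in nhds 0, ∀ j : Fin k,
          ((W.map (Int.cast : ℤ → ℝ)).mulVec (z + ε • d)) j = (y j : ℝ) := by
        refine Filter.Eventually.of_forall (fun ε => fun j => ?_)
        rw [← hdotW, dotProduct_add, dotProduct_smul, smul_eq_mul,
          hperp _ (hWtight j), mul_zero, add_zero, hdotW]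
        exact hzQ.2.1 j
      have hBox : ∀ᶠ ε : ℝ in nhds 0, ∀ t : Fin n,
          (l t : ℝ) ≤ (z + ε • d) t ∧ (z + ε • d) t ≤ (u t : ℝ) := by
        rw [Filter.eventually_all]
        intro t
        have hexp : ∀ ε : ℝ, (z + ε • d) t = z t + ε * d t := fun ε => rfl
        by_cases hT : Sum.inr (Sum.inr t) ∈ Tight
        · refine Filter.Eventually.of_forall (fun ε => ?_)
          have hdt : d t = 0 := by rw [← hdotU d t]; exact hperp _ hT
          rw [hexp, hdt, mul_zero, add_zero]
          exact hzQ.2.2 t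
        · have hne1 : z t ≠ (l t : ℝ) := by
            intro he
            apply hT
            show RowR (Sum.inr (Sum.inr t)) ⬝ᵥ z = _
            rw [hdotU, hrhs]
            simp only [Sum.elim_inr, he, if_pos]
          have hne2 : z t ≠ (u t : ℝ) := by
            intro he
            apply hT
            show RowR (Sum.inr (Sum.inr t)) ⬝ᵥ z = _
            rw [hdotU, hrhs]
            simp only [Sum.elim_inr, hne1, if_neg, he]
            split_ifs with h
            · exact_mod_cast h
            · rfl
          have hlt1 : (l t : ℝ) < z t := lt_of_le_of_ne (hzQ.2.2 t).1 (Ne.symm hne1)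
          have hlt2 : z t < (u t : ℝ) := lt_of_le_of_ne (hzQ.2.2 t).2 hne2
          have hcont : Filter.Tendsto (fun ε : ℝ => z t + ε * d t) (nhds 0) (nhds (z t)) := by
            have : Filter.Tendsto (fun ε : ℝ => ε * d t) (nhds 0) (nhds 0) := by
              exact (continuous_mul_right _).tendsto' (0:ℝ) 0 (by simp)
            simpa using (tendsto_const_nhds.add this)
          filter_upwards [hcont.eventually_const_lt hlt1, hcont.eventually_lt_const hlt2]
            with ε h1 h2
          rw [hexp]
          exact ⟨h1.le, h2.le⟩
      filter_upwards [hA, hW, hBox] with ε h1 h2 h3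
      exact ⟨h1, h2, h3⟩
    have hkey' : ∀ᶠ ε : ℝ in nhds 0, (z - ε • d) ∈ Q := by
      have hneg : Filter.Tendsto (fun ε : ℝ => -ε) (nhds 0) (nhds 0) := by
        simpa using (continuous_neg.tendsto (0:ℝ))
      filter_upwards [hneg.eventually hkey] with ε hε
      have : z + (-ε) • d = z - ε • d := by module
      rwa [this] at hε
    have hboth := (hkey.and hkey').filter_mono (nhdsWithin_le_nhds (s := {(0:ℝ)}ᶜ))
    have hne0 : ∀ᶠ ε : ℝ in nhdsWithin 0 {(0:ℝ)}ᶜ, ε ≠ 0 := self_mem_nhdsWithin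
    obtain ⟨ε, ⟨hεp, hεm⟩, hεne⟩ := (hboth.and hne0).exists
    have hseg : z ∈ openSegment ℝ (z - ε • d) (z + ε • d) := by
      refine ⟨1/2, 1/2, by norm_num, by norm_num, by norm_num, ?_⟩
      module
    have := hzext hεm hεp hseg
    have hd0' : z - ε • d = z := this
    have : ε • d = 0 := by
      have := sub_eq_self.mp hd0'
      exact this
    rcases smul_eq_zero.mp this with h | h
    · exact hεne h
    · exact hd0 h
  -- Step 2 : extract a basis from the tight rows containing all the W rows
  have hWli' : LinearIndependent ℝ (fun j : Fin k => RowR (Sum.inr (Sum.inl j))) := hWli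
  have hWsub : Set.range (fun j : Fin k => RowR (Sum.inr (Sum.inl j))) ⊆ RowR '' Tight := by
    rintro v ⟨j, rfl⟩
    exact ⟨Sum.inr (Sum.inl j), hWtight j, rfl⟩
  obtain ⟨bs, hbs_sub, hbs_incl, hbs_spansub, hbs_li0⟩ :=
    exists_linearIndepOn_id_extension ((linearIndepOn_id_range_iff hWli'.injective).mpr hWli') hWsub
  have hbs_li : LinearIndependent ℝ ((↑) : bs → (Fin n → ℝ)) := hbs_li0
  have hspan_bs : Submodule.span ℝ bs = ⊤ := by
    rw [← top_le_iff, ← hspan]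
    exact Submodule.span_le.mpr hbs_spansub
  haveI : Fintype bs := (hbs_li.setFinite).fintype
  have hcardbs : Fintype.card bs = n := by
    let Bb : Module.Basis bs ℝ (Fin n → ℝ) := Module.Basis.mk hbs_li
      (by rw [Subtype.range_coe, hspan_bs])
    have h1 := Module.finrank_eq_card_basis Bb
    rw [Module.finrank_fintype_fun_eq_card, Fintype.card_fin] at h1
    exact h1.symm
  set e : Fin n ≃ bs := (Fintype.equivFinOfCardEq hcardbs).symm with he
  have hpick : ∀ v : bs, ∃ i : Fin m ⊕ (Fin k ⊕ Fin n), i ∈ Tight ∧ RowR i = (v : Fin n → ℝ) ∧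
      (∀ j : Fin k, RowR (Sum.inr (Sum.inl j)) = (v : Fin n → ℝ) → i = Sum.inr (Sum.inl j)) := by
    intro v
    by_cases h : ∃ j : Fin k, RowR (Sum.inr (Sum.inl j)) = (v : Fin n → ℝ)
    · obtain ⟨j0, hj0⟩ := h
      refine ⟨Sum.inr (Sum.inl j0), hWtight j0, hj0, fun j hj => ?_⟩
      have : (fun j : Fin k => RowR (Sum.inr (Sum.inl j))) j
          = (fun j : Fin k => RowR (Sum.inr (Sum.inl j))) j0 := hj.trans hj0.symm
      rw [hWli'.injective this]
    · obtain ⟨i, hiT, hiv⟩ := hbs_sub v.2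
      exact ⟨i, hiT, hiv, fun j hj => absurd ⟨j, hj⟩ h⟩
  choose F hFT hFrow hFuniq using hpick
  set f : Fin n → Fin m ⊕ (Fin k ⊕ Fin n) := fun i => F (e i) with hf
  have hfrow : ∀ i, RowR (f i) = ((e i : bs) : Fin n → ℝ) := fun i => hFrow (e i)
  have hfinj : Function.Injective f := by
    intro i i' hii
    have h1 : ((e i : bs) : Fin n → ℝ) = ((e i' : bs) : Fin n → ℝ) := by
      rw [← hfrow i, ← hfrow i', hii]
    exact e.injective (Subtype.ext h1)
  have hfcov : ∀ j : Fin k, ∃ i, f i = Sum.inr (Sum.inl j) := by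
    intro j
    have hmem : RowR (Sum.inr (Sum.inl j)) ∈ bs := hbs_incl ⟨j, rfl⟩
    refine ⟨e.symm ⟨RowR (Sum.inr (Sum.inl j)), hmem⟩, ?_⟩
    rw [hf]
    have := hFuniq (e (e.symm ⟨RowR (Sum.inr (Sum.inl j)), hmem⟩)) j
    apply this
    rw [e.apply_symm_apply]
  -- the square matrix of the chosen tight rows
  set Bℤ : Matrix (Fin n) (Fin n) ℤ := Matrix.of (fun i => Rowℤ A W (f i)) with hBℤ
  have hBRrows : (fun i => (Bℤ.map (Int.cast : ℤ → ℝ)) i) = fun i => RowR (f i) := by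
    funext i c
    rfl
  have hBRli : LinearIndependent ℝ (fun i => (Bℤ.map (Int.cast : ℤ → ℝ)) i) := by
    rw [hBRrows]
    have h2 : LinearIndependent ℝ (fun i : Fin n => ((e i : bs) : Fin n → ℝ)) :=
      hbs_li.comp e e.injective
    have h3 : (fun i => RowR (f i)) = fun i : Fin n => ((e i : bs) : Fin n → ℝ) :=
      funext hfrow
    rw [h3]
    exact h2
  have hBRdet : (Bℤ.map (Int.cast : ℤ → ℝ)).det ≠ 0 := det_ne_zero_of_rows hBRli
  have hBdet : Bℤ.det ≠ 0 := by
    intro h0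
    apply hBRdet
    have h1 : (Bℤ.map (Int.cast : ℤ → ℝ)).det = ((Bℤ.det : ℤ) : ℝ) :=
      ((Int.castRingHom ℝ).map_det Bℤ).symm
    rw [h1, h0]
    simp
  have hpm := det_pm_one A W hunimod f hfinj hfcov hBdet
  have hsolve : (Bℤ.map (Int.cast : ℤ → ℝ)).mulVec z = fun i => ((rhs (f i) : ℤ) : ℝ) := by
    funext i
    have h1 : (Bℤ.map (Int.cast : ℤ → ℝ)).mulVec z i = RowR (f i) ⬝ᵥ z := by
      rw [Matrix.mulVec]
      congr 1
    rw [h1]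
    exact hFT (e i)
  exact integral_solution Bℤ hpm z (fun i => rhs (f i)) hsolve

lemma Wrows_linearIndependent (A : Matrix (Fin m) (Fin n) ℤ) (W : Matrix (Fin k) (Fin n) ℤ)
    (hrank : ((Matrix.fromBlocks A (1 : Matrix (Fin m) (Fin m) ℤ) W
        (0 : Matrix (Fin k) (Fin m) ℤ)).map (Int.cast : ℤ → ℚ)).rank = m + k) :
    LinearIndependent ℝ (fun j : Fin k => fun c : Fin n => ((W j c : ℤ) : ℝ)) := by
  classical
  set Mq : Matrix (Fin m ⊕ Fin k) (Fin n ⊕ Fin m) ℚ :=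
    (Matrix.fromBlocks A (1 : Matrix (Fin m) (Fin m) ℤ) W
        (0 : Matrix (Fin k) (Fin m) ℤ)).map (Int.cast : ℤ → ℚ) with hMq
  -- rows of Mq are linearly independent over ℚ
  have hrows : LinearIndependent ℚ (fun r => Mq r) := by
    rw [linearIndependent_iff_card_eq_finrank_span]
    have h1 : Mq.rank = Module.finrank ℚ (Submodule.span ℚ (Set.range (fun r => Mq r))) := by
      rw [Matrix.rank_eq_finrank_span_row]; rfl
    rw [Set.finrank, ← h1, hrank]
    simp
  -- hence the rows of W over ℚ are linearly independent
  set Wq : Matrix (Fin k) (Fin n) ℚ := W.map (Int.cast : ℤ → ℚ) with hWq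
  have hWrowsQ : LinearIndependent ℚ (fun j => Wq j) := by
    set Φ : (Fin n → ℚ) →ₗ[ℚ] (Fin n ⊕ Fin m → ℚ) :=
      { toFun := fun x => Sum.elim x 0
        map_add' := by intro x y; funext c; cases c <;> simp
        map_smul' := by intro a x; funext c; cases c <;> simp } with hΦ
    apply LinearIndependent.of_comp Φ
    have hcomp : (Φ ∘ fun j => Wq j) = (fun r => Mq r) ∘ Sum.inr := by
      funext j c
      cases c with
      | inl c => simp [hΦ, hMq, hWq, Matrix.fromBlocks_apply₂₁]
      | inr i => simp [hΦ, hMq, Matrix.fromBlocks_apply₂₂]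
    rw [hcomp]
    exact hrows.comp Sum.inr Sum.inr_injective
  -- transfer along the Gram determinant
  have hGq : (Wq * Wqᵀ).det ≠ 0 := (gram_det_ne_zero_iff Wq).mpr hWrowsQ
  set Wr : Matrix (Fin k) (Fin n) ℝ := W.map (Int.cast : ℤ → ℝ) with hWr
  have hWrq : Wr = Wq.map (Rat.cast : ℚ → ℝ) := by
    ext j c
    simp [hWr, hWq]
  have hGr : (Wr * Wrᵀ).det ≠ 0 := by
    have h1 : Wr * Wrᵀ = (Wq * Wqᵀ).map (Rat.cast : ℚ → ℝ) := by
      rw [hWrq]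
      rw [show (Wq.map (Rat.cast : ℚ → ℝ))ᵀ = Wqᵀ.map (Rat.cast : ℚ → ℝ) from
        (Matrix.transpose_map).symm]
      exact (Matrix.map_mul (L := Wq) (M := Wqᵀ) (f := Rat.castHom ℝ)).symm
    rw [h1]
    have h2 : ((Wq * Wqᵀ).map (Rat.cast : ℚ → ℝ)).det = (((Wq * Wqᵀ).det : ℚ) : ℝ) :=
      ((Rat.castHom ℝ).map_det _).symm
    rw [h2]
    exact_mod_cast hGq
  have := (gram_det_ne_zero_iff Wr).mp hGr
  exact this

end BlockUnimodAux

open BlockUnimodAux in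
/-- **If `[[A, I],[W, 0]]` has full row rank and is unimodular, then for each integral `b`,
`conv {x ≥ 0 : A x ≤ b, W x ∈ ℤᵏ}` is an integral polyhedron.** -/
theorem block_unimodular_implies_mixed_integer_hull_integral
    {m n k : ℕ} (A : Matrix (Fin m) (Fin n) ℤ) (W : Matrix (Fin k) (Fin n) ℤ)
    (hrank : ((Matrix.fromBlocks A (1 : Matrix (Fin m) (Fin m) ℤ) W
        (0 : Matrix (Fin k) (Fin m) ℤ)).map (Int.cast : ℤ → ℚ)).rank = m + k)
    (hunimod : IsUnimodularRect (Matrix.fromBlocks A (1 : Matrix (Fin m) (Fin m) ℤ) W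
        (0 : Matrix (Fin k) (Fin m) ℤ)))
    (b : Fin m → ℤ) :
    convexHull ℝ {x : Fin n → ℝ |
        (∀ i, (A.map (Int.cast : ℤ → ℝ)).mulVec x i ≤ (b i : ℝ)) ∧
        (∀ j, ∃ z : ℤ, (W.map (Int.cast : ℤ → ℝ)).mulVec x j = (z : ℝ)) ∧
        (∀ i, 0 ≤ x i)}
      = convexHull ℝ ((convexHull ℝ {x : Fin n → ℝ |
        (∀ i, (A.map (Int.cast : ℤ → ℝ)).mulVec x i ≤ (b i : ℝ)) ∧
        (∀ j, ∃ z : ℤ, (W.map (Int.cast : ℤ → ℝ)).mulVec x j = (z : ℝ)) ∧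
        (∀ i, 0 ≤ x i)}) ∩ {x | IsIntegerPoint x}) := by
  classical
  set S : Set (Fin n → ℝ) := {x : Fin n → ℝ |
        (∀ i, (A.map (Int.cast : ℤ → ℝ)).mulVec x i ≤ (b i : ℝ)) ∧
        (∀ j, ∃ z : ℤ, (W.map (Int.cast : ℤ → ℝ)).mulVec x j = (z : ℝ)) ∧
        (∀ i, 0 ≤ x i)} with hS
  refine le_antisymm ?_ ?_
  swap
  · exact convexHull_min Set.inter_subset_left (convex_convexHull ℝ S)
  · -- hard direction
    refine convexHull_min (fun x hx => ?_) (convex_convexHull ℝ _)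
    obtain ⟨hxA, hxW, hxpos⟩ := hx
    choose y hy using hxW
    set l : Fin n → ℤ := fun t => ⌊x t⌋ with hl
    set u : Fin n → ℤ := fun t => ⌈x t⌉ with hu
    set Q : Set (Fin n → ℝ) := {w : Fin n → ℝ |
      (∀ i, ((A.map (Int.cast : ℤ → ℝ)).mulVec w) i ≤ (b i : ℝ)) ∧
      (∀ j, ((W.map (Int.cast : ℤ → ℝ)).mulVec w) j = (y j : ℝ)) ∧
      (∀ t, (l t : ℝ) ≤ w t ∧ w t ≤ (u t : ℝ))} with hQ
    have hxQ : x ∈ Q := ⟨hxA, hy, fun t => ⟨Int.floor_le _, Int.le_ceil _⟩⟩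
    -- continuity of the linear functionals
    have hcontA : ∀ i : Fin m, Continuous (fun w : Fin n → ℝ =>
        ((A.map (Int.cast : ℤ → ℝ)).mulVec w) i) := by
      intro i
      simp only [Matrix.mulVec, dotProduct]
      exact continuous_finset_sum _ (fun c _ => continuous_const.mul (continuous_apply c))
    have hcontW : ∀ j : Fin k, Continuous (fun w : Fin n → ℝ =>
        ((W.map (Int.cast : ℤ → ℝ)).mulVec w) j) := by
      intro j
      simp only [Matrix.mulVec, dotProduct]
      exact continuous_finset_sum _ (fun c _ => continuous_const.mul (continuous_apply c))
    have hQclosed : IsClosed Q := by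
      have h1 : Q = (⋂ i : Fin m, {w : Fin n → ℝ |
            ((A.map (Int.cast : ℤ → ℝ)).mulVec w) i ≤ (b i : ℝ)}) ∩
          ((⋂ j : Fin k, {w : Fin n → ℝ |
            ((W.map (Int.cast : ℤ → ℝ)).mulVec w) j = (y j : ℝ)}) ∩
          (⋂ t : Fin n, {w : Fin n → ℝ | (l t : ℝ) ≤ w t ∧ w t ≤ (u t : ℝ)})) := by
        ext w
        simp only [hQ, Set.mem_setOf_eq, Set.mem_inter_iff, Set.mem_iInter]
      rw [h1]
      refine (isClosed_iInter (fun i => isClosed_le (hcontA i) continuous_const)).inter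
        ((isClosed_iInter (fun j => isClosed_eq (hcontW j) continuous_const)).inter
          (isClosed_iInter (fun t => IsClosed.inter
            (isClosed_le continuous_const (continuous_apply t))
            (isClosed_le (continuous_apply t) continuous_const))))
    have hQcompact : IsCompact Q := by
      have hbox : IsCompact (Set.pi Set.univ (fun t : Fin n => Set.Icc (l t : ℝ) (u t : ℝ))) :=
        isCompact_univ_pi (fun t => isCompact_Icc)
      refine hbox.of_isClosed_subset hQclosed (fun w hw => ?_)
      intro t _
      exact hw.2.2 t
    have hQconvex : Convex ℝ Q := by
      intro w1 h1 w2 h2 a c ha hc hac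
      have hmv : ∀ (M : Matrix (Fin m) (Fin n) ℝ), True := fun _ => trivial
      refine ⟨fun i => ?_, fun j => ?_, fun t => ?_⟩
      · have he : ((A.map (Int.cast : ℤ → ℝ)).mulVec (a • w1 + c • w2)) i
            = a * ((A.map (Int.cast : ℤ → ℝ)).mulVec w1) i
              + c * ((A.map (Int.cast : ℤ → ℝ)).mulVec w2) i := by
          rw [Matrix.mulVec_add, Matrix.mulVec_smul, Matrix.mulVec_smul]
          rfl
        rw [he]
        calc a * ((A.map (Int.cast : ℤ → ℝ)).mulVec w1) i
              + c * ((A.map (Int.cast : ℤ → ℝ)).mulVec w2) i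
            ≤ a * (b i : ℝ) + c * (b i : ℝ) :=
              add_le_add (mul_le_mul_of_nonneg_left (h1.1 i) ha)
                (mul_le_mul_of_nonneg_left (h2.1 i) hc)
          _ = (b i : ℝ) := by rw [← add_mul, hac, one_mul]
      · have he : ((W.map (Int.cast : ℤ → ℝ)).mulVec (a • w1 + c • w2)) j
            = a * ((W.map (Int.cast : ℤ → ℝ)).mulVec w1) j
              + c * ((W.map (Int.cast : ℤ → ℝ)).mulVec w2) j := by
          rw [Matrix.mulVec_add, Matrix.mulVec_smul, Matrix.mulVec_smul]
          rfl
        rw [he, h1.2.1 j, h2.2.1 j, ← add_mul, hac, one_mul]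
      · constructor
        · have : a * (l t : ℝ) + c * (l t : ℝ) ≤ a * w1 t + c * w2 t :=
            add_le_add (mul_le_mul_of_nonneg_left (h1.2.2 t).1 ha)
              (mul_le_mul_of_nonneg_left (h2.2.2 t).1 hc)
          calc (l t : ℝ) = a * (l t : ℝ) + c * (l t : ℝ) := by rw [← add_mul, hac, one_mul]
            _ ≤ a * w1 t + c * w2 t := this
            _ = (a • w1 + c • w2) t := rfl
        · have : a * w1 t + c * w2 t ≤ a * (u t : ℝ) + c * (u t : ℝ) :=
            add_le_add (mul_le_mul_of_nonneg_left (h1.2.2 t).2 ha)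
              (mul_le_mul_of_nonneg_left (h2.2.2 t).2 hc)
          calc (a • w1 + c • w2) t = a * w1 t + c * w2 t := rfl
            _ ≤ a * (u t : ℝ) + c * (u t : ℝ) := this
            _ = (u t : ℝ) := by rw [← add_mul, hac, one_mul]
    -- Krein–Milman
    have hKM := closure_convexHull_extremePoints hQcompact hQconvex
    set E := Q.extremePoints ℝ with hE
    have hEint : ∀ e ∈ E, IsIntegerPoint e := by
      intro e he
      exact extremePoint_integral A W hunimod (Wrows_linearIndependent A W hrank) b y l u e he
    have hES : ∀ e ∈ E, e ∈ S := by
      intro e he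
      have heQ : e ∈ Q := extremePoints_subset he
      refine ⟨heQ.1, fun j => ⟨y j, heQ.2.1 j⟩, fun t => ?_⟩
      have h1 : (0 : ℝ) ≤ (l t : ℝ) := by
        have : (0:ℤ) ≤ l t := Int.le_floor.mpr (by simpa using hxpos t)
        exact_mod_cast this
      exact h1.trans (heQ.2.2 t).1
    have hEfin : E.Finite := by
      have hsub : E ⊆ Set.pi Set.univ
          (fun t : Fin n => (fun z : ℤ => (z : ℝ)) '' (Set.Icc (l t) (u t))) := by
        intro e he t _
        obtain ⟨zt, hzt⟩ := hEint e he t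
        have heQ : e ∈ Q := extremePoints_subset he
        refine ⟨zt, ?_, hzt.symm⟩
        constructor
        · have := (heQ.2.2 t).1
          rw [hzt] at this
          exact_mod_cast this
        · have := (heQ.2.2 t).2
          rw [hzt] at this
          exact_mod_cast this
      exact Set.Finite.subset (Set.Finite.pi (fun t => Set.Finite.image _ (Set.finite_Icc _ _)))
        hsub
    have hconvE_closed : IsClosed (convexHull ℝ E) := (hEfin.isCompact_convexHull ℝ).isClosed
    have hxconvE : x ∈ convexHull ℝ E := by
      rw [← hconvE_closed.closure_eq, hKM]
      exact hxQ
    refine convexHull_mono ?_ hxconvE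
    intro e he
    exact ⟨subset_convexHull ℝ S (hES e he), hEint e he⟩
end

section
/- Let A ∈ ℤ^{m×n} and let W ∈ ℤ^{k×n} have rank k, and suppose that the polyhedron {x ∈ ℝ^n : Ax ≤ b, Wx = d, x ≥ 0} is integral for every b ∈ ℤ^m and every d ∈ ℤ^k. Then there exist U ∈ ℤ^{m×k} and W' ∈ {0,±1}^{k×n} such that A = (A − UW') + UW' is an affine TU decomposition (i.e., stacking A − UW' on top of W' gives a totally unimodular matrix), and moreover, for every b ∈ ℤ^m, conv({x ∈ ℝ^n : Ax ≤ b, Wx ∈ ℤ^k, x ≥ 0}) = conv({x ∈ ℝ^n : Ax ≤ b, W'x ∈ ℤ^k, x ≥ 0}). -/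
open Matrix Set

private lemma signrange_of (x : ℤ) (h : x = 0 ∨ x = 1 ∨ x = -1) :
    x ∈ Set.range (SignType.cast : SignType → ℤ) := by
  rcases h with h | h | h
  · exact ⟨0, by simp [h]⟩
  · exact ⟨1, by simp [h]⟩
  · exact ⟨-1, by simp [h]⟩

private lemma sum_mul_support {n : ℕ} {ι : Type} [Fintype ι] [DecidableEq ι]
    {h : ι → Fin n} (hh : Function.Injective h) (F G : Fin n → ℝ)
    (hG : ∀ c, c ∉ Set.range h → G c = 0) :
    ∑ c, F c * G c = ∑ q, F (h q) * G (h q) := by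
  classical
  have h1 : ∑ q, F (h q) * G (h q) = ∑ c ∈ Finset.univ.image h, F c * G c :=
    (Finset.sum_image (f := fun c => F c * G c) (g := h) (fun a _ b _ hab => hh hab)).symm
  rw [h1]
  refine (Finset.sum_subset (Finset.subset_univ _) ?_).symm
  intro c _ hc
  have hcr : c ∉ Set.range h := by
    intro ⟨q, hq⟩
    exact hc (Finset.mem_image.2 ⟨q, Finset.mem_univ q, hq⟩)
  rw [hG c hcr, mul_zero]

private lemma eq_of_avg {ι : Type} {t : Finset ι} {w : ι → ℝ}
    (hw : ∀ i ∈ t, 0 ≤ w i) (hsum : ∑ i ∈ t, w i = 1) (a : ι → ℝ) (β : ℝ)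
    (hle : ∀ i ∈ t, a i ≤ β) (heq : ∑ i ∈ t, w i * a i = β) :
    ∀ i ∈ t, 0 < w i → a i = β := by
  have h0 : ∑ i ∈ t, w i * (β - a i) = 0 := by
    have e : ∀ i ∈ t, w i * (β - a i) = w i * β - w i * a i := fun i _ => by ring
    rw [Finset.sum_congr rfl e, Finset.sum_sub_distrib, ← Finset.sum_mul, hsum, one_mul, heq,
      sub_self]
  intro i hi hwi
  have h1 := (Finset.sum_eq_zero_iff_of_nonneg
    (fun j hj => mul_nonneg (hw j hj) (sub_nonneg.2 (hle j hj)))).1 h0 i hi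
  rcases mul_eq_zero.1 h1 with h | h
  · exact absurd h (ne_of_gt hwi)
  · linarith

private lemma core {m n k : ℕ} (A : Matrix (Fin m) (Fin n) ℤ) (W : Matrix (Fin k) (Fin n) ℤ)
    (hint : ∀ (b : Fin m → ℤ) (d : Fin k → ℤ),
      {x : Fin n → ℝ |
          (∀ i, (A.map (Int.cast : ℤ → ℝ)).mulVec x i ≤ (b i : ℝ)) ∧
          (∀ j, (W.map (Int.cast : ℤ → ℝ)).mulVec x j = (d j : ℝ)) ∧
          (∀ i, 0 ≤ x i)}
        = convexHull ℝ {x : Fin n → ℝ |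
          ((∀ i, (A.map (Int.cast : ℤ → ℝ)).mulVec x i ≤ (b i : ℝ)) ∧
          (∀ j, (W.map (Int.cast : ℤ → ℝ)).mulVec x j = (d j : ℝ)) ∧
          (∀ i, 0 ≤ x i)) ∧ IsIntegerPoint x})
    (ι : Type) [Fintype ι] [DecidableEq ι]
    (ρ : ι → Fin m ⊕ Fin k) (hρ : Function.Injective ρ)
    (hρk : ∀ j : Fin k, Sum.inr j ∈ Set.range ρ)
    (h : ι → Fin n) (hh : Function.Injective h) :
    ((Matrix.fromRows A W).submatrix ρ h).det = 0 ∨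
      ((Matrix.fromRows A W).submatrix ρ h).det = 1 ∨
      ((Matrix.fromRows A W).submatrix ρ h).det = -1 := by
  classical
  set M : Matrix (Fin m ⊕ Fin k) (Fin n) ℤ := Matrix.fromRows A W with hM
  set C : Matrix ι ι ℤ := M.submatrix ρ h with hCdef
  by_cases hdet : C.det = 0
  · exact Or.inl hdet
  refine Or.inr ?_
  suffices hD : ∃ D : Matrix ι ι ℤ, C * D = 1 by
    obtain ⟨D, hD⟩ := hD
    have h2 : C.det * D.det = 1 := by
      rw [← Matrix.det_mul, hD, Matrix.det_one]
    rcases Int.eq_one_or_neg_one_of_mul_eq_one' h2 with ⟨h3, _⟩ | ⟨h3, _⟩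
    · exact Or.inl h3
    · exact Or.inr h3
  -- real cast of C
  set Cr : Matrix ι ι ℝ := C.map (Int.cast : ℤ → ℝ) with hCr
  have hdetr : Cr.det = ((C.det : ℤ) : ℝ) := ((Int.castRingHom ℝ).map_det C).symm
  have hCrdet : IsUnit Cr.det := by
    rw [hdetr]
    exact isUnit_iff_ne_zero.2 (by exact_mod_cast hdet)
  have hmul : Cr * Cr⁻¹ = 1 := Matrix.mul_nonsing_inv Cr hCrdet
  have hmul' : Cr⁻¹ * Cr = 1 := Matrix.nonsing_inv_mul Cr hCrdet
  have key : ∀ t : ι, ∃ vt : ι → ℤ, (Cr *ᵥ (fun q => ((vt q : ℤ) : ℝ))) = Pi.single t 1 := by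
    intro t
    set v : ι → ℝ := Cr⁻¹ *ᵥ Pi.single t 1 with hv
    have hvC : Cr *ᵥ v = Pi.single t 1 := by
      rw [hv, Matrix.mulVec_mulVec, hmul, Matrix.one_mulVec]
    set xh : Fin n → ℝ := Function.extend h v 0 with hxh
    have hxh_app : ∀ q, xh (h q) = v q := fun q => hh.extend_apply v 0 q
    have hxh_zero : ∀ c, c ∉ Set.range h → xh c = 0 := by
      intro c hc
      have hne : ¬∃ q, h q = c := by simpa [Set.mem_range] using hc
      show Function.extend h v 0 c = 0
      rw [Function.extend_apply' v (0 : Fin n → ℝ) c hne]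
      rfl
    set y : Fin n → ℤ := fun c => ⌈|xh c|⌉ with hy
    set xs : Fin n → ℝ := fun c => xh c + ((y c : ℤ) : ℝ) with hxs
    have hxs_nonneg : ∀ c, 0 ≤ xs c := by
      intro c
      have h1 : |xh c| ≤ ((y c : ℤ) : ℝ) := Int.le_ceil _
      have h2 : -xh c ≤ |xh c| := neg_le_abs _
      simp only [hxs]
      linarith
    have hxs_zero : ∀ c, c ∉ Set.range h → xs c = 0 := by
      intro c hc
      have h0 := hxh_zero c hc
      simp [hxs, hy, h0]
    -- row sums against xh
    have hrow : ∀ p : ι, ∑ c, ((M (ρ p) c : ℤ) : ℝ) * xh c = (Pi.single t 1 : ι → ℝ) p := by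
      intro p
      rw [sum_mul_support hh _ _ hxh_zero]
      have he : ∀ q, ((M (ρ p) (h q) : ℤ) : ℝ) * xh (h q) = Cr p q * v q := by
        intro q
        rw [hxh_app]
        simp [hCr, hCdef, Matrix.map_apply, Matrix.submatrix_apply]
      rw [Finset.sum_congr rfl (fun q _ => he q)]
      have := congrFun hvC p
      simpa [Matrix.mulVec, dotProduct] using this
    -- integer parts
    have hAy : ∀ i, (((A *ᵥ y) i : ℤ) : ℝ) = ∑ c, ((A i c : ℤ) : ℝ) * ((y c : ℤ) : ℝ) := by
      intro i
      simp only [Matrix.mulVec, dotProduct]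
      push_cast
      ring
    have hWy : ∀ j, (((W *ᵥ y) j : ℤ) : ℝ) = ∑ c, ((W j c : ℤ) : ℝ) * ((y c : ℤ) : ℝ) := by
      intro j
      simp only [Matrix.mulVec, dotProduct]
      push_cast
      ring
    set d : Fin k → ℤ := fun j => (if ρ t = Sum.inr j then 1 else 0) + (W *ᵥ y) j with hd
    set b : Fin m → ℤ := fun i => ⌈∑ c, ((A i c : ℤ) : ℝ) * xh c⌉ + (A *ᵥ y) i with hb
    have hAxs : ∀ i, ((A.map (Int.cast : ℤ → ℝ)).mulVec xs) i
        = (∑ c, ((A i c : ℤ) : ℝ) * xh c) + (((A *ᵥ y) i : ℤ) : ℝ) := by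
      intro i
      rw [hAy i]
      simp only [Matrix.mulVec, dotProduct, Matrix.map_apply, hxs]
      rw [← Finset.sum_add_distrib]
      exact Finset.sum_congr rfl (fun c _ => by ring)
    have hWxs : ∀ j, ((W.map (Int.cast : ℤ → ℝ)).mulVec xs) j
        = (∑ c, ((W j c : ℤ) : ℝ) * xh c) + (((W *ᵥ y) j : ℤ) : ℝ) := by
      intro j
      rw [hWy j]
      simp only [Matrix.mulVec, dotProduct, Matrix.map_apply, hxs]
      rw [← Finset.sum_add_distrib]
      exact Finset.sum_congr rfl (fun c _ => by ring)
    have hWrow : ∀ j, ∑ c, ((W j c : ℤ) : ℝ) * xh c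
        = ((if ρ t = Sum.inr j then (1 : ℤ) else 0 : ℤ) : ℝ) := by
      intro j
      obtain ⟨p, hp⟩ := hρk j
      have h1 : ∀ c, ((W j c : ℤ) : ℝ) = ((M (ρ p) c : ℤ) : ℝ) := by
        intro c
        rw [hp]
        simp [hM, Matrix.fromRows_apply_inr]
      rw [Finset.sum_congr rfl (fun c _ => by rw [h1 c]), hrow p]
      have h2 : p = t ↔ ρ t = Sum.inr j := by
        constructor
        · rintro rfl; exact hp
        · intro h3; exact hρ (hp.trans h3.symm)
      rw [Pi.single_apply]
      by_cases hpt : p = t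
      · simp [hpt, h2.1 hpt]
      · have h5 : ¬ρ t = Sum.inr j := fun hcon => hpt (h2.2 hcon)
        simp [hpt, h5]
    have hint_valA : ∀ p i, ρ p = Sum.inl i →
        ∑ c, ((A i c : ℤ) : ℝ) * xh c = ((if p = t then (1 : ℤ) else 0 : ℤ) : ℝ) := by
      intro p i hpi
      have hAr : ∀ c, ((A i c : ℤ) : ℝ) = ((M (ρ p) c : ℤ) : ℝ) := by
        intro c; rw [hpi]; simp [hM, Matrix.fromRows_apply_inl]
      rw [Finset.sum_congr rfl (fun c _ => by rw [hAr c]), hrow p, Pi.single_apply]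
      by_cases hpt : p = t <;> simp [hpt]
    have hceilA : ∀ p i, ρ p = Sum.inl i →
        ((b i : ℤ) : ℝ) = ∑ c, ((A i c : ℤ) : ℝ) * xh c + (((A *ᵥ y) i : ℤ) : ℝ) := by
      intro p i hpi
      have h4 : ⌈∑ c, ((A i c : ℤ) : ℝ) * xh c⌉ = (if p = t then (1 : ℤ) else 0) := by
        rw [hint_valA p i hpi]; exact Int.ceil_intCast _
      show ((⌈∑ c, ((A i c : ℤ) : ℝ) * xh c⌉ + (A *ᵥ y) i : ℤ) : ℝ) = _
      rw [Int.cast_add, h4, ← hint_valA p i hpi]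
    have hmem : xs ∈ {x : Fin n → ℝ |
          (∀ i, (A.map (Int.cast : ℤ → ℝ)).mulVec x i ≤ (b i : ℝ)) ∧
          (∀ j, (W.map (Int.cast : ℤ → ℝ)).mulVec x j = (d j : ℝ)) ∧
          (∀ i, 0 ≤ x i)} := by
      refine ⟨?_, ?_, hxs_nonneg⟩
      · intro i
        rw [hAxs i, hb]
        push_cast
        have := Int.le_ceil (∑ c, ((A i c : ℤ) : ℝ) * xh c)
        linarith
      · intro j
        rw [hWxs j, hWrow j]
        simp only [hd]
        push_cast
        ring
    rw [hint b d, convexHull_eq] at hmem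
    obtain ⟨ι', tS, w, z, hw0, hw1, hzmem, hcm⟩ := hmem
    have hxsum : xs = ∑ i ∈ tS, w i • z i := by
      rw [← hcm, Finset.centerMass_eq_of_sum_1 _ _ hw1]
    have hxs_c : ∀ c, xs c = ∑ i ∈ tS, w i * z i c := by
      intro c
      have := congrFun hxsum c
      simpa [Finset.sum_apply] using this
    have hpos : ∃ i ∈ tS, 0 < w i := by
      by_contra hcon
      push_neg at hcon
      have h0 : ∑ i ∈ tS, w i = 0 :=
        Finset.sum_eq_zero (fun i hi => le_antisymm (hcon i hi) (hw0 i hi))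
      rw [hw1] at h0
      norm_num at h0
    obtain ⟨i0, hi0, hwi0⟩ := hpos
    set u : Fin n → ℝ := z i0 with hu
    obtain ⟨⟨huA, huW, hupos⟩, huint⟩ := hzmem i0 hi0
    have hswap : ∀ F : Fin n → ℝ, ∑ c, F c * xs c = ∑ q ∈ tS, w q * (∑ c, F c * z q c) := by
      intro F
      calc ∑ c, F c * xs c = ∑ c, ∑ q ∈ tS, F c * (w q * z q c) := by
            refine Finset.sum_congr rfl fun c _ => ?_
            rw [hxs_c c, Finset.mul_sum]
        _ = ∑ q ∈ tS, ∑ c, F c * (w q * z q c) := Finset.sum_comm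
        _ = ∑ q ∈ tS, w q * (∑ c, F c * z q c) := by
            refine Finset.sum_congr rfl fun q _ => ?_
            rw [Finset.mul_sum]
            exact Finset.sum_congr rfl fun c _ => by ring
    have hucoord : ∀ c, c ∉ Set.range h → u c = 0 := by
      intro c hc
      have havg : ∑ q ∈ tS, w q * (-(z q c)) = 0 := by
        have h1 : ∑ q ∈ tS, w q * (-(z q c)) = -(∑ q ∈ tS, w q * z q c) := by
          rw [← Finset.sum_neg_distrib]
          exact Finset.sum_congr rfl fun q _ => by ring
        rw [h1, ← hxs_c c, hxs_zero c hc, neg_zero]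
      have h7 := eq_of_avg hw0 hw1 (fun q => -(z q c)) 0
        (fun q hq => neg_nonpos.2 ((hzmem q hq).1.2.2 c)) havg i0 hi0 hwi0
      have : -(u c) = 0 := h7
      linarith
    have huA_tight : ∀ p i, ρ p = Sum.inl i →
        ∑ c, ((A i c : ℤ) : ℝ) * u c = ((b i : ℤ) : ℝ) := by
      intro p i hpi
      have havg : ∑ q ∈ tS, w q * ((A.map (Int.cast : ℤ → ℝ)).mulVec (z q) i)
          = ((b i : ℤ) : ℝ) := by
        have h1 : ∀ q, (A.map (Int.cast : ℤ → ℝ)).mulVec (z q) i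
            = ∑ c, ((A i c : ℤ) : ℝ) * z q c := by
          intro q; simp [Matrix.mulVec, dotProduct, Matrix.map_apply]
        rw [Finset.sum_congr rfl (fun q _ => by rw [h1 q]), ← hswap]
        have h5 : ∑ c, ((A i c : ℤ) : ℝ) * xs c = (A.map (Int.cast : ℤ → ℝ)).mulVec xs i := by
          simp [Matrix.mulVec, dotProduct, Matrix.map_apply]
        rw [h5, hAxs i, ← hceilA p i hpi]
      have h6 := eq_of_avg hw0 hw1 (fun q => (A.map (Int.cast : ℤ → ℝ)).mulVec (z q) i)
        (((b i : ℤ)) : ℝ) (fun q hq => (hzmem q hq).1.1 i) havg i0 hi0 hwi0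
      have h2 : (A.map (Int.cast : ℤ → ℝ)).mulVec u i = ∑ c, ((A i c : ℤ) : ℝ) * u c := by
        simp [Matrix.mulVec, dotProduct, Matrix.map_apply]
      rw [← h2]
      exact h6
    have hdelta : ∀ p : ι, ∑ q, Cr p q * (u (h q) - xs (h q)) = 0 := by
      intro p
      have hsupp : ∀ c, c ∉ Set.range h → u c - xs c = 0 := fun c hc => by
        rw [hucoord c hc, hxs_zero c hc, sub_zero]
      have h1 : ∑ q, Cr p q * (u (h q) - xs (h q))
          = ∑ c, ((M (ρ p) c : ℤ) : ℝ) * (u c - xs c) := by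
        rw [sum_mul_support hh _ _ hsupp]
        exact Finset.sum_congr rfl fun q _ => by
          simp [hCr, hCdef, Matrix.map_apply, Matrix.submatrix_apply]
      have h2 : ∑ c, ((M (ρ p) c : ℤ) : ℝ) * (u c - xs c)
          = ∑ c, ((M (ρ p) c : ℤ) : ℝ) * u c - ∑ c, ((M (ρ p) c : ℤ) : ℝ) * xs c := by
        rw [← Finset.sum_sub_distrib]
        exact Finset.sum_congr rfl fun c _ => by ring
      rw [h1, h2]
      cases hρp : ρ p with
      | inl i =>
        simp only [hM, Matrix.fromRows_apply_inl]
        have hA2 : ∑ c, ((A i c : ℤ) : ℝ) * xs c = ((b i : ℤ) : ℝ) := by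
          have h5 : ∑ c, ((A i c : ℤ) : ℝ) * xs c = (A.map (Int.cast : ℤ → ℝ)).mulVec xs i := by
            simp [Matrix.mulVec, dotProduct, Matrix.map_apply]
          rw [h5, hAxs i, ← hceilA p i hρp]
        rw [huA_tight p i hρp, hA2, sub_self]
      | inr j =>
        simp only [hM, Matrix.fromRows_apply_inr]
        have hW1 : ∑ c, ((W j c : ℤ) : ℝ) * u c = ((d j : ℤ) : ℝ) := by
          have h3 : ∑ c, ((W j c : ℤ) : ℝ) * u c = (W.map (Int.cast : ℤ → ℝ)).mulVec u j := by
            simp [Matrix.mulVec, dotProduct, Matrix.map_apply]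
          rw [h3]
          exact huW j
        have hW2 : ∑ c, ((W j c : ℤ) : ℝ) * xs c = ((d j : ℤ) : ℝ) := by
          have h3 : ∑ c, ((W j c : ℤ) : ℝ) * xs c = (W.map (Int.cast : ℤ → ℝ)).mulVec xs j := by
            simp [Matrix.mulVec, dotProduct, Matrix.map_apply]
          rw [h3, hWxs j, hWrow j]
          simp only [hd]
          push_cast
          ring
        rw [hW1, hW2, sub_self]
    have hdvec : Cr *ᵥ (fun q => u (h q) - xs (h q)) = 0 := by
      funext p
      have := hdelta p
      simpa [Matrix.mulVec, dotProduct] using this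
    have hzero : (fun q => u (h q) - xs (h q)) = (0 : ι → ℝ) := by
      have h1 : (fun q => u (h q) - xs (h q))
          = Cr⁻¹ *ᵥ (Cr *ᵥ (fun q => u (h q) - xs (h q))) := by
        rw [Matrix.mulVec_mulVec, hmul', Matrix.one_mulVec]
      rw [h1, hdvec, Matrix.mulVec_zero]
    have hvint : ∀ q, ∃ zq : ℤ, v q = (zq : ℝ) := by
      intro q
      obtain ⟨zq, hzq⟩ := huint (h q)
      refine ⟨zq - y (h q), ?_⟩
      have h1 : u (h q) - xs (h q) = 0 := congrFun hzero q
      have h2 : xs (h q) = xh (h q) + ((y (h q) : ℤ) : ℝ) := rfl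
      rw [← hxh_app q]
      push_cast
      rw [← hzq]
      show xh (h q) = u (h q) - (y (h q) : ℝ)
      linarith [h1, h2]
    choose vt hvt using hvint
    refine ⟨vt, ?_⟩
    have hvv : (fun q => ((vt q : ℤ) : ℝ)) = v := by
      funext q; rw [← hvt q]
    rw [hvv, hvC]
  -- build the integer inverse
  choose D hD using key
  refine ⟨Matrix.of (fun q t => D t q), ?_⟩
  have hcast : ∀ p t, (((C * Matrix.of (fun q t => D t q)) p t : ℤ) : ℝ)
      = (((1 : Matrix ι ι ℤ) p t : ℤ) : ℝ) := by
    intro p t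
    have h1 := congrFun (hD t) p
    simp only [Matrix.mulVec, dotProduct, hCr, Matrix.map_apply] at h1
    rw [Matrix.mul_apply]
    push_cast
    simp only [Matrix.of_apply]
    rw [h1, Pi.single_apply]
    by_cases hpt : p = t <;> simp [hpt, Matrix.one_apply]
  apply Matrix.ext
  intro p t
  exact_mod_cast hcast p t

private lemma exists_basis_cols {k n : ℕ} (W : Matrix (Fin k) (Fin n) ℤ)
    (hrank : (W.map (Int.cast : ℤ → ℚ)).rank = k) :
    ∃ g : Fin k → Fin n, Function.Injective g ∧ (W.submatrix id g).det ≠ 0 := by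
  classical
  set Wq : Matrix (Fin k) (Fin n) ℚ := W.map (Int.cast : ℤ → ℚ) with hWq
  have hspan : Submodule.span ℚ (Set.range Wqᵀ) = ⊤ := by
    have h1 := Wq.rank_eq_finrank_span_cols
    rw [hrank] at h1
    apply Submodule.eq_top_of_finrank_eq
    rw [Module.finrank_fin_fun]; exact h1.symm
  obtain ⟨s, hs_sub, hs_span, hs_li⟩ := exists_linearIndependent ℚ (Set.range Wqᵀ)
  rw [hspan] at hs_span
  let bas : Module.Basis s ℚ (Fin k → ℚ) := Module.Basis.mk hs_li (by rw [Subtype.range_coe, hs_span])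
  haveI : Fintype s := FiniteDimensional.fintypeBasisIndex bas
  have hcard : Fintype.card s = k := by
    have h2 := Module.finrank_eq_card_basis bas
    rw [Module.finrank_fin_fun] at h2
    exact h2.symm
  let e : Fin k ≃ s := (Fintype.equivFinOfCardEq hcard).symm
  have hc : ∀ β : s, ∃ j : Fin n, Wqᵀ j = (β : Fin k → ℚ) := fun β => hs_sub β.2
  choose c hcspec using hc
  refine ⟨fun j => c (e j), ?_, ?_⟩
  · intro a b hab
    have h1 : Wqᵀ (c (e a)) = Wqᵀ (c (e b)) := congrArg Wqᵀ hab
    rw [hcspec (e a), hcspec (e b)] at h1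
    have h2 : e a = e b := Subtype.ext h1
    exact e.injective h2
  · -- determinant nonzero over ℤ via ℚ
    set g : Fin k → Fin n := fun j => c (e j) with hg
    have hdetq : ((W.submatrix id g).map (Int.cast : ℤ → ℚ)).det ≠ 0 := by
      have hsub : (W.submatrix id g).map (Int.cast : ℤ → ℚ) = Wq.submatrix id g := by
        rw [hWq, Matrix.submatrix_map]
      rw [hsub]
      intro hdet0
      obtain ⟨v, hv0, hvz⟩ := (Matrix.exists_mulVec_eq_zero_iff).2 hdet0
      -- columns are independent
      have hli : LinearIndependent ℚ (fun j : Fin k => (Wqᵀ (g j) : Fin k → ℚ)) := by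
        have h3 : (fun j : Fin k => (Wqᵀ (g j))) = (fun β : s => (β : Fin k → ℚ)) ∘ e := by
          funext j
          simp [hg, hcspec (e j), Function.comp]
        rw [h3]
        exact hs_li.comp e e.injective
      have h4 : ∑ j, v j • Wqᵀ (g j) = 0 := by
        funext i
        have h5 := congrFun hvz i
        simp only [Matrix.mulVec, dotProduct, Matrix.submatrix_apply, id,
          Pi.zero_apply] at h5
        simp only [Finset.sum_apply, Pi.smul_apply, Pi.zero_apply, smul_eq_mul]
        have h7 : ∑ j, v j * Wqᵀ (g j) i = ∑ j, Wq i (g j) * v j :=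
          Finset.sum_congr rfl fun j _ => by rw [Matrix.transpose_apply]; ring
        rw [h7]
        exact h5
      have h6 := Fintype.linearIndependent_iff.1 hli v h4
      exact hv0 (funext h6)
    intro hdet0
    apply hdetq
    have h8 := (Int.castRingHom ℚ).map_det (W.submatrix id g)
    rw [hdet0] at h8
    simpa using h8.symm

/-- **Converse direction: integrality of all fibers yields an affine TU decomposition.**
If `W` has rank `k` and `{x ≥ 0 : A x ≤ b, W x = d}` is integral for all integral `b, d`,
then there are `U ∈ ℤ^{m×k}` and `W' ∈ {0,±1}^{k×n}` such that `A = (A - U W') + U W'`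
is an affine TU decomposition, and moreover for every integral `b`,
`conv {x ≥ 0 : A x ≤ b, W x ∈ ℤᵏ} = conv {x ≥ 0 : A x ≤ b, W' x ∈ ℤᵏ}`. -/
theorem integral_fibers_implies_affine_TU_decomposition
    {m n k : ℕ} (A : Matrix (Fin m) (Fin n) ℤ) (W : Matrix (Fin k) (Fin n) ℤ)
    (hrank : (W.map (Int.cast : ℤ → ℚ)).rank = k)
    (hint : ∀ (b : Fin m → ℤ) (d : Fin k → ℤ),
      {x : Fin n → ℝ |
          (∀ i, (A.map (Int.cast : ℤ → ℝ)).mulVec x i ≤ (b i : ℝ)) ∧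
          (∀ j, (W.map (Int.cast : ℤ → ℝ)).mulVec x j = (d j : ℝ)) ∧
          (∀ i, 0 ≤ x i)}
        = convexHull ℝ {x : Fin n → ℝ |
          ((∀ i, (A.map (Int.cast : ℤ → ℝ)).mulVec x i ≤ (b i : ℝ)) ∧
          (∀ j, (W.map (Int.cast : ℤ → ℝ)).mulVec x j = (d j : ℝ)) ∧
          (∀ i, 0 ≤ x i)) ∧ IsIntegerPoint x}) :
    ∃ (U : Matrix (Fin m) (Fin k) ℤ) (W' : Matrix (Fin k) (Fin n) ℤ),
      (∀ i j, W' i j ∈ ({-1, 0, 1} : Set ℤ)) ∧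
      (Matrix.fromRows (A - U * W') W').IsTotallyUnimodular ∧
      ∀ b : Fin m → ℤ,
        convexHull ℝ {x : Fin n → ℝ |
            (∀ i, (A.map (Int.cast : ℤ → ℝ)).mulVec x i ≤ (b i : ℝ)) ∧
            (∀ j, ∃ z : ℤ, (W.map (Int.cast : ℤ → ℝ)).mulVec x j = (z : ℝ)) ∧
            (∀ i, 0 ≤ x i)}
          = convexHull ℝ {x : Fin n → ℝ |
            (∀ i, (A.map (Int.cast : ℤ → ℝ)).mulVec x i ≤ (b i : ℝ)) ∧
            (∀ j, ∃ z : ℤ, (W'.map (Int.cast : ℤ → ℝ)).mulVec x j = (z : ℝ)) ∧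
            (∀ i, 0 ≤ x i)} := by
  classical
  obtain ⟨g, hg, hgdet⟩ := exists_basis_cols W hrank
  set B : Matrix (Fin k) (Fin k) ℤ := W.submatrix id g with hB
  -- `det B = ±1`
  have hBrange := core A W hint (Fin k) Sum.inr Sum.inr_injective
    (fun j => ⟨j, rfl⟩) g hg
  have hCB : (Matrix.fromRows A W).submatrix Sum.inr g = B := by
    ext j j'
    simp [hB, Matrix.submatrix_apply, Matrix.fromRows_apply_inr]
  rw [hCB] at hBrange
  have hε : B.det = 1 ∨ B.det = -1 := by
    rcases hBrange with h0 | h1 | h1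
    · exact absurd h0 hgdet
    · exact Or.inl h1
    · exact Or.inr h1
  set ε : ℤ := B.det with hεdef
  have hεε : ε * ε = 1 := by
    rcases hε with h0 | h0 <;> rw [h0] <;> norm_num
  set W' : Matrix (Fin k) (Fin n) ℤ := ε • (B.adjugate * W) with hW'
  set U : Matrix (Fin m) (Fin k) ℤ := A.submatrix id g with hU
  -- key identity : B * W' = W
  have hBW' : B * W' = W := by
    rw [hW', Matrix.mul_smul, ← Matrix.mul_assoc, Matrix.mul_adjugate, ← hεdef,
      Matrix.smul_mul, Matrix.one_mul, smul_smul, hεε, one_smul]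
  -- `W'` has identity columns on `g`
  have hW'col : ∀ i j0, W' i (g j0) = if i = j0 then 1 else 0 := by
    intro i j0
    have h1 : (B.adjugate * W) i (g j0) = (B.adjugate * B) i j0 := by
      rw [Matrix.mul_apply, Matrix.mul_apply]
      exact Finset.sum_congr rfl fun l _ => by rw [hB]; rfl
    have h2 : W' i (g j0) = ε * ((B.adjugate * W) i (g j0)) := by
      rw [hW', Matrix.smul_apply, smul_eq_mul]
    rw [h2, h1, Matrix.adjugate_mul, ← hεdef, Matrix.smul_apply, Matrix.one_apply, smul_eq_mul,
      ← mul_assoc, hεε, one_mul]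
  -- `U * W'` agrees with `A` on the columns of `g`
  have hUW'col : ∀ i j0, (U * W') i (g j0) = A i (g j0) := by
    intro i j0
    rw [Matrix.mul_apply]
    rw [Finset.sum_congr rfl (fun l _ => by rw [hW'col l j0])]
    simp [hU, Matrix.submatrix_apply]
  refine ⟨U, W', ?_, ?_, ?_⟩
  · -- entries of W' are 0, ±1
    intro i j
    simp only [Set.mem_insert_iff, Set.mem_singleton_iff]
    by_cases hcase : ∃ i', g i' = j
    · obtain ⟨i', rfl⟩ := hcase
      rw [hW'col]
      by_cases hii : i = i' <;> simp [hii]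
    · have hinj : Function.Injective (Function.update g i j) := by
        intro a b hab
        by_cases ha : a = i <;> by_cases hb : b = i
        · rw [ha, hb]
        · rw [ha, Function.update_self, Function.update_of_ne hb] at hab
          exact absurd ⟨b, hab.symm⟩ hcase
        · rw [hb, Function.update_self, Function.update_of_ne ha] at hab
          exact absurd ⟨a, hab⟩ hcase
        · rw [Function.update_of_ne ha, Function.update_of_ne hb] at hab
          exact hg hab
      have hcore := core A W hint (Fin k) Sum.inr Sum.inr_injective
        (fun j0 => ⟨j0, rfl⟩) (Function.update g i j) hinj
      have hsub : (Matrix.fromRows A W).submatrix Sum.inr (Function.update g i j)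
          = B.updateCol i (fun l => W l j) := by
        ext l i'
        by_cases hii : i' = i
        · simp [hii, Matrix.updateCol_apply, Matrix.submatrix_apply,
            Matrix.fromRows_apply_inr, Function.update_self]
        · simp [hii, Matrix.updateCol_apply, Matrix.submatrix_apply,
            Matrix.fromRows_apply_inr, Function.update_of_ne hii, hB]
      rw [hsub] at hcore
      have hcram : (B.adjugate * W) i j = (B.updateCol i (fun l => W l j)).det := by
        have h1 : (B.adjugate * W) i j = (B.adjugate *ᵥ (fun l => W l j)) i := by
          simp [Matrix.mul_apply, Matrix.mulVec, dotProduct]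
        rw [h1, ← Matrix.cramer_eq_adjugate_mulVec, Matrix.cramer_apply]
      have hval : W' i j = ε * (B.updateCol i (fun l => W l j)).det := by
        rw [hW', Matrix.smul_apply, smul_eq_mul, hcram]
      rcases hcore with h0 | h0 | h0 <;> rcases hε with h1 | h1 <;>
        rw [hval, h0, h1] <;> norm_num
  · -- total unimodularity
    intro r f h2 hf hh2
    by_cases hzc : ∃ q j0, h2 q = g j0 ∧ Sum.inr j0 ∉ Set.range f
    · obtain ⟨q, j0, hq, hj0⟩ := hzc
      refine ⟨0, ?_⟩
      have hdet0 : ((Matrix.fromRows (A - U * W') W').submatrix f h2).det = 0 := by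
        apply Matrix.det_eq_zero_of_column_eq_zero q
        intro p
        rw [Matrix.submatrix_apply, hq]
        cases hfp : f p with
        | inl i => rw [Matrix.fromRows_apply_inl, Matrix.sub_apply, hUW'col, sub_self]
        | inr j =>
          rw [Matrix.fromRows_apply_inr, hW'col]
          have hne : j ≠ j0 := fun hjj => hj0 ⟨p, by rw [hfp, hjj]⟩
          simp [hne]
      rw [hdet0]
      simp
    · push_neg at hzc
      -- the L-matrix and its inverse
      set L : Matrix (Fin m ⊕ Fin k) (Fin m ⊕ Fin k) ℤ :=
        Matrix.fromBlocks 1 (-(ε • (U * B.adjugate))) 0 (ε • B.adjugate) with hL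
      set Linv : Matrix (Fin m ⊕ Fin k) (Fin m ⊕ Fin k) ℤ :=
        Matrix.fromBlocks 1 U 0 B with hLinv
      have hbr : (ε • B.adjugate) * B = 1 := by
        rw [Matrix.smul_mul, Matrix.adjugate_mul, ← hεdef, smul_smul, hεε, one_smul]
      have htr : (-(ε • (U * B.adjugate))) * B = -U := by
        rw [Matrix.neg_mul, Matrix.smul_mul, Matrix.mul_assoc, Matrix.adjugate_mul, ← hεdef,
          Matrix.mul_smul, Matrix.mul_one, smul_smul, hεε, one_smul]
      have hLLinv : L * Linv = 1 := by
        rw [hL, hLinv, Matrix.fromBlocks_multiply]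
        rw [htr, hbr, ← Matrix.fromBlocks_one]
        simp
      -- factorization of the stacked matrix
      have hMfact : Matrix.fromRows (A - U * W') W' = L * Matrix.fromRows A W := by
        ext p c
        cases p with
        | inl i =>
          rw [Matrix.fromRows_apply_inl, Matrix.mul_apply, Fintype.sum_sum_type]
          simp only [hL, Matrix.fromBlocks_apply₁₁, Matrix.fromBlocks_apply₁₂,
            Matrix.fromRows_apply_inl, Matrix.fromRows_apply_inr, Matrix.sub_apply]
          have h1 : ∑ i', (1 : Matrix (Fin m) (Fin m) ℤ) i i' * A i' c = A i c := by
            simp [Matrix.one_apply, ite_mul]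
          have h3 : (U * W') i c = ε * ((U * B.adjugate) * W) i c := by
            rw [hW', Matrix.mul_smul, Matrix.smul_apply, smul_eq_mul, Matrix.mul_assoc]
          have h2 : ∑ j, (-(ε • (U * B.adjugate))) i j * W j c = -((U * W') i c) := by
            rw [h3, Matrix.mul_apply (M := U * B.adjugate) (N := W), Finset.mul_sum,
              ← Finset.sum_neg_distrib]
            refine Finset.sum_congr rfl fun j _ => ?_
            simp only [Matrix.neg_apply, Matrix.smul_apply, smul_eq_mul]
            ring
          rw [h1, h2]
          ring
        | inr j =>
          rw [Matrix.fromRows_apply_inr, Matrix.mul_apply, Fintype.sum_sum_type]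
          simp only [hL, Matrix.fromBlocks_apply₂₁, Matrix.fromBlocks_apply₂₂,
            Matrix.fromRows_apply_inl, Matrix.fromRows_apply_inr, Matrix.zero_apply, zero_mul,
            Finset.sum_const_zero, zero_add]
          have h2 : ∑ l, (ε • B.adjugate) j l * W l c = W' j c := by
            rw [hW', Matrix.smul_apply, smul_eq_mul, Matrix.mul_apply, Finset.mul_sum]
            exact Finset.sum_congr rfl fun l _ => by
              rw [Matrix.smul_apply, smul_eq_mul]; ring
          rw [h2]
      -- extended index set
      set Sm : Finset (Fin k) := Finset.univ.filter (fun j => Sum.inr j ∉ Set.range f) with hSm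
      set f' : (Fin r ⊕ {j : Fin k // j ∈ Sm}) → Fin m ⊕ Fin k :=
        Sum.elim f (fun j => Sum.inr j.1) with hf'def
      set h' : (Fin r ⊕ {j : Fin k // j ∈ Sm}) → Fin n :=
        Sum.elim h2 (fun j => g j.1) with hh'def
      have hSmem : ∀ j : {j : Fin k // j ∈ Sm}, Sum.inr j.1 ∉ Set.range f := by
        intro j
        exact (Finset.mem_filter.1 j.2).2
      have hf' : Function.Injective f' := by
        rintro (p | j) (p' | j') hpq
        · exact congrArg Sum.inl (hf hpq)
        · exact absurd ⟨p, hpq⟩ (hSmem j')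
        · exact absurd ⟨p', hpq.symm⟩ (hSmem j)
        · exact congrArg Sum.inr (Subtype.ext (Sum.inr_injective hpq))
      have hh' : Function.Injective h' := by
        rintro (p | j) (p' | j') hpq
        · exact congrArg Sum.inl (hh2 hpq)
        · exact absurd (hzc p j'.1 hpq) (hSmem j')
        · exact absurd (hzc p' j.1 hpq.symm) (hSmem j)
        · exact congrArg Sum.inr (Subtype.ext (hg hpq))
      set M' : Matrix (Fin m ⊕ Fin k) (Fin n) ℤ := Matrix.fromRows (A - U * W') W' with hM'def
      -- block structure of the extended submatrix
      have hblock : M'.submatrix f' h' =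
          Matrix.fromBlocks (M'.submatrix f h2) 0
            (M'.submatrix (fun j : {j : Fin k // j ∈ Sm} => Sum.inr j.1) h2) 1 := by
        ext pq qq
        cases pq with
        | inl p =>
          cases qq with
          | inl q => rfl
          | inr j' =>
            simp only [Matrix.submatrix_apply, hf'def, hh'def, Sum.elim_inl, Sum.elim_inr,
              Matrix.fromBlocks_apply₁₂, Matrix.zero_apply]
            cases hfp : f p with
            | inl i => rw [hM'def, Matrix.fromRows_apply_inl, Matrix.sub_apply, hUW'col, sub_self]
            | inr jj =>
              rw [hM'def, Matrix.fromRows_apply_inr, hW'col]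
              have hne : jj ≠ j'.1 := fun hjj => (hSmem j') ⟨p, by rw [hfp, hjj]⟩
              simp [hne]
        | inr j =>
          cases qq with
          | inl q => rfl
          | inr j' =>
            simp only [Matrix.submatrix_apply, hf'def, hh'def, Sum.elim_inr,
              Matrix.fromBlocks_apply₂₂]
            rw [hM'def, Matrix.fromRows_apply_inr, hW'col, Matrix.one_apply]
            by_cases hjj : j = j'
            · simp [hjj]
            · have hne : j.1 ≠ j'.1 := fun hc => hjj (Subtype.ext hc)
              simp [hne, hjj]
      have hdetb : (M'.submatrix f h2).det = (M'.submatrix f' h').det := by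
        rw [hblock, Matrix.det_fromBlocks_zero₁₂, Matrix.det_one, mul_one]
      have hcover : ∀ j : Fin k, Sum.inr j ∈ Set.range f' := by
        intro j
        by_cases hj : Sum.inr j ∈ Set.range f
        · obtain ⟨p, hp⟩ := hj
          exact ⟨Sum.inl p, hp⟩
        · exact ⟨Sum.inr ⟨j, by rw [hSm, Finset.mem_filter]; exact ⟨Finset.mem_univ j, hj⟩⟩, rfl⟩
      have hsum_range : ∀ (K : Matrix (Fin m ⊕ Fin k) (Fin m ⊕ Fin k) ℤ)
          (F : (Fin m ⊕ Fin k) → ℤ) (p : Fin r ⊕ {j : Fin k // j ∈ Sm}),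
          (∀ rr, rr ∉ Set.range f' → K (f' p) rr = 0) →
          ∑ rr, K (f' p) rr * F rr = ∑ q, K (f' p) (f' q) * F (f' q) := by
        intro K F p hvan
        have h1 : ∑ q, K (f' p) (f' q) * F (f' q)
            = ∑ rr ∈ Finset.univ.image f', K (f' p) rr * F rr :=
          (Finset.sum_image (f := fun rr => K (f' p) rr * F rr) (g := f')
            (fun a _ c _ hac => hf' hac)).symm
        rw [h1]
        refine (Finset.sum_subset (Finset.subset_univ _) ?_).symm
        intro rr _ hrr
        have hnr : rr ∉ Set.range f' := by
          intro ⟨q, hq⟩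
          exact hrr (Finset.mem_image.2 ⟨q, Finset.mem_univ q, hq⟩)
        rw [hvan rr hnr, zero_mul]
      have hLoff : ∀ p rr, rr ∉ Set.range f' → L (f' p) rr = 0 := by
        intro p rr hrr
        cases rr with
        | inr j => exact absurd (hcover j) hrr
        | inl i =>
          cases hfp : f' p with
          | inr j => simp [hL]
          | inl i' =>
            have hne : i' ≠ i := fun hcon => hrr ⟨p, by rw [hfp, hcon]⟩
            simp [hL, Matrix.one_apply, hne]
      have hLinvoff : ∀ p rr, rr ∉ Set.range f' → Linv (f' p) rr = 0 := by
        intro p rr hrr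
        cases rr with
        | inr j => exact absurd (hcover j) hrr
        | inl i =>
          cases hfp : f' p with
          | inr j => simp [hLinv]
          | inl i' =>
            have hne : i' ≠ i := fun hcon => hrr ⟨p, by rw [hfp, hcon]⟩
            simp [hLinv, Matrix.one_apply, hne]
      set Lmix : Matrix (Fin r ⊕ {j : Fin k // j ∈ Sm}) (Fin r ⊕ {j : Fin k // j ∈ Sm}) ℤ :=
        Matrix.of (fun p q => L (f' p) (f' q)) with hLmix
      set Linvmix : Matrix (Fin r ⊕ {j : Fin k // j ∈ Sm}) (Fin r ⊕ {j : Fin k // j ∈ Sm}) ℤ :=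
        Matrix.of (fun p q => Linv (f' p) (f' q)) with hLinvmix
      have hfact : M'.submatrix f' h' = Lmix * ((Matrix.fromRows A W).submatrix f' h') := by
        ext p q
        have hc1 : M'.submatrix f' h' p q = (L * Matrix.fromRows A W) (f' p) (h' q) := by
          rw [Matrix.submatrix_apply, hMfact]
        rw [hc1, Matrix.mul_apply,
          hsum_range L (fun rr => (Matrix.fromRows A W) rr (h' q)) p (hLoff p),
          Matrix.mul_apply]
        rfl
      have hunit : Lmix * Linvmix = 1 := by
        ext p q
        rw [Matrix.mul_apply]
        have h1 := (hsum_range L (fun rr => Linv rr (f' q)) p (hLoff p)).symm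
        have h2 : ∑ q', Lmix p q' * Linvmix q' q = ∑ rr, L (f' p) rr * Linv rr (f' q) := by
          rw [← h1]
          rfl
        rw [h2, ← Matrix.mul_apply, hLLinv, Matrix.one_apply, Matrix.one_apply]
        by_cases hpq : p = q
        · simp [hpq]
        · have hne : f' p ≠ f' q := fun hc => hpq (hf' hc)
          simp [hpq, hne]
      have hdetL : Lmix.det = 1 ∨ Lmix.det = -1 := by
        have h2 : Lmix.det * Linvmix.det = 1 := by
          rw [← Matrix.det_mul, hunit, Matrix.det_one]
        rcases Int.eq_one_or_neg_one_of_mul_eq_one' h2 with ⟨h3, _⟩ | ⟨h3, _⟩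
        · exact Or.inl h3
        · exact Or.inr h3
      have hCdet := core A W hint _ f' hf' hcover h' hh'
      have hfinal : (M'.submatrix f h2).det
          = Lmix.det * ((Matrix.fromRows A W).submatrix f' h').det := by
        rw [hdetb, hfact, Matrix.det_mul]
      apply signrange_of
      rcases hCdet with h0 | h0 | h0 <;> rcases hdetL with h1 | h1 <;>
        rw [hfinal, h0, h1] <;> norm_num
  · -- equality of mixed hulls
    intro b
    set Sw : Set (Fin n → ℝ) := {x : Fin n → ℝ |
        (∀ i, (A.map (Int.cast : ℤ → ℝ)).mulVec x i ≤ (b i : ℝ)) ∧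
        (∀ j, ∃ z : ℤ, (W.map (Int.cast : ℤ → ℝ)).mulVec x j = (z : ℝ)) ∧
        (∀ i, 0 ≤ x i)} with hSw
    set Sw' : Set (Fin n → ℝ) := {x : Fin n → ℝ |
        (∀ i, (A.map (Int.cast : ℤ → ℝ)).mulVec x i ≤ (b i : ℝ)) ∧
        (∀ j, ∃ z : ℤ, (W'.map (Int.cast : ℤ → ℝ)).mulVec x j = (z : ℝ)) ∧
        (∀ i, 0 ≤ x i)} with hSw'
    have hS'S : Sw' ⊆ Sw := by
      rintro x ⟨hxA, hxW', hxpos⟩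
      refine ⟨hxA, ?_, hxpos⟩
      intro j
      choose zz hzz using hxW'
      refine ⟨∑ l, B j l * zz l, ?_⟩
      have hfac : (W.map (Int.cast : ℤ → ℝ)) = (B.map (Int.cast : ℤ → ℝ)) * (W'.map (Int.cast : ℤ → ℝ)) := by
        ext j' c
        rw [Matrix.mul_apply]
        simp only [Matrix.map_apply]
        have h0 : W j' c = (B * W') j' c := by rw [hBW']
        rw [h0, Matrix.mul_apply]
        push_cast
        rfl
      rw [hfac, ← Matrix.mulVec_mulVec]
      have h1 : ((B.map (Int.cast : ℤ → ℝ)) *ᵥ ((W'.map (Int.cast : ℤ → ℝ)) *ᵥ x)) j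
          = ∑ l, ((B j l : ℤ) : ℝ) * ((zz l : ℤ) : ℝ) := by
        simp only [Matrix.mulVec, dotProduct, Matrix.map_apply]
        refine Finset.sum_congr rfl fun l _ => ?_
        have h2 := hzz l
        simp only [Matrix.mulVec, dotProduct, Matrix.map_apply] at h2
        rw [h2]
      rw [h1]
      push_cast
      rfl
    have hsub1 : convexHull ℝ Sw' ⊆ convexHull ℝ Sw := convexHull_mono hS'S
    have hsub2 : Sw ⊆ convexHull ℝ Sw' := by
      rintro x ⟨hxA, hxW, hxpos⟩
      choose dz hdz using hxW
      have hxmem : x ∈ {x : Fin n → ℝ |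
          (∀ i, (A.map (Int.cast : ℤ → ℝ)).mulVec x i ≤ (b i : ℝ)) ∧
          (∀ j, (W.map (Int.cast : ℤ → ℝ)).mulVec x j = (dz j : ℝ)) ∧
          (∀ i, 0 ≤ x i)} := ⟨hxA, hdz, hxpos⟩
      rw [hint b dz] at hxmem
      refine convexHull_mono ?_ hxmem
      rintro u ⟨⟨hu1, _, hu3⟩, hu4⟩
      refine ⟨hu1, ?_, hu3⟩
      intro j
      choose zz hzz using hu4
      refine ⟨∑ c, W' j c * zz c, ?_⟩
      have h1 : ((W'.map (Int.cast : ℤ → ℝ)) *ᵥ u) j = ∑ c, ((W' j c : ℤ) : ℝ) * ((zz c : ℤ) : ℝ) := by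
        simp only [Matrix.mulVec, dotProduct, Matrix.map_apply]
        exact Finset.sum_congr rfl fun c _ => by rw [hzz c]
      rw [h1]
      push_cast
      rfl
    exact Set.Subset.antisymm (convexHull_min hsub2 (convex_convexHull ℝ Sw')) hsub1
end

section
/- Let ℓ ≥ 1 be an integer and n = ℓ². Then the 1×n row vector a^T = [1, 2, …, n] admits an affine TU decomposition with at most 2ℓ − 2 rows; that is, there exist ã ∈ {0,±1}^n, u ∈ ℤ^{2ℓ−2}, and a matrix W ∈ {0,1}^{(2ℓ−2)×n} such that a^T = ã^T + u^T W and the matrix obtained by stacking ã^T on top of W is totally unimodular. In particular the affine TU-dimension of a^T is at most 2ℓ − 2. -/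
open Matrix Set

private lemma signRange_zero : (0 : ℤ) ∈ Set.range (SignType.cast : SignType → ℤ) :=
  ⟨0, by simp⟩

private lemma signRange_mul {x y : ℤ} (hx : x ∈ Set.range (SignType.cast : SignType → ℤ))
    (hy : y ∈ Set.range (SignType.cast : SignType → ℤ)) :
    x * y ∈ Set.range (SignType.cast : SignType → ℤ) := by
  obtain ⟨s, rfl⟩ := hx
  obtain ⟨t, rfl⟩ := hy
  exact ⟨s * t, by simp⟩

private lemma signRange_negpow (e : ℕ) :
    ((-1 : ℤ) ^ e) ∈ Set.range (SignType.cast : SignType → ℤ) := by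
  rcases neg_one_pow_eq_or ℤ e with h | h <;> rw [h]
  · exact ⟨1, by simp⟩
  · exact ⟨-1, by simp⟩

/-- Determinant of a matrix each of whose columns has at most one `+1` and at most one `-1`
(and zeros elsewhere) is `0`, `1`, or `-1`. -/
private lemma det_incidence (k : ℕ) : ∀ D : Matrix (Fin k) (Fin k) ℤ,
    (∀ j, ∃ P N : Finset (Fin k), P.card ≤ 1 ∧ N.card ≤ 1 ∧ Disjoint P N ∧
      ∀ i, D i j = (if i ∈ P then 1 else 0) - (if i ∈ N then 1 else 0)) →
    D.det ∈ Set.range (SignType.cast : SignType → ℤ) := by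
  induction k with
  | zero =>
    intro D _
    exact ⟨1, by simp [Matrix.det_isEmpty]⟩
  | succ k ih =>
    intro D hD
    classical
    choose P N hP hN hPN hval using hD
    -- the minor hypothesis: any minor of D satisfies the same column condition
    have minorOK : ∀ (i₀ j₀ : Fin (k+1)),
        ∀ j, ∃ P' N' : Finset (Fin k), P'.card ≤ 1 ∧ N'.card ≤ 1 ∧ Disjoint P' N' ∧
          ∀ i, (D.submatrix i₀.succAbove j₀.succAbove) i j =
            (if i ∈ P' then 1 else 0) - (if i ∈ N' then 1 else 0) := by
      intro i₀ j₀ j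
      refine ⟨Finset.univ.filter (fun i => i₀.succAbove i ∈ P (j₀.succAbove j)),
              Finset.univ.filter (fun i => i₀.succAbove i ∈ N (j₀.succAbove j)), ?_, ?_, ?_, ?_⟩
      · calc _ ≤ (P (j₀.succAbove j)).card := by
              apply Finset.card_le_card_of_injOn (fun i => i₀.succAbove i)
              · intro i hi; simpa using hi
              · exact fun a _ b _ h => Fin.succAbove_right_injective h
            _ ≤ 1 := hP _
      · calc _ ≤ (N (j₀.succAbove j)).card := by
              apply Finset.card_le_card_of_injOn (fun i => i₀.succAbove i)
              · intro i hi; simpa using hi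
              · exact fun a _ b _ h => Fin.succAbove_right_injective h
            _ ≤ 1 := hN _
      · rw [Finset.disjoint_left]
        intro i hiP hiN
        simp only [Finset.mem_filter] at hiP hiN
        exact (Finset.disjoint_left.mp (hPN _)) hiP.2 hiN.2
      · intro i
        simp only [Matrix.submatrix_apply, Finset.mem_filter, Finset.mem_univ, true_and]
        exact hval (j₀.succAbove j) (i₀.succAbove i)
    by_cases hcase : ∃ j, P j = ∅ ∨ N j = ∅
    · -- some column has at most one nonzero entry
      obtain ⟨j, hj⟩ := hcase
      -- describe the column as ε • indicator of a set S with card ≤ 1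
      obtain ⟨S, hS, hcol⟩ : ∃ S : Finset (Fin (k+1)), S.card ≤ 1 ∧
          ∀ i, i ∉ S → D i j = 0 := by
        rcases hj with hj | hj
        · exact ⟨N j, hN j, fun i hi => by simp [hval j i, hj, hi]⟩
        · exact ⟨P j, hP j, fun i hi => by simp [hval j i, hj, hi]⟩
      rcases Finset.card_le_one_iff_subset_singleton.mp hS with ⟨i₀, hsub⟩
      have hzero : ∀ i, i ≠ i₀ → D i j = 0 := by
        intro i hi
        exact hcol i (fun hmem => hi (by simpa using hsub hmem))
      rw [Matrix.det_succ_column D j, Fintype.sum_eq_single i₀ (by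
        intro i hi
        rw [hzero i hi]; ring)]
      refine signRange_mul (signRange_mul (signRange_negpow _) ?_) (ih _ (minorOK i₀ j))
      · have := hval j i₀
        split_ifs at this <;>
          [exact absurd (Finset.disjoint_left.mp (hPN j) ‹_›) (by simp_all);
           (rw [this]; exact ⟨1, by simp⟩); (rw [this]; exact ⟨-1, by simp⟩);
           (rw [this]; exact signRange_zero)]
    · -- every column has exactly one +1 and one -1; hence rows sum to zero
      push_neg at hcase
      have hsumcol : ∀ j, ∑ i, D i j = 0 := by
        intro j
        have h1 : (P j).card = 1 := le_antisymm (hP j) (Finset.card_pos.mpr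
          (hcase j).1)
        have h2 : (N j).card = 1 := le_antisymm (hN j) (Finset.card_pos.mpr
          (hcase j).2)
        have : ∑ i, D i j =
            (∑ i, (if i ∈ P j then (1:ℤ) else 0)) - ∑ i, (if i ∈ N j then (1:ℤ) else 0) := by
          rw [← Finset.sum_sub_distrib]
          exact Finset.sum_congr rfl fun i _ => hval j i
        rw [this, Finset.sum_ite_mem, Finset.sum_ite_mem, Finset.univ_inter,
          Finset.univ_inter, Finset.sum_const, Finset.sum_const, h1, h2]
        simp
      have h1D : (fun _ : Fin (k+1) => (1:ℤ)) ᵥ* D = 0 := by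
        funext j
        simpa [Matrix.vecMul, dotProduct] using hsumcol j
      have hdet : D.det = 0 := by
        have := congrArg (fun w => w ᵥ* D.adjugate) h1D
        simp only [Matrix.vecMul_vecMul, Matrix.mul_adjugate, Matrix.zero_vecMul] at this
        have := congrFun this 0
        simpa [Matrix.vecMul, dotProduct, Matrix.one_apply, Finset.sum_ite_eq'] using this
      rw [hdet]
      exact signRange_zero

/-- Determinant of a 0/1 matrix with "interval" columns w.r.t. a monotone row labelling. -/
private lemma det_interval (k : ℕ) (v : Fin k → ℤ) (hv : Monotone v) (l u : Fin k → ℤ) :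
    (Matrix.of fun i j : Fin k => if l j ≤ v i ∧ v i ≤ u j then (1:ℤ) else 0).det
      ∈ Set.range (SignType.cast : SignType → ℤ) := by
  classical
  set M : Matrix (Fin k) (Fin k) ℤ :=
    Matrix.of fun i j : Fin k => if l j ≤ v i ∧ v i ≤ u j then (1:ℤ) else 0 with hM
  set T : Matrix (Fin k) (Fin k) ℤ :=
    Matrix.of fun i i' : Fin k =>
      (if i' = i then (1:ℤ) else 0) - (if (i' : ℕ) = (i : ℕ) + 1 then 1 else 0) with hT
  have hTdet : T.det = 1 := by
    rw [Matrix.det_of_upperTriangular (M := T) ?_]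
    · simp only [hT, Matrix.of_apply]
      rw [Finset.prod_congr rfl (fun i _ => ?_), Finset.prod_const_one]
      simp
    · intro i i' hlt
      have hlt' : (i' : ℕ) < (i : ℕ) := hlt
      simp only [hT, Matrix.of_apply]
      have h1 : i' ≠ i := by omega
      have h2 : (i' : ℕ) ≠ (i : ℕ) + 1 := by omega
      simp [h1, h2]
  have hdet : (T * M).det = M.det := by rw [Matrix.det_mul, hTdet, one_mul]
  rw [← hdet]
  apply det_incidence
  intro j
  -- entries of T * M
  have hentry : ∀ i : Fin k, (T * M) i j =
      M i j - (if h : (i : ℕ) + 1 < k then M ⟨(i : ℕ) + 1, h⟩ j else 0) := by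
    intro i
    rw [Matrix.mul_apply]
    have : ∀ i' : Fin k, T i i' * M i' j =
        (if i' = i then M i' j else 0) - (if (i' : ℕ) = (i : ℕ) + 1 then M i' j else 0) := by
      intro i'
      simp only [hT, Matrix.of_apply]
      split_ifs <;> ring
    rw [Finset.sum_congr rfl fun i' _ => this i', Finset.sum_sub_distrib]
    congr 1
    · rw [Finset.sum_ite_eq' Finset.univ i (fun i' => M i' j)]
      simp
    · by_cases h : (i : ℕ) + 1 < k
      · rw [dif_pos h, Fintype.sum_eq_single ⟨(i:ℕ)+1, h⟩ ?_]
        · simp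
        · intro x hx
          have : (x : ℕ) ≠ (i : ℕ) + 1 := fun hc => hx (by ext; exact hc)
          simp [this]
      · rw [dif_neg h]
        apply Finset.sum_eq_zero
        intro x _
        have : (x : ℕ) ≠ (i : ℕ) + 1 := by omega
        simp [this]
  refine ⟨Finset.univ.filter (fun i => (l j ≤ v i ∧ v i ≤ u j) ∧
            ¬ ∃ h : (i : ℕ) + 1 < k, l j ≤ v ⟨(i:ℕ)+1, h⟩ ∧ v ⟨(i:ℕ)+1, h⟩ ≤ u j),
          Finset.univ.filter (fun i => ¬ (l j ≤ v i ∧ v i ≤ u j) ∧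
            ∃ h : (i : ℕ) + 1 < k, l j ≤ v ⟨(i:ℕ)+1, h⟩ ∧ v ⟨(i:ℕ)+1, h⟩ ≤ u j), ?_, ?_, ?_, ?_⟩
  · -- at most one "right endpoint"
    have key : ∀ a b : Fin k, a < b →
        ((l j ≤ v a ∧ v a ≤ u j) ∧
          ¬ ∃ h : (a : ℕ) + 1 < k, l j ≤ v ⟨(a:ℕ)+1, h⟩ ∧ v ⟨(a:ℕ)+1, h⟩ ≤ u j) →
        ((l j ≤ v b ∧ v b ≤ u j) ∧
          ¬ ∃ h : (b : ℕ) + 1 < k, l j ≤ v ⟨(b:ℕ)+1, h⟩ ∧ v ⟨(b:ℕ)+1, h⟩ ≤ u j) → False := by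
      intro a b hab ha hb
      have hab' : (a : ℕ) < (b : ℕ) := hab
      have hk : (a : ℕ) + 1 < k := by have := b.isLt; omega
      refine ha.2 ⟨hk, le_trans ha.1.1 (hv (show a ≤ ⟨(a:ℕ)+1, hk⟩ by
        simp [Fin.le_def])), le_trans (hv (show (⟨(a:ℕ)+1, hk⟩ : Fin k) ≤ b by
        simp [Fin.le_def]; omega)) hb.1.2⟩
    rw [Finset.card_le_one]
    intro a ha b hb
    simp only [Finset.mem_filter, Finset.mem_univ, true_and] at ha hb
    by_contra hne
    rcases lt_or_gt_of_ne hne with h | h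
    · exact key a b h ha hb
    · exact key b a h hb ha
  · -- at most one "pre-left endpoint"
    have key : ∀ a b : Fin k, a < b →
        (¬ (l j ≤ v a ∧ v a ≤ u j) ∧
          ∃ h : (a : ℕ) + 1 < k, l j ≤ v ⟨(a:ℕ)+1, h⟩ ∧ v ⟨(a:ℕ)+1, h⟩ ≤ u j) →
        (¬ (l j ≤ v b ∧ v b ≤ u j) ∧
          ∃ h : (b : ℕ) + 1 < k, l j ≤ v ⟨(b:ℕ)+1, h⟩ ∧ v ⟨(b:ℕ)+1, h⟩ ≤ u j) → False := by
      intro a b hab ha hb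
      have hab' : (a : ℕ) < (b : ℕ) := hab
      obtain ⟨hka, ha1, ha2⟩ := ha.2
      obtain ⟨hkb, hb1, hb2⟩ := hb.2
      refine hb.1 ⟨le_trans ha1 (hv (show (⟨(a:ℕ)+1, hka⟩ : Fin k) ≤ b by
        simp [Fin.le_def]; omega)), le_trans (hv (show b ≤ ⟨(b:ℕ)+1, hkb⟩ by
        simp [Fin.le_def])) hb2⟩
    rw [Finset.card_le_one]
    intro a ha b hb
    simp only [Finset.mem_filter, Finset.mem_univ, true_and] at ha hb
    by_contra hne
    rcases lt_or_gt_of_ne hne with h | h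
    · exact key a b h ha hb
    · exact key b a h hb ha
  · rw [Finset.disjoint_left]
    intro a ha hb
    simp only [Finset.mem_filter, Finset.mem_univ, true_and] at ha hb
    exact hb.1 ha.1
  · intro i
    rw [hentry i]
    simp only [hM, Matrix.of_apply, Finset.mem_filter, Finset.mem_univ, true_and]
    by_cases h : (i : ℕ) + 1 < k
    · rw [dif_pos h]
      by_cases h1 : l j ≤ v i ∧ v i ≤ u j <;>
        by_cases h2 : l j ≤ v ⟨(i:ℕ)+1, h⟩ ∧ v ⟨(i:ℕ)+1, h⟩ ≤ u j <;>
        simp [h1, h2, h]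
    · rw [dif_neg h]
      have hne : ¬ ∃ hh : (i : ℕ) + 1 < k, l j ≤ v ⟨(i:ℕ)+1, hh⟩ ∧ v ⟨(i:ℕ)+1, hh⟩ ≤ u j :=
        fun ⟨hh, _⟩ => h hh
      by_cases h1 : l j ≤ v i ∧ v i ≤ u j <;> simp [h1, hne]

private lemma interval_TU {m n : Type*} (ρ : m → ℤ) (l u : n → ℤ) :
    (Matrix.of fun (i : m) (j : n) =>
      if l j ≤ ρ i ∧ ρ i ≤ u j then (1:ℤ) else 0).IsTotallyUnimodular := by
  rw [Matrix.isTotallyUnimodular_iff]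
  intro k f g
  set σ := Tuple.sort (ρ ∘ f) with hσ
  have hmono : Monotone (ρ ∘ f ∘ σ) := Tuple.monotone_sort (ρ ∘ f)
  have hsub : ((Matrix.of fun (i : m) (j : n) =>
      if l j ≤ ρ i ∧ ρ i ≤ u j then (1:ℤ) else 0).submatrix f g).submatrix σ id
      = Matrix.of (fun i j : Fin k =>
          if (l ∘ g) j ≤ (ρ ∘ f ∘ σ) i ∧ (ρ ∘ f ∘ σ) i ≤ (u ∘ g) j then (1:ℤ) else 0) := by
    ext i j
    rfl
  have hperm := Matrix.det_permute σ
    ((Matrix.of fun (i : m) (j : n) =>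
      if l j ≤ ρ i ∧ ρ i ≤ u j then (1:ℤ) else 0).submatrix f g)
  have hσsub : ((((Matrix.of fun (i : m) (j : n) =>
      if l j ≤ ρ i ∧ ρ i ≤ u j then (1:ℤ) else 0).submatrix f g).submatrix (⇑σ) id).det)
      ∈ Set.range (SignType.cast : SignType → ℤ) := by
    rw [hsub]
    exact det_interval k (ρ ∘ f ∘ σ) hmono (l ∘ g) (u ∘ g)
  rw [hperm] at hσsub
  rcases Int.units_eq_one_or (Equiv.Perm.sign σ) with hs | hs <;> rw [hs] at hσsub
  · simpa using hσsub
  · obtain ⟨s, hsx⟩ := hσsub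
    exact ⟨-s, by simp at hsx ⊢; linarith⟩

private lemma sum_two_blocks (ℓ q r : ℕ) (hℓ : 1 ≤ ℓ) (hq : q < ℓ) (hr : r < ℓ) :
    ∑ i ∈ Finset.range (2*ℓ-2), (if i < ℓ-1 then (if i+1 ≤ q then (ℓ:ℤ) else 0)
      else (if i+2 ≤ r+ℓ then 1 else 0)) = (q:ℤ)*ℓ + r := by
  rw [Finset.range_eq_Ico, ← Finset.sum_Ico_consecutive _ (Nat.zero_le (ℓ-1))
    (by omega : ℓ - 1 ≤ 2*ℓ-2)]
  have h1 : (∑ i ∈ Finset.Ico 0 (ℓ-1), (if i < ℓ-1 then (if i+1 ≤ q then (ℓ:ℤ) else 0)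
      else (if i+2 ≤ r+ℓ then 1 else 0))) = (q:ℤ)*ℓ := by
    rw [← Finset.range_eq_Ico]
    rw [Finset.sum_congr rfl (fun i hi => if_pos (Finset.mem_range.mp hi))]
    rw [Finset.sum_ite, Finset.sum_const, Finset.sum_const_zero, add_zero]
    have hfil : (Finset.range (ℓ-1)).filter (fun i => i + 1 ≤ q) = Finset.range q := by
      ext x; simp only [Finset.mem_filter, Finset.mem_range]; omega
    rw [hfil, Finset.card_range, nsmul_eq_mul]
  have h2 : (∑ i ∈ Finset.Ico (ℓ-1) (2*ℓ-2), (if i < ℓ-1 then (if i+1 ≤ q then (ℓ:ℤ) else 0)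
      else (if i+2 ≤ r+ℓ then 1 else 0))) = (r:ℤ) := by
    rw [Finset.sum_Ico_eq_sum_range, (by omega : 2*ℓ-2 - (ℓ-1) = ℓ-1)]
    rw [Finset.sum_congr rfl (fun t _ => if_neg (by omega : ¬(ℓ - 1 + t < ℓ - 1)))]
    rw [Finset.sum_ite, Finset.sum_const, Finset.sum_const_zero, add_zero]
    have hfil : (Finset.range (ℓ-1)).filter (fun t => ℓ - 1 + t + 2 ≤ r + ℓ) = Finset.range r := by
      ext x; simp only [Finset.mem_filter, Finset.mem_range]; omega
    rw [hfil, Finset.card_range, nsmul_eq_mul, mul_one]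
  rw [h1, h2]

/-- **Upper bound on the affine TU-dimension of the master knapsack vector.**
For `n = ℓ²`, the row vector `aᵀ = [1, 2, …, n]` admits an affine TU decomposition
`aᵀ = ãᵀ + uᵀ W` with at most `2ℓ - 2` rows (where `W` is a `0/1` matrix and the
stacking of `ãᵀ` on top of `W` is totally unimodular). -/
theorem master_knapsack_affine_TU_dimension_upper_bound
    (ℓ : ℕ) (hℓ : 1 ≤ ℓ) (n : ℕ) (hn : n = ℓ ^ 2)
    (a : Fin n → ℤ) (ha : ∀ j, a j = (j : ℕ) + 1) :
    ∃ (atilde : Fin n → ℤ) (u : Fin (2 * ℓ - 2) → ℤ)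
      (W : Matrix (Fin (2 * ℓ - 2)) (Fin n) ℤ),
      (∀ j, atilde j ∈ ({-1, 0, 1} : Set ℤ)) ∧
      (∀ i j, W i j ∈ ({0, 1} : Set ℤ)) ∧
      (∀ j, a j = atilde j + Matrix.vecMul u W j) ∧
      (Matrix.fromRows (Matrix.of fun (_ : Fin 1) j => atilde j) W).IsTotallyUnimodular := by
  classical
  set lo : Fin n → ℤ := fun j => -(((j : ℕ) / ℓ : ℕ) : ℤ) with hlo
  set hi : Fin n → ℤ := fun j => (((j : ℕ) % ℓ : ℕ) : ℤ) with hhi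
  set ρ : Fin 1 ⊕ Fin (2 * ℓ - 2) → ℤ := Sum.elim (fun _ => 0)
    (fun i => if (i : ℕ) < ℓ - 1 then -((i : ℕ) : ℤ) - 1 else ((i : ℕ) : ℤ) - ℓ + 2) with hρ
  set W : Matrix (Fin (2 * ℓ - 2)) (Fin n) ℤ :=
    Matrix.of (fun i j => if lo j ≤ ρ (Sum.inr i) ∧ ρ (Sum.inr i) ≤ hi j then (1:ℤ) else 0)
    with hW
  set u : Fin (2 * ℓ - 2) → ℤ := fun i => if (i : ℕ) < ℓ - 1 then (ℓ : ℤ) else 1 with hu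
  refine ⟨fun _ => 1, u, W, fun j => by simp, fun i j => by
    simp only [hW, Matrix.of_apply]; split_ifs; exacts [Or.inr rfl, Or.inl rfl], ?_, ?_⟩
  · -- the decomposition identity
    intro j
    obtain ⟨q, r, hq, hr, hdm, hlo', hhi'⟩ :
        ∃ q r : ℕ, q < ℓ ∧ r < ℓ ∧ ℓ * q + r = (j : ℕ) ∧ lo j = -(q : ℤ) ∧ hi j = (r : ℤ) := by
      refine ⟨(j : ℕ) / ℓ, (j : ℕ) % ℓ, ?_, Nat.mod_lt _ hℓ, Nat.div_add_mod _ _, rfl, rfl⟩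
      rw [Nat.div_lt_iff_lt_mul hℓ]
      calc (j : ℕ) < n := j.isLt
        _ = ℓ * ℓ := by rw [hn]; ring
    have hterm : ∀ i : Fin (2 * ℓ - 2), u i * W i j =
        (if (i : ℕ) < ℓ - 1 then (if (i : ℕ) + 1 ≤ q then (ℓ : ℤ) else 0)
          else (if (i : ℕ) + 2 ≤ r + ℓ then 1 else 0)) := by
      intro i
      simp only [hu, hW, hρ, Matrix.of_apply, Sum.elim_inr, hlo', hhi']
      by_cases hi1 : (i : ℕ) < ℓ - 1 <;>
        simp only [hi1, if_true, if_false, mul_ite, mul_one, mul_zero] <;>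
        split_ifs <;> first | rfl | omega
    have hsum : Matrix.vecMul u W j = (q : ℤ) * ℓ + r := by
      have h0 : Matrix.vecMul u W j = ∑ i : Fin (2 * ℓ - 2), u i * W i j := by
        simp [Matrix.vecMul, dotProduct]
      rw [h0, Finset.sum_congr rfl (fun i _ => hterm i),
        Fin.sum_univ_eq_sum_range (fun i => (if i < ℓ - 1 then (if i + 1 ≤ q then (ℓ : ℤ) else 0)
          else (if i + 2 ≤ r + ℓ then 1 else 0)))]
      exact sum_two_blocks ℓ q r hℓ hq hr
    rw [ha j, hsum]
    have hj : (((j : ℕ) : ℤ)) = (ℓ : ℤ) * q + r := by rw [← hdm]; push_cast; ring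
    rw [hj]; ring
  · -- total unimodularity
    have hEq : Matrix.fromRows (Matrix.of fun (_ : Fin 1) j => (1:ℤ)) W =
        Matrix.of (fun p j => if lo j ≤ ρ p ∧ ρ p ≤ hi j then (1:ℤ) else 0) := by
      ext p j
      cases p with
      | inl _ =>
        show (1 : ℤ) = _
        rw [Matrix.of_apply, if_pos]
        refine ⟨?_, ?_⟩
        · simp only [hρ, Sum.elim_inl, hlo]
          exact neg_nonpos.mpr (Int.natCast_nonneg _)
        · simp only [hρ, Sum.elim_inl, hhi]
          exact Int.natCast_nonneg _
      | inr i => rfl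
    rw [hEq]
    exact interval_TU ρ lo hi
end
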